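/- arXiv:1210.6336 — 11 statements merged into one kernel-verified Lean document; each statement's English description precedes it below -/
import Mathlib

section
/- Let 1 ≤ p < 2 and let X be a real-valued random variable with E|X|^p < ∞. Then the series ∑_{n=1}^∞ (1/n²) (∑_{k=1}^n E[|X| · 1{k < |X|^p ≤ n}])^p converges. -/
open MeasureTheory ProbabilityTheory

lemma stmt_2_aux {Ω : Type*} [MeasurableSpace Ω] (μ : Measure Ω) [IsProbabilityMeasure μ]
    (f : Ω → ℝ) (hfm : Measurable f) (hf0 : ∀ ω, 0 ≤ f ω) (p : ℝ) (hp1 : 1 ≤ p) (hp2 : p < 2)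
    (hfi : Integrable f μ) :
    Summable (fun n : ℕ => ((n : ℝ) ^ 2)⁻¹ *
      (∑ k ∈ Finset.Icc 1 n,
        ∫ ω in {ω | (k : ℝ) < f ω ∧ f ω ≤ (n : ℝ)}, f ω ^ p⁻¹ ∂μ) ^ p) := by
  have hp0 : (0 : ℝ) < p := lt_of_lt_of_le one_pos hp1
  have hp0' : p ≠ 0 := ne_of_gt hp0
  have hq0 : (0 : ℝ) ≤ p⁻¹ := le_of_lt (inv_pos.mpr hp0)
  have hAm : ∀ k n : ℕ, MeasurableSet {ω | (k : ℝ) < f ω ∧ f ω ≤ (n : ℝ)} :=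
    fun k n => hfm measurableSet_Ioc
  have hBm : ∀ n : ℕ, MeasurableSet {ω | 1 < f ω ∧ f ω ≤ (n : ℝ)} :=
    fun n => hfm measurableSet_Ioc
  -- integrability of bounded indicator functions
  have hind : ∀ (s : Set Ω), MeasurableSet s → ∀ (c e : ℝ), 0 ≤ c → 0 ≤ e →
      (∀ ω ∈ s, f ω ≤ c) → Integrable (s.indicator fun ω => f ω ^ e) μ := by
    intro s hs c e hc he hsc
    refine Integrable.mono' (integrable_const (c ^ e)) ?_ ?_
    · exact ((hfm.pow_const e).indicator hs).aestronglyMeasurable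
    · refine Filter.Eventually.of_forall fun ω => ?_
      rw [Real.norm_eq_abs]
      by_cases hω : ω ∈ s
      · rw [Set.indicator_of_mem hω, abs_of_nonneg (Real.rpow_nonneg (hf0 ω) e)]
        exact Real.rpow_le_rpow (hf0 ω) (hsc ω hω) he
      · rw [Set.indicator_of_notMem hω, abs_zero]
        exact Real.rpow_nonneg hc e
  -- Step A : sum of set integrals bounded by one integral
  have hSI : ∀ n : ℕ,
      (∑ k ∈ Finset.Icc 1 n, ∫ ω in {ω | (k : ℝ) < f ω ∧ f ω ≤ (n : ℝ)}, f ω ^ p⁻¹ ∂μ) ≤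
      ∫ ω, ({ω | 1 < f ω ∧ f ω ≤ (n : ℝ)}).indicator (fun ω => f ω ^ (1 + p⁻¹)) ω ∂μ := by
    intro n
    have hintk : ∀ k ∈ Finset.Icc 1 n,
        Integrable (({ω | (k : ℝ) < f ω ∧ f ω ≤ (n : ℝ)}).indicator
          (fun ω => f ω ^ p⁻¹)) μ :=
      fun k _ => hind _ (hAm k n) n p⁻¹ (Nat.cast_nonneg n) hq0 (fun ω hω => hω.2)
    calc (∑ k ∈ Finset.Icc 1 n, ∫ ω in {ω | (k : ℝ) < f ω ∧ f ω ≤ (n : ℝ)}, f ω ^ p⁻¹ ∂μ)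
        = ∑ k ∈ Finset.Icc 1 n,
            ∫ ω, ({ω | (k : ℝ) < f ω ∧ f ω ≤ (n : ℝ)}).indicator (fun ω => f ω ^ p⁻¹) ω ∂μ :=
          Finset.sum_congr rfl (fun k _ => (integral_indicator (hAm k n)).symm)
      _ = ∫ ω, (∑ k ∈ Finset.Icc 1 n,
            ({ω | (k : ℝ) < f ω ∧ f ω ≤ (n : ℝ)}).indicator (fun ω => f ω ^ p⁻¹) ω) ∂μ :=
          (integral_finset_sum _ hintk).symm
      _ ≤ ∫ ω, ({ω | 1 < f ω ∧ f ω ≤ (n : ℝ)}).indicator (fun ω => f ω ^ (1 + p⁻¹)) ω ∂μ := by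
          refine integral_mono (integrable_finset_sum _ hintk)
            (hind _ (hBm n) n (1 + p⁻¹) (Nat.cast_nonneg n) (by linarith)
              (fun ω hω => hω.2)) ?_
          intro ω
          dsimp only
          by_cases hω : 1 < f ω ∧ f ω ≤ (n : ℝ)
          · rw [Set.indicator_of_mem (show ω ∈ {ω | 1 < f ω ∧ f ω ≤ (n : ℝ)} from hω)]
            have hrw : ∀ k ∈ Finset.Icc 1 n,
                ({ω | (k : ℝ) < f ω ∧ f ω ≤ (n : ℝ)}).indicator (fun ω => f ω ^ p⁻¹) ω =
                if (k : ℝ) < f ω then f ω ^ p⁻¹ else 0 := by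
              intro k _
              by_cases h : (k : ℝ) < f ω
              · have hmem : ω ∈ {ω | (k : ℝ) < f ω ∧ f ω ≤ (n : ℝ)} := ⟨h, hω.2⟩
                rw [Set.indicator_of_mem hmem, if_pos h]
              · rw [Set.indicator_of_notMem (fun hc => h hc.1), if_neg h]
            rw [Finset.sum_congr rfl hrw, ← Finset.sum_filter, Finset.sum_const, nsmul_eq_mul]
            have hcard : (((Finset.Icc 1 n).filter fun k : ℕ => (k : ℝ) < f ω).card : ℝ) ≤ f ω := by
              have hsub : ((Finset.Icc 1 n).filter fun k : ℕ => (k : ℝ) < f ω) ⊆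
                  Finset.Icc 1 ⌊f ω⌋₊ := by
                intro k hk
                rw [Finset.mem_filter, Finset.mem_Icc] at hk
                rw [Finset.mem_Icc]
                exact ⟨hk.1.1, Nat.le_floor hk.2.le⟩
              calc (((Finset.Icc 1 n).filter fun k : ℕ => (k : ℝ) < f ω).card : ℝ)
                  ≤ ((Finset.Icc 1 ⌊f ω⌋₊).card : ℝ) :=
                    Nat.cast_le.mpr (Finset.card_le_card hsub)
                _ = (⌊f ω⌋₊ : ℝ) := by rw [Nat.card_Icc]; simp
                _ ≤ f ω := Nat.floor_le (hf0 ω)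
            calc (((Finset.Icc 1 n).filter fun k : ℕ => (k : ℝ) < f ω).card : ℝ) * f ω ^ p⁻¹
                ≤ f ω * f ω ^ p⁻¹ :=
                  mul_le_mul_of_nonneg_right hcard (Real.rpow_nonneg (hf0 ω) _)
              _ = f ω ^ (1 + p⁻¹) := by
                  rw [Real.rpow_add' (hf0 ω) (ne_of_gt (show (0:ℝ) < 1 + p⁻¹ by linarith)), Real.rpow_one]
          · have hz : ∀ k ∈ Finset.Icc 1 n,
                ({ω | (k : ℝ) < f ω ∧ f ω ≤ (n : ℝ)}).indicator (fun ω => f ω ^ p⁻¹) ω = 0 := by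
              intro k hk
              rw [Finset.mem_Icc] at hk
              refine Set.indicator_of_notMem ?_ _
              intro hc
              refine hω ⟨lt_of_le_of_lt ?_ hc.1, hc.2⟩
              exact_mod_cast hk.1
            rw [Finset.sum_congr rfl hz, Finset.sum_const, smul_zero]
            exact Set.indicator_nonneg (fun ω _ => Real.rpow_nonneg (hf0 ω) _) ω
  -- Step B : Hölder
  set M : ℝ := ∫ ω, f ω ∂μ with hMdef
  have hM0 : 0 ≤ M := integral_nonneg hf0
  have hIT : ∀ n : ℕ,
      (∫ ω, ({ω | 1 < f ω ∧ f ω ≤ (n : ℝ)}).indicator (fun ω => f ω ^ (1 + p⁻¹)) ω ∂μ) ^ p ≤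
      M ^ (p - 1) *
        ∫ ω, ({ω | 1 < f ω ∧ f ω ≤ (n : ℝ)}).indicator (fun ω => f ω ^ (2 : ℝ)) ω ∂μ := by
    intro n
    rw [integral_indicator (hBm n), integral_indicator (hBm n)]
    rcases eq_or_lt_of_le hp1 with hpe | hpl
    · rw [← hpe]
      norm_num
    · have hp1' : p - 1 ≠ 0 := ne_of_gt (by linarith)
      have hpq : (p / (p - 1)).HolderConjugate p :=
        (Real.HolderConjugate.conjExponent hpl).symm
      set ν : Measure Ω := μ.restrict {ω | 1 < f ω ∧ f ω ≤ (n : ℝ)} with hνdef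
      haveI : IsFiniteMeasure ν := by
        constructor
        calc ν Set.univ ≤ μ Set.univ := Measure.restrict_apply_le _ _
          _ < ⊤ := measure_lt_top μ _
      have hg1 : MemLp (fun ω => f ω ^ ((p - 1) / p)) (ENNReal.ofReal (p / (p - 1))) ν := by
        refine MemLp.of_bound ((hfm.pow_const _).aestronglyMeasurable) ((n : ℝ) ^ ((p - 1) / p)) ?_
        filter_upwards [ae_restrict_mem (hBm n)] with ω hω
        rw [Real.norm_eq_abs, abs_of_nonneg (Real.rpow_nonneg (hf0 ω) _)]
        exact Real.rpow_le_rpow (hf0 ω) hω.2 (div_nonneg (by linarith) hp0.le)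
      have hg2 : MemLp (fun ω => f ω ^ (2 / p)) (ENNReal.ofReal p) ν := by
        refine MemLp.of_bound ((hfm.pow_const _).aestronglyMeasurable) ((n : ℝ) ^ (2 / p)) ?_
        filter_upwards [ae_restrict_mem (hBm n)] with ω hω
        rw [Real.norm_eq_abs, abs_of_nonneg (Real.rpow_nonneg (hf0 ω) _)]
        exact Real.rpow_le_rpow (hf0 ω) hω.2 (div_nonneg (by norm_num) hp0.le)
      have hH := integral_mul_norm_le_Lp_mul_Lq hpq hg1 hg2
      have hexp : 1 + p⁻¹ = (p - 1) / p + 2 / p := by field_simp; ring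
      have hne : (p - 1) / p + 2 / p ≠ 0 := by
        rw [← hexp]
        have : 0 < p⁻¹ := inv_pos.mpr hp0
        linarith
      have e1 : ∀ ω, ‖f ω ^ ((p - 1) / p)‖ * ‖f ω ^ (2 / p)‖ = f ω ^ (1 + p⁻¹) := by
        intro ω
        rw [Real.norm_of_nonneg (Real.rpow_nonneg (hf0 ω) _),
          Real.norm_of_nonneg (Real.rpow_nonneg (hf0 ω) _), hexp,
          Real.rpow_add' (hf0 ω) hne]
      have e2 : ∀ ω, ‖f ω ^ ((p - 1) / p)‖ ^ (p / (p - 1)) = f ω := by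
        intro ω
        rw [Real.norm_of_nonneg (Real.rpow_nonneg (hf0 ω) _), ← Real.rpow_mul (hf0 ω),
          show (p - 1) / p * (p / (p - 1)) = 1 by field_simp, Real.rpow_one]
      have e3 : ∀ ω, ‖f ω ^ (2 / p)‖ ^ p = f ω ^ (2 : ℝ) := by
        intro ω
        rw [Real.norm_of_nonneg (Real.rpow_nonneg (hf0 ω) _), ← Real.rpow_mul (hf0 ω),
          show 2 / p * p = 2 by field_simp]
      simp only [e1, e2, e3] at hH
      set a : ℝ := ∫ ω, f ω ∂ν with hadef
      set b : ℝ := ∫ ω, f ω ^ (2 : ℝ) ∂ν with hbdef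
      have ha0 : 0 ≤ a := integral_nonneg hf0
      have hb0 : 0 ≤ b := integral_nonneg (fun ω => Real.rpow_nonneg (hf0 ω) _)
      have haM : a ≤ M := setIntegral_le_integral hfi (Filter.Eventually.of_forall hf0)
      calc (∫ ω, f ω ^ (1 + p⁻¹) ∂ν) ^ p
          ≤ (a ^ (1 / (p / (p - 1))) * b ^ (1 / p)) ^ p := by
            refine Real.rpow_le_rpow (integral_nonneg fun ω => Real.rpow_nonneg (hf0 ω) _)
              hH hp0.le
        _ = a ^ (p - 1) * b := by
            rw [Real.mul_rpow (Real.rpow_nonneg ha0 _) (Real.rpow_nonneg hb0 _),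
              ← Real.rpow_mul ha0, ← Real.rpow_mul hb0,
              show 1 / (p / (p - 1)) * p = p - 1 by field_simp,
              show 1 / p * p = 1 by field_simp, Real.rpow_one]
        _ ≤ M ^ (p - 1) * b :=
            mul_le_mul_of_nonneg_right
              (Real.rpow_le_rpow ha0 haM (by linarith)) hb0
  -- Step C : summability
  have hS0 : ∀ n : ℕ,
      0 ≤ ∑ k ∈ Finset.Icc 1 n, ∫ ω in {ω | (k : ℝ) < f ω ∧ f ω ≤ (n : ℝ)}, f ω ^ p⁻¹ ∂μ :=
    fun n => Finset.sum_nonneg fun k _ =>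
      setIntegral_nonneg (hAm k n) fun ω _ => Real.rpow_nonneg (hf0 ω) _
  have hT : ∀ N : ℕ,
      ∑ n ∈ Finset.range N, ((n : ℝ) ^ 2)⁻¹ *
        ∫ ω, ({ω | 1 < f ω ∧ f ω ≤ (n : ℝ)}).indicator (fun ω => f ω ^ (2 : ℝ)) ω ∂μ
      ≤ 2 * M := by
    intro N
    have hintn : ∀ n ∈ Finset.range N,
        Integrable (fun ω => ((n : ℝ) ^ 2)⁻¹ *
          ({ω | 1 < f ω ∧ f ω ≤ (n : ℝ)}).indicator (fun ω => f ω ^ (2 : ℝ)) ω) μ :=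
      fun n _ => (hind _ (hBm n) ((n : ℝ) ^ 2) 2 (by positivity) (by norm_num)
        (fun ω hω => by
          calc f ω ≤ (n : ℝ) := hω.2
            _ ≤ (n : ℝ) ^ 2 := by
                rcases Nat.eq_zero_or_pos n with h | h
                · simp [h]
                · have h1 : (1 : ℝ) ≤ (n : ℝ) := by exact_mod_cast h
                  nlinarith)).const_mul _
    calc ∑ n ∈ Finset.range N, ((n : ℝ) ^ 2)⁻¹ *
          ∫ ω, ({ω | 1 < f ω ∧ f ω ≤ (n : ℝ)}).indicator (fun ω => f ω ^ (2 : ℝ)) ω ∂μ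
        = ∑ n ∈ Finset.range N, ∫ ω, ((n : ℝ) ^ 2)⁻¹ *
            ({ω | 1 < f ω ∧ f ω ≤ (n : ℝ)}).indicator (fun ω => f ω ^ (2 : ℝ)) ω ∂μ :=
          Finset.sum_congr rfl fun n _ => (integral_const_mul _ _).symm
      _ = ∫ ω, ∑ n ∈ Finset.range N, ((n : ℝ) ^ 2)⁻¹ *
            ({ω | 1 < f ω ∧ f ω ≤ (n : ℝ)}).indicator (fun ω => f ω ^ (2 : ℝ)) ω ∂μ :=
          (integral_finset_sum _ hintn).symm
      _ ≤ ∫ ω, 2 * f ω ∂μ := by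
          refine integral_mono (integrable_finset_sum _ hintn) (hfi.const_mul 2) ?_
          intro ω
          dsimp only
          by_cases hf1 : 1 < f ω
          · have hfpos : 0 < f ω := lt_trans one_pos hf1
            have hrw : ∀ n ∈ Finset.range N,
                ((n : ℝ) ^ 2)⁻¹ *
                  ({ω | 1 < f ω ∧ f ω ≤ (n : ℝ)}).indicator (fun ω => f ω ^ (2 : ℝ)) ω =
                if f ω ≤ (n : ℝ) then ((n : ℝ) ^ 2)⁻¹ * f ω ^ (2 : ℝ) else 0 := by
              intro n _
              by_cases h : f ω ≤ (n : ℝ)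
              · have hmem : ω ∈ {ω | 1 < f ω ∧ f ω ≤ (n : ℝ)} := ⟨hf1, h⟩
                rw [Set.indicator_of_mem hmem, if_pos h]
              · rw [Set.indicator_of_notMem (fun hc => h hc.2), if_neg h, mul_zero]
            rw [Finset.sum_congr rfl hrw, ← Finset.sum_filter]
            set c : ℕ := ⌈f ω⌉₊ with hcdef
            have hc1 : 1 ≤ c := by
              rw [hcdef]
              exact Nat.one_le_iff_ne_zero.mpr (by
                intro h
                have := Nat.ceil_eq_zero.mp h
                linarith)
            have hcf : f ω ≤ (c : ℝ) := Nat.le_ceil _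
            have hsub : ((Finset.range N).filter fun n : ℕ => f ω ≤ (n : ℝ)) ⊆
                Finset.Ioo (c - 1) N := by
              intro m hm
              rw [Finset.mem_filter, Finset.mem_range] at hm
              rw [Finset.mem_Ioo]
              have hcm : c ≤ m := Nat.ceil_le.mpr hm.2
              exact ⟨by omega, hm.1⟩
            calc ∑ n ∈ (Finset.range N).filter (fun n : ℕ => f ω ≤ (n : ℝ)),
                  ((n : ℝ) ^ 2)⁻¹ * f ω ^ (2 : ℝ)
                ≤ ∑ n ∈ Finset.Ioo (c - 1) N, ((n : ℝ) ^ 2)⁻¹ * f ω ^ (2 : ℝ) := by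
                  refine Finset.sum_le_sum_of_subset_of_nonneg hsub ?_
                  intro i _ _
                  positivity
              _ = (∑ n ∈ Finset.Ioo (c - 1) N, ((n : ℝ) ^ 2)⁻¹) * f ω ^ (2 : ℝ) :=
                  (Finset.sum_mul _ _ _).symm
              _ ≤ (2 / ((c - 1 : ℕ) + 1)) * f ω ^ (2 : ℝ) :=
                  mul_le_mul_of_nonneg_right (sum_Ioo_inv_sq_le _ _)
                    (Real.rpow_nonneg (hf0 ω) _)
              _ = (2 / c) * f ω ^ (2 : ℝ) := by
                  congr 2
                  have : ((c - 1 : ℕ) : ℝ) = (c : ℝ) - 1 := by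
                    push_cast [Nat.cast_sub hc1]
                    ring
                  rw [this]; ring
              _ ≤ (2 / f ω) * f ω ^ (2 : ℝ) := by
                  refine mul_le_mul_of_nonneg_right ?_ (Real.rpow_nonneg (hf0 ω) _)
                  exact div_le_div_of_nonneg_left (by norm_num) hfpos hcf
              _ = 2 * f ω := by
                  rw [show (2 : ℝ) = ((2 : ℕ) : ℝ) by norm_num, Real.rpow_natCast]
                  field_simp
          · have hz : ∀ n ∈ Finset.range N,
                ((n : ℝ) ^ 2)⁻¹ *
                  ({ω | 1 < f ω ∧ f ω ≤ (n : ℝ)}).indicator (fun ω => f ω ^ (2 : ℝ)) ω = 0 := by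
              intro n _
              rw [Set.indicator_of_notMem (fun hc => hf1 hc.1), mul_zero]
            rw [Finset.sum_congr rfl hz, Finset.sum_const, smul_zero]
            have := hf0 ω
            linarith
      _ = 2 * M := by rw [hMdef]; exact integral_const_mul 2 f
  refine summable_of_sum_range_le (c := M ^ (p - 1) * (2 * M)) ?_ ?_
  · intro n
    exact mul_nonneg (inv_nonneg.mpr (by positivity)) (Real.rpow_nonneg (hS0 n) p)
  · intro N
    calc ∑ n ∈ Finset.range N, ((n : ℝ) ^ 2)⁻¹ *
          (∑ k ∈ Finset.Icc 1 n, ∫ ω in {ω | (k : ℝ) < f ω ∧ f ω ≤ (n : ℝ)}, f ω ^ p⁻¹ ∂μ) ^ p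
        ≤ ∑ n ∈ Finset.range N, ((n : ℝ) ^ 2)⁻¹ * (M ^ (p - 1) *
            ∫ ω, ({ω | 1 < f ω ∧ f ω ≤ (n : ℝ)}).indicator (fun ω => f ω ^ (2 : ℝ)) ω ∂μ) := by
          refine Finset.sum_le_sum fun n _ => ?_
          refine mul_le_mul_of_nonneg_left ?_ (inv_nonneg.mpr (by positivity))
          exact le_trans (Real.rpow_le_rpow (hS0 n) (hSI n) hp0.le) (hIT n)
      _ = M ^ (p - 1) * ∑ n ∈ Finset.range N, ((n : ℝ) ^ 2)⁻¹ *
            ∫ ω, ({ω | 1 < f ω ∧ f ω ≤ (n : ℝ)}).indicator (fun ω => f ω ^ (2 : ℝ)) ω ∂μ := by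
          rw [Finset.mul_sum]
          exact Finset.sum_congr rfl fun n _ => by ring
      _ ≤ M ^ (p - 1) * (2 * M) :=
          mul_le_mul_of_nonneg_left (hT N) (Real.rpow_nonneg hM0 _)

theorem stmt_2 {Ω : Type*} [MeasurableSpace Ω] (μ : Measure Ω) [IsProbabilityMeasure μ]
    (X : Ω → ℝ) (hXmeas : Measurable X) (p : ℝ) (hp1 : 1 ≤ p) (hp2 : p < 2)
    (hXp : Integrable (fun ω => |X ω| ^ p) μ) :
    Summable (fun n : ℕ => ((n : ℝ) ^ 2)⁻¹ *
      (∑ k ∈ Finset.Icc 1 n,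
        ∫ ω in {ω | (k : ℝ) < |X ω| ^ p ∧ |X ω| ^ p ≤ (n : ℝ)}, |X ω| ∂μ) ^ p) := by
  have hp0 : (0 : ℝ) < p := lt_of_lt_of_le one_pos hp1
  have haux := stmt_2_aux μ (fun ω => |X ω| ^ p) (hXmeas.abs.pow_const p)
    (fun ω => Real.rpow_nonneg (abs_nonneg _) p) p hp1 hp2 hXp
  have hfun : ∀ ω, (|X ω| ^ p) ^ p⁻¹ = |X ω| :=
    fun ω => Real.rpow_rpow_inv (abs_nonneg _) (ne_of_gt hp0)
  refine haux.congr fun n => ?_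
  congr 1
  · congr 1
    refine Finset.sum_congr rfl fun k _ => ?_
    refine integral_congr_ae (Filter.Eventually.of_forall fun ω => ?_)
    exact hfun ω
end

section
/- Let 1 ≤ p < 2 and let X be a real-valued random variable with E|X|^p < ∞. For n ≥ 1 let u_n = inf{t : P(|X| > t) < 1/n}. Then ∑_{n=1}^∞ u_n^p / n² < ∞. -/
open MeasureTheory ProbabilityTheory

theorem stmt_3 {Ω : Type*} [MeasurableSpace Ω] (μ : Measure Ω) [IsProbabilityMeasure μ]
    (X : Ω → ℝ) (p : ℝ) (hp1 : 1 ≤ p) (hp2 : p < 2)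
    (hXp : Integrable (fun ω => |X ω| ^ p) μ) (u : ℕ → ℝ)
    (hu : ∀ n : ℕ, 1 ≤ n →
      u n = sInf {t : ℝ | μ {ω | t < |X ω|} < (n : ENNReal)⁻¹}) :
    Summable (fun n : ℕ => u n ^ p / (n : ℝ) ^ 2) := by
  have hp0 : 0 < p := by linarith
  -- measurable version g of |X|
  have habs : AEMeasurable (fun ω => |X ω|) μ := by
    have h1 : AEMeasurable (fun ω => |X ω| ^ p) μ := hXp.aemeasurable
    have h2 : AEMeasurable (fun ω => (|X ω| ^ p) ^ p⁻¹) μ :=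
      (Real.continuous_rpow_const (by positivity)).measurable.comp_aemeasurable h1
    convert h2 using 2 with ω
    rw [Real.rpow_rpow_inv (abs_nonneg _) hp0.ne']
  set g : Ω → ℝ := fun ω => |habs.mk _ ω| with hgdef
  have hgm : Measurable g := habs.measurable_mk.abs
  have hgae : (fun ω => |X ω|) =ᵐ[μ] g := by
    filter_upwards [habs.ae_eq_mk] with ω h
    simp [hgdef, ← h, abs_abs]
  have hg0 : ∀ ω, 0 ≤ g ω := fun ω => abs_nonneg _
  have hmeq : ∀ t : ℝ, μ {ω | t < |X ω|} = μ {ω | t < g ω} := by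
    intro t
    apply measure_congr
    filter_upwards [hgae] with ω h
    change (t < |X ω|) = (t < g ω)
    rw [h]
  -- basic facts about the quantile sets
  set S : ℕ → Set ℝ := fun n => {t : ℝ | μ {ω | t < |X ω|} < (n : ENNReal)⁻¹} with hSdef
  have hSnonneg : ∀ n : ℕ, 1 ≤ n → ∀ t ∈ S n, (0:ℝ) ≤ t := by
    intro n hn t ht
    by_contra hlt
    push_neg at hlt
    have huniv : {ω | t < |X ω|} = Set.univ := by
      ext ω; simp only [Set.mem_setOf_eq, Set.mem_univ, iff_true]
      exact lt_of_lt_of_le hlt (abs_nonneg _)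
    have h1 : μ {ω | t < |X ω|} = 1 := by rw [huniv]; simp
    have h2 : ((n : ENNReal))⁻¹ ≤ 1 := by
      apply ENNReal.inv_le_one.2
      exact_mod_cast Nat.one_le_cast.2 hn
    rw [hSdef] at ht
    simp only [Set.mem_setOf_eq, h1] at ht
    exact absurd (lt_of_lt_of_le ht h2) (lt_irrefl _)
  have hSbdd : ∀ n : ℕ, 1 ≤ n → BddBelow (S n) := fun n hn => ⟨0, fun t ht => hSnonneg n hn t ht⟩
  have hSne : ∀ n : ℕ, 1 ≤ n → (S n).Nonempty := by
    intro n hn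
    have hpos : (0:ENNReal) < (n : ENNReal)⁻¹ := by
      apply ENNReal.inv_pos.2
      exact ENNReal.natCast_ne_top n
    have htend : Filter.Tendsto (fun j : ℕ => μ {ω | (j:ℝ) < g ω}) Filter.atTop
        (nhds (μ (⋂ j : ℕ, {ω | (j:ℝ) < g ω}))) := by
      apply tendsto_measure_iInter_atTop
      · exact fun j => ((hgm (measurableSet_Ioi)).nullMeasurableSet)
      · intro a b hab ω hω
        simp only [Set.mem_setOf_eq] at *
        exact lt_of_le_of_lt (by exact_mod_cast Nat.cast_le.2 hab) hω
      · exact ⟨0, measure_ne_top μ _⟩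
    have hempty : (⋂ j : ℕ, {ω | (j:ℝ) < g ω}) = ∅ := by
      ext ω
      simp only [Set.mem_iInter, Set.mem_setOf_eq, Set.mem_empty_iff_false, iff_false, not_forall,
        not_lt]
      obtain ⟨j, hj⟩ := exists_nat_ge (g ω)
      exact ⟨j, hj⟩
    rw [hempty] at htend
    simp only [measure_empty] at htend
    have := htend.eventually_lt_const hpos
    obtain ⟨j, hj⟩ := this.exists
    exact ⟨(j:ℝ), by simp only [hSdef, Set.mem_setOf_eq, hmeq]; exact hj⟩
  have hu0 : ∀ n : ℕ, 1 ≤ n → 0 ≤ u n := by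
    intro n hn
    rw [hu n hn]
    exact le_csInf (hSne n hn) (fun t ht => hSnonneg n hn t ht)
  have hkey : ∀ n : ℕ, 1 ≤ n → ∀ t : ℝ, t < u n → ((n:ENNReal))⁻¹ ≤ μ {ω | t < g ω} := by
    intro n hn t ht
    rw [← hmeq]
    by_contra hcon
    push_neg at hcon
    have : t ∈ S n := hcon
    have := csInf_le (hSbdd n hn) this
    rw [← hu n hn] at this
    exact absurd (lt_of_lt_of_le ht this) (lt_irrefl _)
  have humono : ∀ m n : ℕ, 1 ≤ m → m ≤ n → u m ≤ u n := by
    intro m n hm hmn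
    have hn : 1 ≤ n := le_trans hm hmn
    rw [hu m hm, hu n hn]
    apply csInf_le_csInf (hSbdd m hm) (hSne n hn)
    intro t ht
    simp only [hSdef, Set.mem_setOf_eq] at *
    refine lt_of_lt_of_le ht ?_
    exact ENNReal.inv_le_inv.2 (by exact_mod_cast Nat.cast_le.2 hmn)
  -- measure of the closed level set
  have hA : ∀ n : ℕ, 1 ≤ n → ((n:ENNReal))⁻¹ ≤ μ {ω | u n ≤ g ω} := by
    intro n hn
    set C : ℕ → Set Ω := fun j => {ω | u n - (1:ℝ)/(j+1) < g ω} with hCdef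
    have hCm : ∀ j, MeasurableSet (C j) := fun j => hgm measurableSet_Ioi
    have hCanti : Antitone C := by
      intro a b hab ω hω
      simp only [hCdef, Set.mem_setOf_eq] at *
      refine lt_of_le_of_lt ?_ hω
      have : (1:ℝ)/(b+1) ≤ 1/(a+1) := by
        apply one_div_le_one_div_of_le (by positivity)
        exact_mod_cast by omega
      linarith
    have hCint : (⋂ j, C j) = {ω | u n ≤ g ω} := by
      ext ω
      simp only [Set.mem_iInter, hCdef, Set.mem_setOf_eq]
      constructor
      · intro h
        by_contra hlt
        push_neg at hlt
        obtain ⟨j, hj⟩ := exists_nat_one_div_lt (sub_pos.2 hlt)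
        have := h j
        linarith
      · intro h j
        have : (0:ℝ) < 1/(j+1) := by positivity
        linarith
    have htend : Filter.Tendsto (μ ∘ C) Filter.atTop (nhds (μ (⋂ j, C j))) :=
      tendsto_measure_iInter_atTop (fun j => (hCm j).nullMeasurableSet) hCanti
        ⟨0, measure_ne_top μ _⟩
    rw [hCint] at htend
    apply ge_of_tendsto htend
    filter_upwards with j
    apply hkey n hn
    have : (0:ℝ) < 1/(j+1) := by positivity
    linarith
  -- telescoping helper
  have htel : ∀ (F : ℕ → ℝ) (N : ℕ), 1 ≤ N →
      ∑ k ∈ Finset.Ico 1 N, (F (k+1) - F k) = F N - F 1 := by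
    intro F N hN
    refine Nat.le_induction ?_ ?_ N hN
    · simp
    · intro n hn ih
      rw [Finset.sum_Ico_succ_top hn, ih]; ring
  set d : ℕ → ℝ := fun k => u (k+1) ^ p - u k ^ p with hddef
  set A : ℕ → Set Ω := fun k => {ω | u k ≤ g ω} with hAdef
  have hAm : ∀ k, MeasurableSet (A k) := fun k => hgm measurableSet_Ici
  have hd0 : ∀ k : ℕ, 1 ≤ k → 0 ≤ d k := by
    intro k hk
    have := Real.rpow_le_rpow (hu0 k hk) (humono k (k+1) hk (by omega)) hp0.le
    simp only [hddef]; linarith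
  set L : ENNReal := ∫⁻ ω, ENNReal.ofReal (g ω ^ p) ∂μ with hLdef
  have hL : L ≠ ⊤ := by
    have h1 : L = ∫⁻ ω, ‖|X ω| ^ p‖₊ ∂μ := by
      apply lintegral_congr_ae
      filter_upwards [hgae] with ω h
      rw [← h, ← Real.enorm_eq_ofReal (Real.rpow_nonneg (abs_nonneg _) p), enorm_eq_nnnorm]
    rw [h1]
    exact hXp.2.ne
  -- pointwise bound
  have hpt : ∀ (N : ℕ) (ω : Ω),
      ∑ k ∈ Finset.Ico 1 N, (A (k+1)).indicator (fun _ => ENNReal.ofReal (d k)) ω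
        ≤ ENNReal.ofReal (g ω ^ p) := by
    intro N ω
    have hterm : ∀ k ∈ Finset.Ico 1 N,
        (A (k+1)).indicator (fun _ => ENNReal.ofReal (d k)) ω
          = ENNReal.ofReal (if u (k+1) ≤ g ω then d k else 0) := by
      intro k hk
      rw [Set.indicator_apply]
      by_cases h : ω ∈ A (k+1)
      · have h' : u (k+1) ≤ g ω := h
        rw [if_pos h, if_pos h']
      · have h' : ¬ u (k+1) ≤ g ω := h
        rw [if_neg h, if_neg h', ENNReal.ofReal_zero]
    rw [Finset.sum_congr rfl hterm,
      ← ENNReal.ofReal_sum_of_nonneg (fun k hk => by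
        split
        · exact hd0 k (Finset.mem_Ico.1 hk).1
        · exact le_rfl)]
    apply ENNReal.ofReal_le_ofReal
    -- real pointwise bound via min-telescoping
    set F : ℕ → ℝ := fun k => min (g ω ^ p) (u k ^ p) with hFdef
    have hFle : ∀ k : ℕ, 1 ≤ k → (if u (k+1) ≤ g ω then d k else 0) ≤ F (k+1) - F k := by
      intro k hk
      by_cases h : u (k+1) ≤ g ω
      · rw [if_pos h]
        have h1 : u (k+1) ^ p ≤ g ω ^ p := Real.rpow_le_rpow (hu0 _ (by omega)) h hp0.le
        have h2 : u k ^ p ≤ u (k+1) ^ p := by have := hd0 k hk; simp only [hddef] at this; linarith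
        have hF1 : F (k+1) = u (k+1) ^ p := min_eq_right h1
        have hF2 : F k = u k ^ p := min_eq_right (le_trans h2 h1)
        rw [hF1, hF2]
      · rw [if_neg h]
        have h2 : u k ^ p ≤ u (k+1) ^ p := by
          have := hd0 k hk; simp only [hddef] at this; linarith
        have : F k ≤ F (k+1) := min_le_min le_rfl h2
        linarith
    rcases Nat.lt_or_ge N 1 with hN | hN
    · interval_cases N
      · simp [Real.rpow_nonneg (hg0 ω) p]
    · calc ∑ k ∈ Finset.Ico 1 N, (if u (k+1) ≤ g ω then d k else 0)
          ≤ ∑ k ∈ Finset.Ico 1 N, (F (k+1) - F k) := by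
            apply Finset.sum_le_sum
            intro k hk
            exact hFle k (Finset.mem_Ico.1 hk).1
        _ = F N - F 1 := htel F N hN
        _ ≤ g ω ^ p := by
            have h1 : F N ≤ g ω ^ p := min_le_left _ _
            have h2 : (0:ℝ) ≤ F 1 :=
              le_min (Real.rpow_nonneg (hg0 ω) p) (Real.rpow_nonneg (hu0 1 le_rfl) p)
            linarith
  -- chunk bound
  have hchunk : ∀ N : ℕ,
      ∑ k ∈ Finset.Ico 1 N, ENNReal.ofReal (d k) * μ (A (k+1)) ≤ L := by
    intro N
    have heq : ∀ k ∈ Finset.Ico 1 N, ENNReal.ofReal (d k) * μ (A (k+1))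
        = ∫⁻ ω, (A (k+1)).indicator (fun _ => ENNReal.ofReal (d k)) ω ∂μ :=
      fun k _ => (lintegral_indicator_const (hAm (k+1)) _).symm
    rw [Finset.sum_congr rfl heq,
      ← lintegral_finset_sum _ (fun k _ => measurable_const.indicator (hAm (k+1)))]
    exact lintegral_mono (hpt N)
  have hreal : ∀ N : ℕ, ∑ k ∈ Finset.Ico 1 N, d k / ((k:ℝ)+1) ≤ L.toReal := by
    intro N
    rw [← ENNReal.ofReal_le_iff_le_toReal hL,
      ENNReal.ofReal_sum_of_nonneg (fun k hk => by
        have hk1 := (Finset.mem_Ico.1 hk).1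
        exact div_nonneg (hd0 k hk1) (by positivity))]
    refine le_trans (Finset.sum_le_sum ?_) (hchunk N)
    intro k hk
    have hk1 := (Finset.mem_Ico.1 hk).1
    have h1 : ENNReal.ofReal (d k / ((k:ℝ)+1))
        = ENNReal.ofReal (d k) * ENNReal.ofReal (((k:ℝ)+1)⁻¹) := by
      rw [div_eq_mul_inv, ENNReal.ofReal_mul (hd0 k hk1)]
    have h2 : ENNReal.ofReal (((k:ℝ)+1)⁻¹) = ((k+1 : ℕ) : ENNReal)⁻¹ := by
      rw [ENNReal.ofReal_inv_of_pos (by positivity)]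
      congr 1
      rw [← ENNReal.ofReal_natCast (k+1)]
      push_cast
      ring_nf
    rw [h1, h2]
    exact mul_le_mul_right (hA (k+1) (by omega)) _
  -- final summability via bounded partial sums
  apply summable_of_sum_range_le (c := 2 * u 1 ^ p + 2 * L.toReal)
  · intro n
    rcases Nat.eq_zero_or_pos n with h | h
    · subst h; simp
    · exact div_nonneg (Real.rpow_nonneg (hu0 n h) p) (by positivity)
  · intro N
    have hdrop : ∑ n ∈ Finset.range N, u n ^ p / (n:ℝ) ^ 2
        = ∑ n ∈ Finset.Ico 1 N, u n ^ p / (n:ℝ) ^ 2 := by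
      refine (Finset.sum_subset ?_ ?_).symm
      · intro x hx
        simp only [Finset.mem_Ico] at hx
        exact Finset.mem_range.2 hx.2
      · intro x hx hx'
        simp only [Finset.mem_range] at hx
        simp only [Finset.mem_Ico] at hx'
        have : x = 0 := by omega
        subst this
        simp
    rw [hdrop]
    have hsplit : ∀ n ∈ Finset.Ico 1 N, u n ^ p / (n:ℝ) ^ 2
        = u 1 ^ p / (n:ℝ) ^ 2 + ∑ k ∈ Finset.Ico 1 n, d k / (n:ℝ) ^ 2 := by
      intro n hn
      have hn1 := (Finset.mem_Ico.1 hn).1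
      have htn : ∑ k ∈ Finset.Ico 1 n, d k = u n ^ p - u 1 ^ p :=
        htel (fun k => u k ^ p) n hn1
      rw [← Finset.sum_div, htn]
      ring
    rw [Finset.sum_congr rfl hsplit, Finset.sum_add_distrib]
    have hfirst : ∑ n ∈ Finset.Ico 1 N, u 1 ^ p / (n:ℝ) ^ 2 ≤ 2 * u 1 ^ p := by
      have h2 : ∑ n ∈ Finset.Ico 1 N, ((n:ℝ) ^ 2)⁻¹ ≤ 2 := by
        have := sum_Ioo_inv_sq_le (α := ℝ) 0 N
        rw [← Finset.Ico_add_one_left_eq_Ioo] at this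
        simpa using this
      calc ∑ n ∈ Finset.Ico 1 N, u 1 ^ p / (n:ℝ) ^ 2
          = u 1 ^ p * ∑ n ∈ Finset.Ico 1 N, ((n:ℝ) ^ 2)⁻¹ := by
            rw [Finset.mul_sum]
            exact Finset.sum_congr rfl fun n _ => by rw [div_eq_mul_inv]
        _ ≤ u 1 ^ p * 2 := by
            exact mul_le_mul_of_nonneg_left h2 (Real.rpow_nonneg (hu0 1 le_rfl) p)
        _ = 2 * u 1 ^ p := by ring
    have hsecond : ∑ n ∈ Finset.Ico 1 N, ∑ k ∈ Finset.Ico 1 n, d k / (n:ℝ) ^ 2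
        ≤ 2 * L.toReal := by
      rw [← Finset.sum_Ico_Ico_comm' 1 N (fun k n => d k / (n:ℝ) ^ 2)]
      have hin : ∀ k ∈ Finset.Ico 1 N,
          ∑ n ∈ Finset.Ico (k+1) N, d k / (n:ℝ) ^ 2 ≤ 2 * (d k / ((k:ℝ)+1)) := by
        intro k hk
        have hk1 := (Finset.mem_Ico.1 hk).1
        have hIoo : ∑ n ∈ Finset.Ico (k+1) N, ((n:ℝ) ^ 2)⁻¹ ≤ 2 / ((k:ℝ)+1) := by
          rw [Finset.Ico_add_one_left_eq_Ioo]
          exact sum_Ioo_inv_sq_le k N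
        calc ∑ n ∈ Finset.Ico (k+1) N, d k / (n:ℝ) ^ 2
            = d k * ∑ n ∈ Finset.Ico (k+1) N, ((n:ℝ) ^ 2)⁻¹ := by
              rw [Finset.mul_sum]
              exact Finset.sum_congr rfl fun n _ => by rw [div_eq_mul_inv]
          _ ≤ d k * (2 / ((k:ℝ)+1)) := mul_le_mul_of_nonneg_left hIoo (hd0 k hk1)
          _ = 2 * (d k / ((k:ℝ)+1)) := by ring
      calc ∑ k ∈ Finset.Ico 1 N, ∑ n ∈ Finset.Ico (k+1) N, d k / (n:ℝ) ^ 2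
          ≤ ∑ k ∈ Finset.Ico 1 N, 2 * (d k / ((k:ℝ)+1)) := Finset.sum_le_sum hin
        _ = 2 * ∑ k ∈ Finset.Ico 1 N, d k / ((k:ℝ)+1) := by rw [Finset.mul_sum]
        _ ≤ 2 * L.toReal := by
            have := hreal N
            linarith
    linarith
end

section
/- Let 1 ≤ p < 2, δ > 0, and let X be a real-valued random variable with E|X|^p < ∞. Then ∑_{n=1}^∞ E[|X|^{p+δ} · 1{|X|^p ≤ n}] / n^{1 + δ/p} < ∞. -/
open MeasureTheory ProbabilityTheory Real

lemma step_ineq {q x : ℝ} (hq : 0 < q) (hx : 2 ≤ x) :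
    (x:ℝ) ^ (-(1+q)) ≤ (1/q) * ((x-1) ^ (-q) - x ^ (-q)) := by
  have hx0 : (0:ℝ) < x := by linarith
  have hx1 : (0:ℝ) < x - 1 := by linarith
  have hqx : 0 < 1 + q / x := by positivity
  have key : ((x-1)/x) ^ q ≤ 1 / (1 + q / x) := by
    rcases le_or_gt q 1 with h1 | h1
    · have hb : (1 + (-(1/x))) ^ q ≤ 1 + q * (-(1/x)) := by
        apply rpow_one_add_le_one_add_mul_self _ hq.le h1
        have h1x : 1/x ≤ 1 := by rw [div_le_one hx0]; linarith
        linarith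
      have e : (x-1)/x = 1 + (-(1/x)) := by field_simp; ring
      have h2 : ((x-1)/x) ^ q ≤ 1 - q / x := by
        rw [e]
        calc (1 + (-(1/x))) ^ q ≤ 1 + q * (-(1/x)) := hb
          _ = 1 - q / x := by ring
      refine h2.trans ?_
      rw [le_div_iff₀ hqx]
      have hqx2 : q / x ≤ 1 := by
        rw [div_le_one hx0]; linarith
      nlinarith [sq_nonneg (q/x)]
    · have hb : 1 + q * (1/(x-1)) ≤ (1 + 1/(x-1)) ^ q := by
        apply one_add_mul_self_le_rpow_one_add _ h1.le
        have h1x : 0 < 1/(x-1) := by positivity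
        linarith
      have e : 1 + 1/(x-1) = x / (x-1) := by field_simp; ring
      have hle : 1 + q / x ≤ (x/(x-1)) ^ q := by
        rw [← e]
        refine le_trans ?_ hb
        have : q / x ≤ q / (x-1) := by
          apply div_le_div_of_nonneg_left hq.le hx1; linarith
        rw [mul_one_div]; linarith
      have hinv : ((x-1)/x) ^ q = ((x/(x-1)) ^ q)⁻¹ := by
        rw [← Real.inv_rpow (by positivity), inv_div]
      rw [hinv, one_div]
      exact inv_anti₀ hqx hle
  have hdiv : ((x-1)/x) ^ q = (x-1)^q / x^q := Real.div_rpow hx1.le hx0.le q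
  have hxq : (0:ℝ) < x ^ q := rpow_pos_of_pos hx0 q
  have hx1q : (0:ℝ) < (x-1) ^ q := rpow_pos_of_pos hx1 q
  have key2 : (x-1)^q * (1 + q/x) ≤ x^q := by
    rw [hdiv, div_le_div_iff₀ hxq hqx, one_mul] at key
    linarith [key]
  have en : x ^ (-(1+q)) = x⁻¹ * (x^q)⁻¹ := by
    rw [show -(1+q) = (-1) + (-q) by ring, Real.rpow_add hx0, Real.rpow_neg_one,
      Real.rpow_neg hx0.le]
  have en1 : (x-1) ^ (-q) = ((x-1)^q)⁻¹ := Real.rpow_neg hx1.le q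
  have en2 : x ^ (-q) = (x^q)⁻¹ := Real.rpow_neg hx0.le q
  rw [en, en1, en2, ← sub_nonneg]
  have expand : 1/q * (((x-1)^q)⁻¹ - (x^q)⁻¹) - x⁻¹ * (x^q)⁻¹
      = (x^q - (x-1)^q * (1 + q/x)) / (q * (x-1)^q * x^q) := by
    field_simp
    ring
  rw [expand]
  have := sub_nonneg.mpr key2
  positivity

lemma tail_bound {q : ℝ} (hq : 0 < q) (m N : ℕ) (hm : 1 ≤ m) :
    ∑ n ∈ Finset.Ico m N, ((n:ℝ)) ^ (-(1+q)) ≤ (1 + 1/q) * (m:ℝ) ^ (-q) := by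
  have hm0 : (0:ℝ) < (m:ℝ) := by exact_mod_cast hm
  have hGm : (0:ℝ) < (m:ℝ) ^ (-q) := rpow_pos_of_pos hm0 _
  have hK : (0:ℝ) < 1 + 1/q := by positivity
  rcases le_or_gt N m with hNm | hmN
  · rw [Finset.Ico_eq_empty (by omega), Finset.sum_empty]
    positivity
  · rw [Finset.sum_eq_sum_Ico_succ_bot hmN]
    have h1 : (m:ℝ) ^ (-(1+q)) ≤ (m:ℝ) ^ (-q) := by
      apply Real.rpow_le_rpow_of_exponent_le (by exact_mod_cast hm)
      linarith
    have h2 : ∑ n ∈ Finset.Ico (m+1) N, ((n:ℝ)) ^ (-(1+q))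
        ≤ (1/q) * (m:ℝ) ^ (-q) := by
      have hstep : ∑ n ∈ Finset.Ico (m+1) N, ((n:ℝ)) ^ (-(1+q))
          ≤ ∑ n ∈ Finset.Ico (m+1) N,
            (1/q) * ((((n-1:ℕ)):ℝ) ^ (-q) - ((n:ℕ):ℝ) ^ (-q)) := by
        apply Finset.sum_le_sum
        intro n hn
        rw [Finset.mem_Ico] at hn
        have hn2 : 2 ≤ (n:ℝ) := by
          have : 2 ≤ n := by omega
          exact_mod_cast this
        have hc : (((n-1:ℕ)):ℝ) = (n:ℝ) - 1 := by
          have : 1 ≤ n := by omega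
          push_cast [this]; ring
        rw [hc]
        exact step_ineq hq hn2
      refine hstep.trans ?_
      rw [← Finset.mul_sum]
      have htel : ∑ n ∈ Finset.Ico (m+1) N,
          ((((n-1:ℕ)):ℝ) ^ (-q) - ((n:ℕ):ℝ) ^ (-q)) ≤ (m:ℝ) ^ (-q) := by
        rw [Finset.sum_Ico_eq_sum_range]
        have : ∀ i, (m + 1 + i - 1) = m + i := by omega
        calc ∑ i ∈ Finset.range (N - (m+1)),
              ((((m+1+i-1:ℕ)):ℝ) ^ (-q) - (((m+1+i:ℕ)):ℝ) ^ (-q))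
            = ∑ i ∈ Finset.range (N - (m+1)),
              ((((m+i:ℕ)):ℝ) ^ (-q) - (((m+(i+1):ℕ)):ℝ) ^ (-q)) := by
              apply Finset.sum_congr rfl
              intro i _
              have e1 : m+1+i-1 = m+i := by omega
              have e2 : m+1+i = m+(i+1) := by omega
              rw [e1, e2]
          _ = (((m+0:ℕ)):ℝ) ^ (-q) - (((m + (N - (m+1)):ℕ)):ℝ) ^ (-q) :=
              Finset.sum_range_sub' (fun i => (((m+i:ℕ)):ℝ) ^ (-q)) _
          _ ≤ (m:ℝ) ^ (-q) := by
              simp only [Nat.add_zero]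
              have : (0:ℝ) ≤ (((m + (N - (m+1)):ℕ)):ℝ) ^ (-q) :=
                rpow_nonneg (by positivity) _
              linarith
      exact mul_le_mul_of_nonneg_left htel (by positivity)
    have hr : (1 + 1/q) * (m:ℝ) ^ (-q) = (m:ℝ) ^ (-q) + (1/q) * (m:ℝ) ^ (-q) := by ring
    linarith

lemma ptwise {q : ℝ} (hq : 0 < q) {y : ℝ} (hy : 0 ≤ y) (N : ℕ) :
    ∑ n ∈ Finset.range N, (if y ≤ (n:ℝ) then y ^ (1+q) else 0) / (n:ℝ) ^ (1+q)
      ≤ (1 + 1/q) * y := by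
  have hq1 : (0:ℝ) < 1 + q := by linarith
  rcases eq_or_lt_of_le hy with h0 | h0
  · simp [← h0, Real.zero_rpow (ne_of_gt hq1)]
  · set m := ⌈y⌉₊ with hmdef
    have hm : 1 ≤ m := Nat.one_le_ceil_iff.mpr h0
    have hterm : ∀ n ∈ Finset.range N,
        (if y ≤ (n:ℝ) then y ^ (1+q) else 0) / (n:ℝ) ^ (1+q)
        = if m ≤ n then y ^ (1+q) * (n:ℝ) ^ (-(1+q)) else 0 := by
      intro n _
      by_cases h : m ≤ n
      · have hn1 : 1 ≤ n := le_trans hm h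
        have hn0 : (0:ℝ) < (n:ℝ) := by exact_mod_cast hn1
        rw [if_pos h, if_pos (Nat.ceil_le.mp h), Real.rpow_neg hn0.le, div_eq_mul_inv]
      · rw [if_neg h, if_neg (fun hyn => h (Nat.ceil_le.mpr hyn)), zero_div]
    rw [Finset.sum_congr rfl hterm, ← Finset.sum_filter]
    have hfilt : (Finset.range N).filter (fun n => m ≤ n) = Finset.Ico m N := by
      ext n
      simp [Finset.mem_Ico, and_comm]
    rw [hfilt, ← Finset.mul_sum]
    have h1 : y ^ (1+q) * ∑ n ∈ Finset.Ico m N, ((n:ℝ)) ^ (-(1+q))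
        ≤ y ^ (1+q) * ((1 + 1/q) * (m:ℝ) ^ (-q)) :=
      mul_le_mul_of_nonneg_left (tail_bound hq m N hm) (rpow_nonneg hy _)
    refine h1.trans ?_
    have hym : y ≤ (m:ℝ) := Nat.le_ceil y
    have h2 : (m:ℝ) ^ (-q) ≤ y ^ (-q) :=
      Real.rpow_le_rpow_of_nonpos h0 hym (by linarith)
    have h3 : y ^ (1+q) * y ^ (-q) = y := by
      rw [← Real.rpow_add h0]
      norm_num
    calc y ^ (1+q) * ((1 + 1/q) * (m:ℝ) ^ (-q))
        = (1 + 1/q) * (y ^ (1+q) * (m:ℝ) ^ (-q)) := by ring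
      _ ≤ (1 + 1/q) * (y ^ (1+q) * y ^ (-q)) := by
          apply mul_le_mul_of_nonneg_left _ (by positivity)
          exact mul_le_mul_of_nonneg_left h2 (rpow_nonneg hy _)
      _ = (1 + 1/q) * y := by rw [h3]

theorem stmt_4 {Ω : Type*} [MeasurableSpace Ω] (μ : Measure Ω) [IsProbabilityMeasure μ]
    (X : Ω → ℝ) (hXmeas : Measurable X) (p δ : ℝ) (hp1 : 1 ≤ p) (hp2 : p < 2)
    (hδ : 0 < δ) (hXp : Integrable (fun ω => |X ω| ^ p) μ) :
    Summable (fun n : ℕ =>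
      (∫ ω in {ω | |X ω| ^ p ≤ (n : ℝ)}, |X ω| ^ (p + δ) ∂μ) / (n : ℝ) ^ (1 + δ / p)) := by
  have hp0 : (0:ℝ) < p := by linarith
  set q : ℝ := δ / p with hqdef
  have hq : 0 < q := div_pos hδ hp0
  have hgY : ∀ ω, |X ω| ^ (p + δ) = (|X ω| ^ p) ^ (1 + q) := by
    intro ω
    rw [← Real.rpow_mul (abs_nonneg _)]
    congr 1
    rw [hqdef]
    field_simp
  have hY : Measurable (fun ω => |X ω| ^ p) := by measurability
  have hg : Measurable (fun ω => |X ω| ^ (p + δ)) := by measurability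
  have hS : ∀ n : ℕ, MeasurableSet {ω | |X ω| ^ p ≤ (n:ℝ)} :=
    fun n => measurableSet_le hY measurable_const
  have hInt : ∀ n : ℕ,
      Integrable (({ω | |X ω| ^ p ≤ (n:ℝ)}).indicator (fun ω => |X ω| ^ (p + δ))) μ := by
    intro n
    apply Integrable.mono' (integrable_const ((n:ℝ) ^ (1 + q)))
    · exact (hg.indicator (hS n)).aestronglyMeasurable
    · filter_upwards with ω
      by_cases h : ω ∈ {ω | |X ω| ^ p ≤ (n:ℝ)}
      · rw [Set.indicator_of_mem h]
        rw [Real.norm_eq_abs, abs_of_nonneg (rpow_nonneg (abs_nonneg _) _), hgY ω]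
        exact Real.rpow_le_rpow (rpow_nonneg (abs_nonneg _) _) h (by linarith)
      · rw [Set.indicator_of_notMem h, norm_zero]
        positivity
  apply summable_of_sum_range_le
    (c := (1 + 1/q) * ∫ ω, |X ω| ^ p ∂μ)
  · intro n
    apply div_nonneg _ (rpow_nonneg (Nat.cast_nonneg n) _)
    exact setIntegral_nonneg (hS n) (fun ω _ => rpow_nonneg (abs_nonneg _) _)
  · intro N
    have step1 : ∀ n : ℕ,
        (∫ ω in {ω | |X ω| ^ p ≤ (n:ℝ)}, |X ω| ^ (p + δ) ∂μ) / (n:ℝ) ^ (1 + δ / p)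
        = ∫ ω, (({ω | |X ω| ^ p ≤ (n:ℝ)}).indicator (fun ω => |X ω| ^ (p + δ)) ω)
            / (n:ℝ) ^ (1 + q) ∂μ := by
      intro n
      rw [integral_div, integral_indicator (hS n)]
    calc ∑ n ∈ Finset.range N,
          (∫ ω in {ω | |X ω| ^ p ≤ (n:ℝ)}, |X ω| ^ (p + δ) ∂μ) / (n:ℝ) ^ (1 + δ / p)
        = ∑ n ∈ Finset.range N, ∫ ω,
            (({ω | |X ω| ^ p ≤ (n:ℝ)}).indicator (fun ω => |X ω| ^ (p + δ)) ω)
            / (n:ℝ) ^ (1 + q) ∂μ := by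
          exact Finset.sum_congr rfl (fun n _ => step1 n)
      _ = ∫ ω, ∑ n ∈ Finset.range N,
            (({ω | |X ω| ^ p ≤ (n:ℝ)}).indicator (fun ω => |X ω| ^ (p + δ)) ω)
            / (n:ℝ) ^ (1 + q) ∂μ := by
          rw [integral_finset_sum _ (fun n _ => (hInt n).div_const _)]
      _ ≤ ∫ ω, (1 + 1/q) * (|X ω| ^ p) ∂μ := by
          apply integral_mono
            (integrable_finset_sum _ (fun n _ => (hInt n).div_const _))
            (hXp.const_mul _)
          intro ω
          have hy : 0 ≤ |X ω| ^ p := rpow_nonneg (abs_nonneg _) _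
          have := ptwise hq hy N
          refine le_trans (le_of_eq ?_) this
          apply Finset.sum_congr rfl
          intro n _
          congr 1
          rw [Set.indicator_apply]
          simp only [Set.mem_setOf_eq]
          by_cases h : |X ω| ^ p ≤ (n:ℝ)
          · rw [if_pos h, if_pos h, hgY ω]
          · rw [if_neg h, if_neg h]
      _ = (1 + 1/q) * ∫ ω, |X ω| ^ p ∂μ := integral_const_mul _ _
end

section
/- Let 1 < p < 2 and let X be a real-valued random variable with E|X|^p < ∞. Then ∑_{n=1}^∞ (E[|X| · 1{|X|^p > n}])^p / n^{2-p} < ∞. -/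
open MeasureTheory ProbabilityTheory
open scoped ENNReal NNReal

lemma holder_geom {p : ℝ} (hp : 1 < p) (y : ℕ → ℝ≥0∞) :
    (∑' j, y j) ^ p ≤ (((1:ℝ≥0∞) - 2 ^ (-(2:ℝ)⁻¹))⁻¹) ^ (p - 1)
      * ∑' j : ℕ, 2 ^ ((j : ℝ) * (p - 1) / 2) * y j ^ p := by
  set q : ℝ := Real.conjExponent p with hq
  have hpq : q.HolderConjugate p := (Real.HolderConjugate.conjExponent hp).symm
  have hq0 : q ≠ 0 := ne_of_gt hpq.pos
  have hp0 : (0:ℝ) < p := lt_trans one_pos hp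
  set f : ℕ → ℝ≥0∞ := fun j => 2 ^ (-(j : ℝ) / (2 * q)) with hf
  set g : ℕ → ℝ≥0∞ := fun j => y j * 2 ^ ((j : ℝ) / (2 * q)) with hg
  have h2 : (2:ℝ≥0∞) ≠ 0 := two_ne_zero
  have h2t : (2:ℝ≥0∞) ≠ ⊤ := ENNReal.ofNat_ne_top
  have hfg : ∀ j, f j * g j = y j := by
    intro j
    rw [hf, hg]
    simp only
    rw [← mul_assoc, mul_comm ((2:ℝ≥0∞) ^ (-(j:ℝ)/(2*q))), mul_assoc,
      ← ENNReal.rpow_add _ _ h2 h2t]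
    ring_nf
    simp
  have hfq : ∀ j, f j ^ q = ((2:ℝ≥0∞) ^ (-(2:ℝ)⁻¹)) ^ j := by
    intro j
    rw [hf]
    simp only
    rw [← ENNReal.rpow_natCast ((2:ℝ≥0∞) ^ (-(2:ℝ)⁻¹)) j, ← ENNReal.rpow_mul,
      ← ENNReal.rpow_mul]
    congr 1
    field_simp
  have hgp : ∀ j, g j ^ p = 2 ^ ((j : ℝ) * (p - 1) / 2) * y j ^ p := by
    intro j
    rw [hg]
    simp only
    rw [ENNReal.mul_rpow_of_nonneg _ _ (le_of_lt hp0), ← ENNReal.rpow_mul]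
    rw [mul_comm]
    congr 2
    have : p / q = p - 1 := by
      rw [hq, Real.conjExponent]
      field_simp
    rw [← this]
    ring
  have hmf : Measurable f := measurable_of_countable _
  have hmg : Measurable g := measurable_of_countable _
  have key : ∑' j, y j ≤ ((∑' j : ℕ, f j ^ q) ^ (1/q)) * ((∑' j : ℕ, g j ^ p) ^ (1/p)) := by
    have h := ENNReal.lintegral_mul_le_Lp_mul_Lq Measure.count hpq hmf.aemeasurable
      hmg.aemeasurable
    simpa [lintegral_count, Pi.mul_apply, hfg] using h
  have hfsum : ∑' j : ℕ, f j ^ q = ((1:ℝ≥0∞) - 2 ^ (-(2:ℝ)⁻¹))⁻¹ := by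
    simp only [hfq]
    exact ENNReal.tsum_geometric _
  have hdiv : p / q = p - 1 := by
    rw [hq, Real.conjExponent]
    field_simp
  calc (∑' j, y j) ^ p
      ≤ (((∑' j : ℕ, f j ^ q) ^ (1/q)) * ((∑' j : ℕ, g j ^ p) ^ (1/p))) ^ p :=
        ENNReal.rpow_le_rpow key (le_of_lt hp0)
    _ = (((1:ℝ≥0∞) - 2 ^ (-(2:ℝ)⁻¹))⁻¹) ^ (p - 1)
        * ∑' j : ℕ, 2 ^ ((j : ℝ) * (p - 1) / 2) * y j ^ p := by
        rw [hfsum, ENNReal.mul_rpow_of_nonneg _ _ (le_of_lt hp0), ← ENNReal.rpow_mul,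
          ← ENNReal.rpow_mul, one_div, one_div, inv_mul_cancel₀ (ne_of_gt hp0),
          ENNReal.rpow_one]
        congr 1
        · congr 1
          rw [inv_mul_eq_div, hdiv]
        · exact tsum_congr hgp


lemma tsum_log2_le (c : ℕ → ℝ≥0∞) :
    (∑' n : ℕ, c (Nat.log 2 (n + 1))) ≤ ∑' k : ℕ, 2 ^ k * c k := by
  rw [ENNReal.tsum_eq_iSup_sum]
  apply iSup_le
  intro s
  classical
  calc ∑ n ∈ s, c (Nat.log 2 (n + 1))
      = ∑ k ∈ s.image (fun n => Nat.log 2 (n + 1)),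
          ((s.filter fun n => Nat.log 2 (n + 1) = k).card) • c k :=
        Finset.sum_comp c (fun n => Nat.log 2 (n + 1))
    _ ≤ ∑ k ∈ s.image (fun n => Nat.log 2 (n + 1)), 2 ^ k * c k := by
        apply Finset.sum_le_sum
        intro k _
        rw [nsmul_eq_mul]
        apply mul_le_mul_left
        have hsub : (s.filter fun n => Nat.log 2 (n + 1) = k) ⊆
            Finset.Ico (2 ^ k - 1) (2 ^ (k + 1) - 1) := by
          intro n hn
          rw [Finset.mem_filter] at hn
          have h1 : 2 ^ k ≤ n + 1 := by
            rw [← hn.2]; exact Nat.pow_log_le_self 2 (Nat.succ_ne_zero n)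
          have h2 : n + 1 < 2 ^ (k + 1) := by
            rw [← hn.2]; exact Nat.lt_pow_succ_log_self one_lt_two (n + 1)
          rw [Finset.mem_Ico]
          omega
        have := Finset.card_le_card hsub
        rw [Nat.card_Ico] at this
        have h2k : 2 ^ (k + 1) - 1 - (2 ^ k - 1) = 2 ^ k := by
          have : 2 ^ (k + 1) = 2 * 2 ^ k := by ring
          have h1 : 1 ≤ 2 ^ k := Nat.one_le_two_pow
          omega
        rw [h2k] at this
        exact_mod_cast Nat.cast_le.mpr this
    _ ≤ ∑' k : ℕ, 2 ^ k * c k := ENNReal.sum_le_tsum _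


theorem stmt_5 {Ω : Type*} [MeasurableSpace Ω] (μ : Measure Ω) [IsProbabilityMeasure μ]
    (X : Ω → ℝ) (hXmeas : Measurable X) (p : ℝ) (hp1 : 1 < p) (hp2 : p < 2)
    (hXp : Integrable (fun ω => |X ω| ^ p) μ) :
    Summable (fun n : ℕ =>
      (∫ ω in {ω | (n : ℝ) < |X ω| ^ p}, |X ω| ∂μ) ^ p / (n : ℝ) ^ (2 - p)) := by
  have hp0 : (0:ℝ) < p := by linarith
  have hYm : Measurable fun ω => |X ω| ^ p := by fun_prop
  set T : Ω → ℝ≥0∞ := fun ω => ENNReal.ofReal |X ω| with hT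
  set b : ℕ → ℝ≥0∞ := fun n => ∫⁻ ω in {ω | (n:ℝ) < |X ω| ^ p}, T ω ∂μ with hb
  -- |X| is integrable
  have habs : Integrable (fun ω => |X ω|) μ := by
    refine Integrable.mono' (g := fun ω => 1 + |X ω| ^ p)
      ((integrable_const 1).add hXp) hXmeas.abs.aestronglyMeasurable ?_
    filter_upwards with ω
    rw [Real.norm_eq_abs, abs_abs]
    rcases le_total (|X ω|) 1 with h | h
    · have := Real.rpow_nonneg (abs_nonneg (X ω)) p
      linarith
    · have h2 : |X ω| ^ (1:ℝ) ≤ |X ω| ^ p :=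
        Real.rpow_le_rpow_of_exponent_le h (le_of_lt hp1)
      rw [Real.rpow_one] at h2
      linarith
  -- main ENNReal estimate
  have main : ∑' n : ℕ, b (n+1) ^ p * (((n+1 : ℕ)) : ℝ≥0∞) ^ (p - 2) ≠ ⊤ := by
    classical
    set shell : ℕ → Set Ω := fun i =>
      {ω | ((2^i : ℕ):ℝ) < |X ω| ^ p ∧ |X ω| ^ p ≤ ((2^(i+1) : ℕ):ℝ)} with hshell
    have hms : ∀ i, MeasurableSet (shell i) :=
      fun i => MeasurableSet.inter (measurableSet_lt measurable_const hYm)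
        (measurableSet_le hYm measurable_const)
    set qm : ℕ → ℝ≥0∞ := fun i => μ (shell i) with hqm
    set av : ℕ → ℝ≥0∞ := fun i => (2:ℝ≥0∞)^i * qm i with hav
    have hdisj0 : ∀ i j, i < j → Disjoint (shell i) (shell j) := by
      intro i j h
      rw [Set.disjoint_left]
      rintro ω ⟨hi1, hi2⟩ ⟨hj1, hj2⟩
      have hle : ((2^(i+1):ℕ):ℝ) ≤ ((2^j:ℕ):ℝ) := by
        exact_mod_cast Nat.pow_le_pow_right (by norm_num) (by omega)
      linarith
    have hdisj : Pairwise (Function.onFun Disjoint shell) := by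
      intro i j hij
      rcases lt_or_gt_of_ne hij with h | h
      · exact hdisj0 i j h
      · exact (hdisj0 j i h).symm
    have hYint : ∫⁻ ω, ENNReal.ofReal (|X ω| ^ p) ∂μ < ⊤ := hXp.lintegral_lt_top
    set M : ℝ≥0∞ := ∑' i, av i with hM
    have hMle : M ≤ ∫⁻ ω, ENNReal.ofReal (|X ω| ^ p) ∂μ := by
      rw [hM]
      calc ∑' i, av i = ∑' i, ∫⁻ _ in shell i, (2:ℝ≥0∞)^i ∂μ := by
            apply tsum_congr; intro i
            rw [setLIntegral_const]
        _ ≤ ∑' i, ∫⁻ ω in shell i, ENNReal.ofReal (|X ω| ^ p) ∂μ := by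
            apply ENNReal.tsum_le_tsum; intro i
            apply setLIntegral_mono' (hms i)
            intro ω hω
            have h1 : ((2^i:ℕ):ℝ) ≤ |X ω| ^ p := le_of_lt hω.1
            calc (2:ℝ≥0∞)^i = ((2^i:ℕ):ℝ≥0∞) := by push_cast; ring
              _ = ENNReal.ofReal ((2^i:ℕ):ℝ) := (ENNReal.ofReal_natCast _).symm
              _ ≤ ENNReal.ofReal (|X ω| ^ p) := ENNReal.ofReal_le_ofReal h1
        _ = ∫⁻ ω in ⋃ i, shell i, ENNReal.ofReal (|X ω| ^ p) ∂μ :=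
            (lintegral_iUnion hms hdisj _).symm
        _ ≤ ∫⁻ ω, ENNReal.ofReal (|X ω| ^ p) ∂μ := setLIntegral_le_lintegral _ _
    have hMfin : M ≠ ⊤ := (lt_of_le_of_lt hMle hYint).ne
    -- covering of tails by shells
    have hcover : ∀ k : ℕ, {ω | ((2^k:ℕ):ℝ) < |X ω| ^ p} ⊆ ⋃ j : ℕ, shell (k + j) := by
      intro k ω hω
      simp only [Set.mem_setOf_eq] at hω
      have hP : ∃ j : ℕ, |X ω| ^ p ≤ ((2^(k+j+1):ℕ):ℝ) := by
        obtain ⟨m, hm⟩ := pow_unbounded_of_one_lt (|X ω| ^ p) (by norm_num : (1:ℝ) < 2)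
        refine ⟨m, le_of_lt (lt_of_lt_of_le hm ?_)⟩
        push_cast
        exact pow_le_pow_right₀ (by norm_num) (by omega)
      set j0 := Nat.find hP with hj0def
      have hup : |X ω| ^ p ≤ ((2^(k+j0+1):ℕ):ℝ) := Nat.find_spec hP
      have hlow : ((2^(k+j0):ℕ):ℝ) < |X ω| ^ p := by
        rcases Nat.eq_zero_or_pos j0 with h0 | h0
        · rw [h0]
          simpa using hω
        · have := Nat.find_min hP (by omega : j0 - 1 < j0)
          push_neg at this
          have heq : k + (j0 - 1) + 1 = k + j0 := by omega
          rw [heq] at this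
          exact this
      exact Set.mem_iUnion.mpr ⟨j0, hlow, hup⟩
    -- bound b at powers of two by shell sums
    have hbk : ∀ k : ℕ, b (2^k) ≤ ∑' j : ℕ, ((2:ℝ≥0∞)^(k+j+1)) ^ (p⁻¹) * qm (k+j) := by
      intro k
      calc b (2^k) ≤ ∫⁻ ω in ⋃ j : ℕ, shell (k+j), T ω ∂μ := by
            apply lintegral_mono_set
            exact_mod_cast hcover k
        _ ≤ ∑' j, ∫⁻ ω in shell (k+j), T ω ∂μ := lintegral_iUnion_le _ _
        _ ≤ ∑' j : ℕ, ((2:ℝ≥0∞)^(k+j+1)) ^ (p⁻¹) * qm (k+j) := by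
            apply ENNReal.tsum_le_tsum; intro j
            have hbound : ∀ ω ∈ shell (k+j), T ω ≤ ((2:ℝ≥0∞)^(k+j+1)) ^ (p⁻¹) := by
              intro ω hω
              have h0 : (0:ℝ) ≤ |X ω| := abs_nonneg _
              have habs' : |X ω| ≤ ((2^(k+j+1):ℕ):ℝ) ^ (p⁻¹) := by
                have h1 : |X ω| = (|X ω| ^ p) ^ (p⁻¹) := by
                  rw [← Real.rpow_mul h0, mul_inv_cancel₀ (ne_of_gt hp0), Real.rpow_one]
                rw [h1]
                exact Real.rpow_le_rpow (Real.rpow_nonneg h0 p) hω.2 (inv_nonneg.mpr (le_of_lt hp0))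
              calc T ω ≤ ENNReal.ofReal (((2^(k+j+1):ℕ):ℝ) ^ (p⁻¹)) :=
                    ENNReal.ofReal_le_ofReal habs'
                _ = (ENNReal.ofReal ((2^(k+j+1):ℕ):ℝ)) ^ (p⁻¹) :=
                    (ENNReal.ofReal_rpow_of_nonneg (by positivity)
                      (inv_nonneg.mpr (le_of_lt hp0))).symm
                _ = ((2:ℝ≥0∞)^(k+j+1)) ^ (p⁻¹) := by
                    rw [ENNReal.ofReal_natCast]
                    congr 1
                    push_cast
                    ring
            calc ∫⁻ ω in shell (k+j), T ω ∂μ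
                ≤ ∫⁻ _ in shell (k+j), ((2:ℝ≥0∞)^(k+j+1)) ^ (p⁻¹) ∂μ :=
                  setLIntegral_mono' (hms _) hbound
              _ = ((2:ℝ≥0∞)^(k+j+1)) ^ (p⁻¹) * qm (k+j) := setLIntegral_const _ _
    -- Hölder
    set C : ℝ≥0∞ := (((1:ℝ≥0∞) - 2 ^ (-(2:ℝ)⁻¹))⁻¹) ^ (p - 1) with hC
    have hCfin : C ≠ ⊤ := by
      apply ENNReal.rpow_ne_top_of_nonneg (by linarith)
      rw [Ne, ENNReal.inv_eq_top, tsub_eq_zero_iff_le]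
      intro hcon
      have : (2:ℝ≥0∞) ^ (-(2:ℝ)⁻¹) < 2 ^ (0:ℝ) :=
        ENNReal.rpow_lt_rpow_of_exponent_lt (by norm_num) ENNReal.ofNat_ne_top (by norm_num)
      rw [ENNReal.rpow_zero] at this
      exact absurd (lt_of_le_of_lt hcon this) (lt_irrefl _)
    have hbkp : ∀ k : ℕ, b (2^k) ^ p ≤
        C * ∑' j : ℕ, 2 ^ ((j:ℝ)*(p-1)/2) * (((2:ℝ≥0∞)^(k+j+1)) ^ (p⁻¹) * qm (k+j)) ^ p :=
      fun k => le_trans (ENNReal.rpow_le_rpow (hbk k) (le_of_lt hp0)) (holder_geom hp1 _)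
    -- per (k,j) algebraic identity
    set V : ℕ → ℝ≥0∞ := fun j => (2:ℝ≥0∞) ^ (-(j:ℝ)*(p-1)/2) with hV
    have hkey : ∀ k j : ℕ,
        (2:ℝ≥0∞)^k * ((2^k:ℕ):ℝ≥0∞)^(p-2) *
          (2 ^ ((j:ℝ)*(p-1)/2) * (((2:ℝ≥0∞)^(k+j+1)) ^ (p⁻¹) * qm (k+j)) ^ p)
        = 2 * (V j * av (k+j) ^ p) := by
      intro k j
      have e1 : (((2:ℝ≥0∞)^(k+j+1)) ^ (p⁻¹) * qm (k+j)) ^ p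
          = (2:ℝ≥0∞)^(k+j+1) * qm (k+j) ^ p := by
        rw [ENNReal.mul_rpow_of_nonneg _ _ (le_of_lt hp0), ← ENNReal.rpow_natCast (2:ℝ≥0∞) (k+j+1),
          ← ENNReal.rpow_mul, ← ENNReal.rpow_mul, inv_mul_cancel₀ (ne_of_gt hp0), mul_one]
      have e2 : av (k+j) ^ p = (2:ℝ≥0∞) ^ (((k+j:ℕ):ℝ) * p) * qm (k+j) ^ p := by
        rw [hav]
        simp only
        rw [ENNReal.mul_rpow_of_nonneg _ _ (le_of_lt hp0), ← ENNReal.rpow_natCast (2:ℝ≥0∞) (k+j),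
          ← ENNReal.rpow_mul]
      rw [e1, e2]
      have e3 : ((2^k:ℕ):ℝ≥0∞) = (2:ℝ≥0∞) ^ ((k:ℕ):ℝ) := by
        rw [ENNReal.rpow_natCast]
        push_cast
        ring
      rw [e3, ← ENNReal.rpow_natCast (2:ℝ≥0∞) k, ← ENNReal.rpow_natCast (2:ℝ≥0∞) (k+j+1),
        ← ENNReal.rpow_mul, hV]
      have h2 : (2:ℝ≥0∞) ≠ 0 := two_ne_zero
      have h2t : (2:ℝ≥0∞) ≠ ⊤ := ENNReal.ofNat_ne_top
      have e4 : ∀ s t : ℝ, (2:ℝ≥0∞) ^ s * (2:ℝ≥0∞) ^ t = (2:ℝ≥0∞) ^ (s + t) :=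
        fun s t => (ENNReal.rpow_add s t h2 h2t).symm
      calc (2:ℝ≥0∞)^((k:ℕ):ℝ) * (2:ℝ≥0∞)^(((k:ℕ):ℝ)*(p-2)) *
            ((2:ℝ≥0∞) ^ ((j:ℝ)*(p-1)/2) * ((2:ℝ≥0∞) ^ (((k+j+1:ℕ)):ℝ) * qm (k+j) ^ p))
          = (2:ℝ≥0∞) ^ (((k:ℕ):ℝ) + ((k:ℕ):ℝ)*(p-2) + ((j:ℝ)*(p-1)/2 + ((k+j+1:ℕ):ℝ)))
              * qm (k+j) ^ p := by
            rw [mul_assoc, ← mul_assoc ((2:ℝ≥0∞) ^ ((j:ℝ)*(p-1)/2)), e4, ← mul_assoc, ← mul_assoc,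
              e4, e4]
        _ = (2:ℝ≥0∞) ^ ((1:ℝ) + (-(j:ℝ)*(p-1)/2) + ((k+j:ℕ):ℝ) * p) * qm (k+j) ^ p := by
            congr 2
            push_cast
            ring
        _ = 2 * ((2:ℝ≥0∞) ^ (-(j:ℝ)*(p-1)/2) * ((2:ℝ≥0∞) ^ (((k+j:ℕ):ℝ) * p) * qm (k+j) ^ p)) := by
            rw [← e4, ← e4, ENNReal.rpow_one]
            ring
    -- geometric sum of V
    have hVsum : ∑' j, V j = ((1:ℝ≥0∞) - (2:ℝ≥0∞) ^ (-(p-1)/2))⁻¹ := by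
      rw [hV]
      have : ∀ j : ℕ, (2:ℝ≥0∞) ^ (-(j:ℝ)*(p-1)/2) = ((2:ℝ≥0∞) ^ (-(p-1)/2)) ^ j := by
        intro j
        rw [← ENNReal.rpow_natCast ((2:ℝ≥0∞) ^ (-(p-1)/2)) j, ← ENNReal.rpow_mul]
        congr 1
        ring
      simp only [this]
      exact ENNReal.tsum_geometric _
    have hVfin : ∑' j, V j ≠ ⊤ := by
      rw [hVsum, Ne, ENNReal.inv_eq_top, tsub_eq_zero_iff_le]
      intro hcon
      have : (2:ℝ≥0∞) ^ (-(p-1)/2) < 2 ^ (0:ℝ) :=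
        ENNReal.rpow_lt_rpow_of_exponent_lt (by norm_num) ENNReal.ofNat_ne_top (by linarith)
      rw [ENNReal.rpow_zero] at this
      exact absurd (lt_of_le_of_lt hcon this) (lt_irrefl _)
    -- sum of av ^ p
    set A : ℝ≥0∞ := ∑' i, av i ^ p with hA
    have hAle : A ≤ M ^ (p-1) * M := by
      rw [hA]
      calc ∑' i, av i ^ p ≤ ∑' i, M ^ (p-1) * av i := by
            apply ENNReal.tsum_le_tsum; intro i
            rcases eq_or_ne (av i) 0 with h | h
            · rw [h, ENNReal.zero_rpow_of_pos hp0]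
              exact zero_le
            · have havM : av i ≤ M := ENNReal.le_tsum i
              have havt : av i ≠ ⊤ := fun hcon => hMfin (top_le_iff.mp (hcon ▸ havM))
              have : av i ^ p = av i ^ (p-1) * av i := by
                nth_rewrite 3 [← ENNReal.rpow_one (av i)]
                rw [← ENNReal.rpow_add _ _ h havt]
                congr 1
                ring
              rw [this]
              exact mul_le_mul' (ENNReal.rpow_le_rpow havM (by linarith)) le_rfl
        _ = M ^ (p-1) * M := by rw [ENNReal.tsum_mul_left]
    have hAfin : A ≠ ⊤ := by
      apply ne_top_of_le_ne_top _ hAle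
      exact ENNReal.mul_ne_top (ENNReal.rpow_ne_top_of_nonneg (by linarith) hMfin) hMfin
    -- define condensed terms
    set ck : ℕ → ℝ≥0∞ := fun k => b (2^k) ^ p * ((2^k:ℕ):ℝ≥0∞) ^ (p-2) with hck
    -- the chain
    have chain1 : ∑' n : ℕ, b (n+1) ^ p * (((n+1 : ℕ)) : ℝ≥0∞) ^ (p - 2)
        ≤ ∑' n : ℕ, ck (Nat.log 2 (n+1)) := by
      apply ENNReal.tsum_le_tsum; intro n
      set k := Nat.log 2 (n+1) with hk
      have hkle : (2:ℕ)^k ≤ n+1 := Nat.pow_log_le_self 2 (Nat.succ_ne_zero n)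
      have h1 : b (n+1) ≤ b (2^k) := by
        apply lintegral_mono_set
        intro ω hω
        simp only [Set.mem_setOf_eq] at hω ⊢
        have : ((2^k:ℕ):ℝ) ≤ ((n+1:ℕ):ℝ) := by exact_mod_cast hkle
        linarith
      have h2 : (((n+1 : ℕ)) : ℝ≥0∞) ^ (p-2) ≤ ((2^k:ℕ):ℝ≥0∞) ^ (p-2) := by
        have e1 : ∀ x : ℝ≥0∞, x ^ (p-2) = (x ^ (2-p))⁻¹ := by
          intro x
          rw [← ENNReal.rpow_neg]
          congr 1
          ring
        rw [e1, e1]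
        rw [ENNReal.inv_le_inv]
        exact ENNReal.rpow_le_rpow (by exact_mod_cast hkle) (by linarith)
      exact mul_le_mul' (ENNReal.rpow_le_rpow h1 (le_of_lt hp0)) h2
    have chain2 : ∑' n : ℕ, ck (Nat.log 2 (n+1)) ≤ ∑' k : ℕ, 2^k * ck k := tsum_log2_le ck
    have chain3 : ∑' k : ℕ, (2:ℝ≥0∞)^k * ck k ≤ 2 * C * ((∑' j, V j) * A) := by
      calc ∑' k : ℕ, (2:ℝ≥0∞)^k * ck k
          ≤ ∑' k : ℕ, C * ∑' j : ℕ, 2 * (V j * av (k+j) ^ p) := by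
            apply ENNReal.tsum_le_tsum; intro k
            rw [hck]
            simp only
            calc (2:ℝ≥0∞)^k * (b (2^k) ^ p * ((2^k:ℕ):ℝ≥0∞) ^ (p-2))
                ≤ ((2:ℝ≥0∞)^k * ((2^k:ℕ):ℝ≥0∞) ^ (p-2) * C) * ∑' j : ℕ, 2 ^ ((j:ℝ)*(p-1)/2) *
                    (((2:ℝ≥0∞)^(k+j+1)) ^ (p⁻¹) * qm (k+j)) ^ p := by
                  calc (2:ℝ≥0∞)^k * (b (2^k) ^ p * ((2^k:ℕ):ℝ≥0∞) ^ (p-2))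
                      = (2:ℝ≥0∞)^k * ((2^k:ℕ):ℝ≥0∞) ^ (p-2) * b (2^k) ^ p := by ring
                    _ ≤ (2:ℝ≥0∞)^k * ((2^k:ℕ):ℝ≥0∞) ^ (p-2) * (C * ∑' j : ℕ,
                        2 ^ ((j:ℝ)*(p-1)/2) * (((2:ℝ≥0∞)^(k+j+1)) ^ (p⁻¹) * qm (k+j)) ^ p) :=
                        mul_le_mul' le_rfl (hbkp k)
                    _ = ((2:ℝ≥0∞)^k * ((2^k:ℕ):ℝ≥0∞) ^ (p-2) * C) * ∑' j : ℕ,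
                        2 ^ ((j:ℝ)*(p-1)/2) * (((2:ℝ≥0∞)^(k+j+1)) ^ (p⁻¹) * qm (k+j)) ^ p := by
                        ring
              _ = ∑' j : ℕ, ((2:ℝ≥0∞)^k * ((2^k:ℕ):ℝ≥0∞) ^ (p-2) * C) * (2 ^ ((j:ℝ)*(p-1)/2) *
                    (((2:ℝ≥0∞)^(k+j+1)) ^ (p⁻¹) * qm (k+j)) ^ p) := ENNReal.tsum_mul_left.symm
              _ = ∑' j : ℕ, C * (2 * (V j * av (k+j) ^ p)) := by
                  apply tsum_congr; intro j
                  rw [← hkey k j]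
                  ring
              _ = C * ∑' j : ℕ, 2 * (V j * av (k+j) ^ p) := ENNReal.tsum_mul_left
        _ = C * ∑' k : ℕ, ∑' j : ℕ, 2 * (V j * av (k+j) ^ p) := ENNReal.tsum_mul_left
        _ = C * ∑' j : ℕ, ∑' k : ℕ, 2 * (V j * av (k+j) ^ p) := by rw [ENNReal.tsum_comm]
        _ = C * ∑' j : ℕ, 2 * (V j * ∑' k : ℕ, av (k+j) ^ p) := by
            congr 1
            apply tsum_congr; intro j
            rw [ENNReal.tsum_mul_left, ENNReal.tsum_mul_left]
        _ ≤ C * ∑' j : ℕ, 2 * (V j * A) := by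
            apply mul_le_mul' le_rfl
            apply ENNReal.tsum_le_tsum; intro j
            apply mul_le_mul' le_rfl
            apply mul_le_mul' le_rfl
            rw [hA]
            exact ENNReal.tsum_comp_le_tsum_of_injective (add_left_injective j)
              (fun i => av i ^ p)
        _ = 2 * C * ((∑' j, V j) * A) := by
            rw [ENNReal.tsum_mul_left, ENNReal.tsum_mul_right]
            ring
    have hfinal : ∑' n : ℕ, b (n+1) ^ p * (((n+1 : ℕ)) : ℝ≥0∞) ^ (p - 2)
        ≤ 2 * C * ((∑' j, V j) * A) :=
      le_trans chain1 (le_trans chain2 chain3)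
    apply ne_top_of_le_ne_top _ hfinal
    exact ENNReal.mul_ne_top (ENNReal.mul_ne_top ENNReal.ofNat_ne_top hCfin)
      (ENNReal.mul_ne_top hVfin hAfin)
  -- front end: convert to real summability
  rw [← summable_nat_add_iff 1]
  have heq : (fun n : ℕ =>
      (∫ ω in {ω | ((n + 1 : ℕ) : ℝ) < |X ω| ^ p}, |X ω| ∂μ) ^ p / ((n + 1 : ℕ) : ℝ) ^ (2 - p))
      = fun n : ℕ => (b (n+1) ^ p * (((n+1 : ℕ)) : ℝ≥0∞) ^ (p - 2)).toReal := by
    funext n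
    have h1 : ∫ ω in {ω | ((n + 1 : ℕ) : ℝ) < |X ω| ^ p}, |X ω| ∂μ = (b (n+1)).toReal := by
      rw [hb]
      simp only
      rw [integral_eq_lintegral_of_nonneg_ae
        (by filter_upwards with ω using abs_nonneg _)
        hXmeas.abs.aestronglyMeasurable.restrict]
    rw [h1]
    rw [ENNReal.toReal_rpow]
    have h2 : ((n + 1 : ℕ) : ℝ) ^ (2 - p) = ((((n+1:ℕ)) : ℝ≥0∞) ^ ((2:ℝ) - p)).toReal := by
      rw [← ENNReal.toReal_rpow, ENNReal.toReal_natCast]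
    rw [h2, ← ENNReal.toReal_div]
    congr 1
    rw [div_eq_mul_inv, ← ENNReal.rpow_neg]
    congr 1
    ring
  rw [heq]
  exact ENNReal.summable_toReal main
end

section
/- Let X be a nonnegative random variable, p > 1, and set f(t) = P(X > t) for t ≥ 0. Suppose ∫_0^∞ f(t)^{1/p} dt < ∞. For n ≥ 1 let u_n = inf{t : P(X > t) < 1/n}. Then ∑_{n=1}^∞ u_n / n^{1+1/p} < ∞. -/
open MeasureTheory ProbabilityTheory
open scoped ENNReal NNReal

private lemma key_ineq {p : ℝ} (hp : 1 < p) {a : ℝ} (ha1 : 1 ≤ a) :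
    a ^ (-(1 + 1/p)) ≤ (2*p) * (a ^ (-(1/p)) - (a+1) ^ (-(1/p))) := by
  have hp0 : (0:ℝ) < p := by linarith
  have ha0 : (0:ℝ) < a := by linarith
  obtain ⟨x, hxdef⟩ : ∃ x : ℝ, x = (a+1)/a := ⟨_, rfl⟩
  have hax : a * x = a + 1 := by rw [hxdef]; field_simp
  have hx1 : 1 ≤ x := by rw [hxdef, le_div_iff₀ ha0]; linarith
  have hx2 : x ≤ 2 := by rw [hxdef, div_le_iff₀ ha0]; linarith
  have hx0 : (0:ℝ) < x := by linarith
  -- Bernoulli upper bound for x ^ (-(1/p)) = (1/x) ^ (1/p)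
  obtain ⟨s, hsdef⟩ : ∃ s : ℝ, s = (x-1)/x := ⟨_, rfl⟩
  have hs0 : 0 ≤ s := by rw [hsdef]; exact div_nonneg (by linarith) hx0.le
  have hs1 : s ≤ 1 := by
    rw [hsdef, div_le_one hx0]; linarith
  have hinv : x⁻¹ = 1 + (-s) := by
    rw [hsdef]; field_simp; ring
  have hbern : x ^ (-(1/p)) ≤ 1 - s/p := by
    have h := rpow_one_add_le_one_add_mul_self (by linarith : (-1:ℝ) ≤ -s)
      (by positivity : (0:ℝ) ≤ 1/p) (by rw [div_le_one hp0]; linarith)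
    rw [← hinv] at h
    have hxinv : x ^ (-(1/p)) = (x⁻¹) ^ (1/p) := by
      rw [Real.rpow_neg hx0.le, ← Real.inv_rpow hx0.le]
    rw [hxinv]
    calc (x⁻¹) ^ (1/p) ≤ 1 + (1/p) * (-s) := h
      _ = 1 - s/p := by ring
  have hsx : (x-1)/2 ≤ s := by
    rw [hsdef]
    exact div_le_div_of_nonneg_left (by linarith) hx0 hx2
  have h1 : (x-1)/(2*p) ≤ 1 - x ^ (-(1/p)) := by
    have h2 : (x-1)/(2*p) ≤ s/p := by
      rw [div_le_div_iff₀ (by positivity) hp0]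
      have := hsx
      nlinarith
    linarith [hbern, h2]
  have hsub : a ^ (-(1/p)) - (a+1) ^ (-(1/p)) = a ^ (-(1/p)) * (1 - x ^ (-(1/p))) := by
    rw [← hax, Real.mul_rpow ha0.le hx0.le]
    ring
  have hpow : a ^ (-(1+1/p)) = a ^ (-(1/p)) * a⁻¹ := by
    rw [show -(1+1/p) = -(1/p) + (-1) by ring, Real.rpow_add ha0,
      Real.rpow_neg_one]
  have hxm1 : x - 1 = a⁻¹ := by
    rw [hxdef]; field_simp; ring
  have hnn : (0:ℝ) ≤ a ^ (-(1/p)) := (Real.rpow_pos_of_pos ha0 _).le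
  calc a ^ (-(1+1/p)) = a ^ (-(1/p)) * (x - 1) := by rw [hpow, hxm1]
    _ ≤ a ^ (-(1/p)) * ((2*p) * (1 - x ^ (-(1/p)))) := by
        apply mul_le_mul_of_nonneg_left _ hnn
        have h5 := h1
        rw [div_le_iff₀ (by positivity : (0:ℝ) < 2*p)] at h5
        linarith [h5]
    _ = (2*p) * (a ^ (-(1/p)) * (1 - x ^ (-(1/p)))) := by ring
    _ = (2*p) * (a ^ (-(1/p)) - (a+1) ^ (-(1/p))) := by rw [hsub]

private lemma tail_bound_s6 {p : ℝ} (hp : 1 < p) (c : ℝ≥0∞) (F : ℕ → ℝ≥0∞)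
    (hF : ∀ n : ℕ, F n ≤ if ((n+1 : ℕ) : ℝ≥0∞)⁻¹ ≤ c
        then ((n+1 : ℕ) : ℝ≥0∞) ^ (-(1 + 1/p)) else 0) :
    ∑' n, F n ≤ ENNReal.ofReal (2*p) * c ^ (1/p) := by
  classical
  have hp0 : (0:ℝ) < p := by linarith
  by_cases hS : ∃ n : ℕ, ((n+1 : ℕ) : ℝ≥0∞)⁻¹ ≤ c
  · set N := Nat.find hS with hNdef
    have hNc : ((N+1 : ℕ) : ℝ≥0∞)⁻¹ ≤ c := Nat.find_spec hS
    set g : ℕ → ℝ := fun k => ((k+1 : ℕ) : ℝ) ^ (-(1/p)) with hg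
    have hgpos : ∀ k, 0 < g k := fun k => Real.rpow_pos_of_pos (by positivity) _
    have hgmono : ∀ i, g (i+1) ≤ g i := by
      intro i
      apply Real.rpow_le_rpow_of_nonpos (by positivity : (0:ℝ) < ((i+1:ℕ):ℝ))
      · exact_mod_cast Nat.le_succ (i+1)
      · rw [neg_nonpos]; positivity
    have hterm : ∀ m : ℕ, ((m+1 : ℕ) : ℝ≥0∞) ^ (-(1 + 1/p)) ≤
        ENNReal.ofReal ((2*p) * (g m - g (m+1))) := by
      intro m
      have hc : ((m+1 : ℕ) : ℝ≥0∞) ^ (-(1 + 1/p)) =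
          ENNReal.ofReal (((m+1 : ℕ) : ℝ) ^ (-(1 + 1/p))) := by
        rw [← ENNReal.ofReal_natCast (m+1), ENNReal.ofReal_rpow_of_pos (by positivity)]
      rw [hc]
      apply ENNReal.ofReal_le_ofReal
      have hkey := key_ineq hp (a := ((m+1 : ℕ) : ℝ))
        (by exact_mod_cast Nat.succ_le_succ (Nat.zero_le m))
      have hcast : ((m+1 : ℕ) : ℝ) + 1 = ((m+1+1 : ℕ) : ℝ) := by push_cast; ring
      rw [hcast] at hkey
      exact hkey
    set D : ℕ → ℝ≥0∞ := fun i =>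
      if N ≤ i then ENNReal.ofReal ((2*p) * (g i - g (i+1))) else 0 with hD
    have hFD : ∀ i, F i ≤ D i := by
      intro i
      refine le_trans (hF i) ?_
      by_cases hi : ((i+1 : ℕ) : ℝ≥0∞)⁻¹ ≤ c
      · rw [if_pos hi, hD]
        simp only
        rw [if_pos (Nat.find_min' hS hi)]
        exact hterm i
      · rw [if_neg hi]; exact zero_le
    calc ∑' n, F n ≤ ∑' n, D n := ENNReal.tsum_le_tsum hFD
      _ ≤ ENNReal.ofReal ((2*p) * g N) := by
          rw [ENNReal.tsum_eq_iSup_sum]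
          apply iSup_le
          intro s
          have hsub : s ⊆ Finset.range (N + (s.sup id + 1)) := fun i hi =>
            Finset.mem_range.mpr (by
              have := Finset.le_sup (f := id) hi
              simp only [id] at this
              omega)
          refine le_trans (Finset.sum_le_sum_of_subset hsub) ?_
          set k := s.sup id + 1 with hk
          have hzero : ∀ i ∈ Finset.range (N+k), i ∉ Finset.Ico N (N+k) → D i = 0 := by
            intro i hi hni
            rw [Finset.mem_range] at hi
            rw [Finset.mem_Ico] at hni
            rw [hD]
            simp only
            rw [if_neg (by omega)]
          have hIco : Finset.Ico N (N+k) ⊆ Finset.range (N+k) := by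
            intro i hi
            rw [Finset.mem_Ico] at hi
            exact Finset.mem_range.mpr hi.2
          rw [← Finset.sum_subset hIco hzero]
          rw [Finset.sum_Ico_eq_sum_range]
          have hNk : N + k - N = k := by omega
          rw [hNk]
          have hDval : ∀ j, D (N + j) =
              ENNReal.ofReal ((2*p) * (g (N+j) - g (N+j+1))) := by
            intro j
            rw [hD]
            simp only
            rw [if_pos (Nat.le_add_right N j)]
          simp_rw [hDval]
          rw [← ENNReal.ofReal_sum_of_nonneg (fun i _ => by
            have := hgmono (N+i)
            nlinarith [hgmono (N+i)])]
          apply ENNReal.ofReal_le_ofReal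
          rw [← Finset.mul_sum]
          have htel : ∑ j ∈ Finset.range k, (g (N+j) - g (N+j+1)) = g N - g (N+k) := by
            have h := Finset.sum_range_sub' (f := fun j => g (N+j)) k
            simpa [add_assoc] using h
          rw [htel]
          have := (hgpos (N+k)).le
          nlinarith [(hgpos (N+k)).le]
      _ ≤ ENNReal.ofReal (2*p) * c ^ (1/p) := by
          rw [ENNReal.ofReal_mul (by positivity)]
          apply mul_le_mul_right
          have h1 : ENNReal.ofReal (g N) = ((N+1 : ℕ) : ℝ≥0∞) ^ (-(1/p)) := by
            rw [hg]
            simp only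
            rw [← ENNReal.ofReal_natCast (N+1), ENNReal.ofReal_rpow_of_pos (by positivity)]
          rw [h1, ENNReal.rpow_neg, ← ENNReal.inv_rpow]
          exact ENNReal.rpow_le_rpow hNc (by positivity)
  · have hzero : ∀ n, F n = 0 := by
      intro n
      have h := hF n
      rw [if_neg (fun h' => hS ⟨n, h'⟩)] at h
      exact le_antisymm h zero_le
    simp [hzero]

theorem stmt_6 {Ω : Type*} [MeasurableSpace Ω] (μ : Measure Ω) [IsProbabilityMeasure μ]
    (X : Ω → ℝ) (hXnonneg : ∀ ω, 0 ≤ X ω) (p : ℝ) (hp : 1 < p)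
    (hint : ∫⁻ t in Set.Ioi (0 : ℝ), (μ {ω | t < X ω}) ^ (1 / p) < ⊤)
    (u : ℕ → ℝ)
    (hu : ∀ n : ℕ, 1 ≤ n →
      u n = sInf {t : ℝ | μ {ω | t < X ω} < (n : ENNReal)⁻¹}) :
    Summable (fun n : ℕ => u n / (n : ℝ) ^ (1 + 1 / p)) := by
  have hp0 : (0:ℝ) < p := by linarith
  set f : ℝ → ℝ≥0∞ := fun t => μ {ω | t < X ω} with hf
  -- every element of the defining set is nonnegative
  have hlb : ∀ n : ℕ, 1 ≤ n → ∀ t ∈ {t : ℝ | f t < ((n : ℕ) : ℝ≥0∞)⁻¹}, (0:ℝ) ≤ t := by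
    intro n hn t ht
    by_contra hneg
    push_neg at hneg
    have huniv : {ω | t < X ω} = Set.univ :=
      Set.eq_univ_of_forall (fun ω => lt_of_lt_of_le hneg (hXnonneg ω))
    have h1 : f t = 1 := by rw [hf]; simp [huniv]
    rw [Set.mem_setOf_eq, h1] at ht
    have h2 : ((n : ℕ) : ℝ≥0∞)⁻¹ ≤ 1 := ENNReal.inv_le_one.mpr (by exact_mod_cast hn)
    exact absurd (lt_of_lt_of_le ht h2) (lt_irrefl _)
  have hu_nonneg : ∀ n : ℕ, 1 ≤ n → 0 ≤ u n := by
    intro n hn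
    rw [hu n hn]
    exact Real.sInf_nonneg (hlb n hn)
  have h1 : ∀ n : ℕ, 1 ≤ n → ∀ t : ℝ, t < u n → ((n : ℕ) : ℝ≥0∞)⁻¹ ≤ f t := by
    intro n hn t ht
    by_contra hc
    push_neg at hc
    have htS : t ∈ {t : ℝ | f t < ((n : ℕ) : ℝ≥0∞)⁻¹} := hc
    have hle : u n ≤ t := by
      rw [hu n hn]
      exact csInf_le ⟨0, hlb n hn⟩ htS
    linarith
  -- the ENNReal-valued sequence
  set A : ℕ → ℝ≥0∞ := fun n =>
    ((n+1 : ℕ) : ℝ≥0∞) ^ (-(1 + 1/p)) * ENNReal.ofReal (u (n+1)) with hA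
  have hcne : ∀ n : ℕ, ((n+1 : ℕ) : ℝ≥0∞) ^ (-(1 + 1/p)) ≠ ⊤ := by
    intro n
    rw [ENNReal.rpow_neg]
    simp only [ne_eq, ENNReal.inv_eq_top]
    intro h
    have : ((n+1 : ℕ) : ℝ≥0∞) ≠ 0 := by exact_mod_cast Nat.succ_ne_zero n
    exact absurd h (by
      apply ne_of_gt
      exact ENNReal.rpow_pos (by positivity) (by simp))
  have hAint : ∀ n, A n = ∫⁻ t in Set.Ioi (0:ℝ),
      ((n+1 : ℕ) : ℝ≥0∞) ^ (-(1 + 1/p)) *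
        (Set.Iio (u (n+1))).indicator (1 : ℝ → ℝ≥0∞) t := by
    intro n
    rw [lintegral_const_mul' _ _ (hcne n), lintegral_indicator_one measurableSet_Iio,
      Measure.restrict_apply measurableSet_Iio, Set.Iio_inter_Ioi, Real.volume_Ioo,
      sub_zero, hA]
  have hswap : ∑' n, A n = ∫⁻ t in Set.Ioi (0:ℝ), ∑' n : ℕ,
      ((n+1 : ℕ) : ℝ≥0∞) ^ (-(1 + 1/p)) *
        (Set.Iio (u (n+1))).indicator (1 : ℝ → ℝ≥0∞) t := by
    simp_rw [hAint]
    rw [← lintegral_tsum]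
    intro n
    exact ((measurable_one.indicator measurableSet_Iio).const_mul _).aemeasurable
  have hptwise : ∀ t : ℝ, (∑' n : ℕ,
      ((n+1 : ℕ) : ℝ≥0∞) ^ (-(1 + 1/p)) *
        (Set.Iio (u (n+1))).indicator (1 : ℝ → ℝ≥0∞) t)
      ≤ ENNReal.ofReal (2*p) * f t ^ (1/p) := by
    intro t
    apply tail_bound_s6 hp (f t)
    intro n
    by_cases ht : t < u (n+1)
    · rw [Set.indicator_of_mem (Set.mem_Iio.mpr ht), Pi.one_apply, mul_one]
      rw [if_pos (h1 (n+1) (Nat.succ_le_succ (Nat.zero_le n)) t ht)]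
    · rw [Set.indicator_of_notMem (by simpa using ht), mul_zero]
      exact zero_le
  have hfin : ∑' n, A n ≠ ⊤ := by
    rw [hswap]
    apply ne_top_of_le_ne_top _ (lintegral_mono (fun t => hptwise t))
    rw [lintegral_const_mul' _ _ ENNReal.ofReal_ne_top]
    exact (ENNReal.mul_lt_top ENNReal.ofReal_lt_top hint).ne
  have hsummable : Summable (fun n => (A n).toReal) := ENNReal.summable_toReal hfin
  have heq : ∀ n : ℕ, (A n).toReal = u (n+1) / ((n+1 : ℕ) : ℝ) ^ (1 + 1/p) := by
    intro n
    rw [hA]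
    simp only
    rw [ENNReal.toReal_mul, ENNReal.toReal_ofReal
      (hu_nonneg (n+1) (Nat.succ_le_succ (Nat.zero_le n)))]
    rw [← ENNReal.toReal_rpow, ENNReal.toReal_natCast,
      Real.rpow_neg (by positivity), inv_mul_eq_div]
  have hsum2 : Summable (fun n : ℕ => u (n+1) / ((n+1 : ℕ) : ℝ) ^ (1 + 1/p)) :=
    hsummable.congr heq
  exact (summable_nat_add_iff 1).mp hsum2
end

section
/- Let X be a nonnegative random variable with ∫_0^∞ P(X > t)^{1/p} dt < ∞ for some p > 1, and let X_1, X_2, ... be i.i.d. copies of X. Then ∑_{n=1}^∞ n^{-1-1/p} E[max_{1 ≤ k ≤ n} X_k] < ∞. -/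
open MeasureTheory ProbabilityTheory
open scoped ENNReal NNReal

set_option maxHeartbeats 1000000

/-- Weighted AM-GM Bernoulli: `t ^ σ ≤ σ * t + (1 - σ)`. -/
private lemma bern {σ t : ℝ} (hσ0 : 0 ≤ σ) (hσ1 : σ ≤ 1) (ht : 0 ≤ t) :
    t ^ σ ≤ σ * t + (1 - σ) := by
  have h := Real.geom_mean_le_arith_mean2_weighted (w₁ := σ) (w₂ := 1 - σ) (p₁ := t)
    (p₂ := 1) hσ0 (by linarith) ht zero_le_one (by ring)
  simpa using h

/-- Concavity tangent bound at the right endpoint: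
`σ * b ^ (σ - 1) * (b - a) ≤ b ^ σ - a ^ σ`. -/
private lemma head_tangent {a b σ : ℝ} (ha : 0 ≤ a) (hab : a ≤ b) (hb : 0 < b)
    (hσ0 : 0 < σ) (hσ1 : σ < 1) : σ * b ^ (σ - 1) * (b - a) ≤ b ^ σ - a ^ σ := by
  have hbσ : (0 : ℝ) < b ^ σ := Real.rpow_pos_of_pos hb σ
  have h6 : b ^ (σ - 1) = b ^ σ / b := by
    rw [Real.rpow_sub hb, Real.rpow_one]
  have h2 : a ^ σ = (a / b) ^ σ * b ^ σ := by
    rw [Real.div_rpow ha hb.le, div_mul_cancel₀ _ (ne_of_gt hbσ)]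
  have h3 := bern hσ0.le hσ1.le (div_nonneg ha hb.le)
  have h4 : a ^ σ ≤ (σ * (a / b) + (1 - σ)) * b ^ σ := by
    rw [h2]; exact mul_le_mul_of_nonneg_right h3 hbσ.le
  rw [h6]
  have e1 : σ * (b ^ σ / b) * (b - a) = σ * b ^ σ - σ * (a / b) * b ^ σ := by
    field_simp
  have e2 : (σ * (a / b) + (1 - σ)) * b ^ σ = σ * (a / b) * b ^ σ + b ^ σ - σ * b ^ σ := by
    ring
  linarith [h4]

/-- Convexity tangent bound for negative powers:
`σ * b ^ (-1 - σ) * (b - a) ≤ a ^ (-σ) - b ^ (-σ)`. -/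
private lemma tail_tangent {a b σ : ℝ} (ha : 0 < a) (hab : a ≤ b)
    (hσ0 : 0 < σ) (hσ1 : σ < 1) : σ * b ^ (-1 - σ) * (b - a) ≤ a ^ (-σ) - b ^ (-σ) := by
  have hb : 0 < b := lt_of_lt_of_le ha hab
  set t := a / b with htdef
  have ht0 : 0 < t := div_pos ha hb
  have ht1 : t ≤ 1 := (div_le_one hb).2 hab
  have hber : t ^ σ ≤ 1 - σ * (1 - t) := by
    have := bern hσ0.le hσ1.le ht0.le; linarith
  have htσ : 0 < t ^ σ := Real.rpow_pos_of_pos ht0 σ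
  have hu0 : 0 ≤ σ * (1 - t) := by nlinarith
  have hu1 : σ * (1 - t) < 1 := by nlinarith
  have hinv : 1 + σ * (1 - t) ≤ t ^ (-σ) := by
    rw [Real.rpow_neg ht0.le, ← one_div]
    rw [le_div_iff₀ htσ]
    nlinarith [hber]
  have hbσ : (0 : ℝ) < b ^ (-σ) := Real.rpow_pos_of_pos hb _
  have hA : a ^ (-σ) = t ^ (-σ) * b ^ (-σ) := by
    have hab' : a = t * b := by rw [htdef, div_mul_cancel₀ _ (ne_of_gt hb)]
    rw [hab', Real.mul_rpow ht0.le hb.le]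
  have hB : b ^ (-1 - σ) = b ^ (-σ) / b := by
    rw [show (-1 : ℝ) - σ = -σ - 1 by ring, Real.rpow_sub hb, Real.rpow_one]
  have hkey : σ * (1 - t) * b ^ (-σ) ≤ a ^ (-σ) - b ^ (-σ) := by
    rw [hA]
    nlinarith [mul_le_mul_of_nonneg_right hinv hbσ.le]
  have e1 : σ * b ^ (-1 - σ) * (b - a) = σ * (1 - t) * b ^ (-σ) := by
    rw [hB, htdef]; field_simp
  linarith

/-- Head partial-sum estimate: `(1-s) * ∑_{n ≤ M} n^{-s} ≤ M^{1-s}`. -/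
private lemma headSum {s : ℝ} (hs0 : 0 < s) (hs1 : s < 1) (M : ℕ) :
    (1 - s) * ∑ n ∈ Finset.range (M + 1), (n : ℝ) ^ (-s) ≤ (M : ℝ) ^ (1 - s) := by
  induction M with
  | zero =>
      simp [Real.zero_rpow (by linarith : -s ≠ 0), Real.zero_rpow (by linarith : 1 - s ≠ 0)]
  | succ M ih =>
      rw [Finset.sum_range_succ, mul_add]
      have hb : (0 : ℝ) < (M : ℝ) + 1 := by positivity
      have ht := head_tangent (a := (M : ℝ)) (b := (M : ℝ) + 1) (σ := 1 - s)
        (Nat.cast_nonneg M) (by linarith) hb (by linarith) (by linarith)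
      have he : (1 : ℝ) - s - 1 = -s := by ring
      rw [he] at ht
      have hcast : ((M + 1 : ℕ) : ℝ) = (M : ℝ) + 1 := by push_cast; ring
      rw [hcast]
      have hsimp : ((M : ℝ) + 1) - (M : ℝ) = 1 := by ring
      rw [hsimp, mul_one] at ht
      linarith

/-- Tail tsum estimate: `s * ∑_{k} (N+1+k)^{-1-s} ≤ N^{-s}` for `N ≥ 1`. -/
private lemma tailSum {s : ℝ} (hs0 : 0 < s) (hs1 : s < 1) (N : ℕ) (hN : 1 ≤ N) :
    s * ∑' k : ℕ, ((N : ℝ) + 1 + (k : ℝ)) ^ (-1 - s) ≤ (N : ℝ) ^ (-s) := by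
  have hNpos : (0 : ℝ) < (N : ℝ) := by exact_mod_cast hN
  have hsummable : Summable (fun k : ℕ => ((N : ℝ) + 1 + (k : ℝ)) ^ (-1 - s)) := by
    have h1 : Summable (fun n : ℕ => (n : ℝ) ^ (-1 - s)) :=
      Real.summable_nat_rpow.2 (by linarith)
    have h2 := (summable_nat_add_iff (N + 1)).2 h1
    refine h2.congr fun k => ?_
    congr 1
    push_cast
    ring
  have hterm : ∀ k : ℕ, s * ((N : ℝ) + 1 + (k : ℝ)) ^ (-1 - s) ≤
      ((N : ℝ) + (k : ℝ)) ^ (-s) - ((N : ℝ) + 1 + (k : ℝ)) ^ (-s) := by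
    intro k
    have ha : (0 : ℝ) < (N : ℝ) + (k : ℝ) := by positivity
    have ht := tail_tangent (a := (N : ℝ) + (k : ℝ)) (b := (N : ℝ) + 1 + (k : ℝ))
      ha (by linarith) hs0 hs1
    have hsimp : ((N : ℝ) + 1 + (k : ℝ)) - ((N : ℝ) + (k : ℝ)) = 1 := by ring
    rw [hsimp, mul_one] at ht
    linarith
  rw [← tsum_mul_left]
  refine Summable.tsum_le_of_sum_le (hsummable.mul_left s) ?_
  intro u
  obtain ⟨m, hm⟩ := u.exists_nat_subset_range
  have h1 : ∑ k ∈ u, s * ((N : ℝ) + 1 + (k : ℝ)) ^ (-1 - s) ≤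
      ∑ k ∈ Finset.range m, s * ((N : ℝ) + 1 + (k : ℝ)) ^ (-1 - s) := by
    refine Finset.sum_le_sum_of_subset_of_nonneg hm fun i _ _ => ?_
    have : (0 : ℝ) ≤ ((N : ℝ) + 1 + (i : ℝ)) ^ (-1 - s) := Real.rpow_nonneg (by positivity) _
    positivity
  set g : ℕ → ℝ := fun i => ((N : ℝ) + (i : ℝ)) ^ (-s) with hgdef
  have h2 : ∑ k ∈ Finset.range m, s * ((N : ℝ) + 1 + (k : ℝ)) ^ (-1 - s) ≤
      ∑ k ∈ Finset.range m, (g k - g (k + 1)) := by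
    refine Finset.sum_le_sum fun k _ => ?_
    have hh := hterm k
    have e : g (k + 1) = ((N : ℝ) + 1 + (k : ℝ)) ^ (-s) := by
      rw [hgdef]
      congr 1
      push_cast
      ring
    rw [e, hgdef]
    exact hh
  have h3 : ∑ k ∈ Finset.range m, (g k - g (k + 1)) = g 0 - g m :=
    Finset.sum_range_sub' g m
  have h4 : 0 ≤ g m := Real.rpow_nonneg (by positivity) _
  have h5 : g 0 = (N : ℝ) ^ (-s) := by rw [hgdef]; norm_num
  calc ∑ k ∈ u, s * ((N : ℝ) + 1 + (k : ℝ)) ^ (-1 - s)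
      ≤ ∑ k ∈ Finset.range m, s * ((N : ℝ) + 1 + (k : ℝ)) ^ (-1 - s) := h1
    _ ≤ ∑ k ∈ Finset.range m, (g k - g (k + 1)) := h2
    _ = g 0 - g m := h3
    _ ≤ (N : ℝ) ^ (-s) := by rw [h5] at h3 ⊢; linarith

/-- Key pointwise bound: `∑ n^{-1-s} min(1, n x) ≤ C x^s` for `x ≤ 1`. -/
private lemma keySum {s : ℝ} (hs0 : 0 < s) (hs1 : s < 1) :
    ∃ C : ℝ≥0∞, C ≠ ⊤ ∧ ∀ x : ℝ≥0∞, x ≤ 1 →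
      (∑' n : ℕ, ENNReal.ofReal ((n : ℝ) ^ (-1 - s)) * min 1 ((n : ℝ≥0∞) * x))
        ≤ C * x ^ s := by
  refine ⟨ENNReal.ofReal ((1 - s)⁻¹ * 2 ^ (1 - s) + s⁻¹), ENNReal.ofReal_ne_top, ?_⟩
  intro x hx
  rcases eq_or_ne x 0 with rfl | hx0
  · simp [ENNReal.zero_rpow_of_pos hs0]
  have hxt : x ≠ ⊤ := (lt_of_le_of_lt hx (by norm_num)).ne
  set ξ := x.toReal with hξdef
  have hξ0 : 0 < ξ := ENNReal.toReal_pos hx0 hxt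
  have hξ1 : ξ ≤ 1 := by
    have := ENNReal.toReal_mono (by norm_num : (1 : ℝ≥0∞) ≠ ⊤) hx
    simpa using this
  have hξinv : (1 : ℝ) ≤ ξ⁻¹ := by
    rw [le_inv_comm₀ one_pos hξ0]
    simpa using hξ1
  set N : ℕ := ⌈ξ⁻¹⌉₊ with hNdef
  have hN1 : 1 ≤ N := Nat.one_le_ceil_iff.2 (by positivity)
  have hNξ : ξ⁻¹ ≤ (N : ℝ) := Nat.le_ceil _
  have hN2 : (N : ℝ) ≤ 2 * ξ⁻¹ := by
    have h1 : ((N : ℝ)) < ξ⁻¹ + 1 := Nat.ceil_lt_add_one (by positivity)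
    linarith
  set f : ℕ → ℝ≥0∞ := fun n => ENNReal.ofReal ((n : ℝ) ^ (-1 - s)) * min 1 ((n : ℝ≥0∞) * x)
    with hfdef
  have hxval : x = ENNReal.ofReal ξ := (ENNReal.ofReal_toReal hxt).symm
  have hxs : x ^ s = ENNReal.ofReal (ξ ^ s) := by
    rw [hxval, ENNReal.ofReal_rpow_of_pos hξ0]
  -- head bound
  have hhead : ∑ n ∈ Finset.range (N + 1), f n
      ≤ ENNReal.ofReal ((1 - s)⁻¹ * 2 ^ (1 - s) * ξ ^ s) := by
    have hterm : ∀ n : ℕ, f n ≤ ENNReal.ofReal ((n : ℝ) ^ (-s) * ξ) := by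
      intro n
      have h1 : f n ≤ ENNReal.ofReal ((n : ℝ) ^ (-1 - s)) * ((n : ℝ≥0∞) * x) :=
        mul_le_mul_right (min_le_right _ _) _
      have h2 : ENNReal.ofReal ((n : ℝ) ^ (-1 - s)) * ((n : ℝ≥0∞) * x)
          = ENNReal.ofReal ((n : ℝ) ^ (-1 - s) * (n : ℝ) * ξ) := by
        rw [hxval, ← ENNReal.ofReal_natCast n, ← ENNReal.ofReal_mul (by positivity),
          ← ENNReal.ofReal_mul (by positivity), mul_assoc]
      have h3 : (n : ℝ) ^ (-1 - s) * (n : ℝ) = (n : ℝ) ^ (-s) := by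
        rcases Nat.eq_zero_or_pos n with rfl | hn
        · simp [Real.zero_rpow (show (-1 : ℝ) - s ≠ 0 by linarith),
            Real.zero_rpow (show -s ≠ 0 by linarith)]
        · have hnpos : (0 : ℝ) < n := by exact_mod_cast hn
          rw [← Real.rpow_add_one (ne_of_gt hnpos)]
          congr 1
          ring
      rw [h3] at h2
      exact h1.trans (le_of_eq h2)
    have hsum2 : ∑ n ∈ Finset.range (N + 1), f n
        ≤ ∑ n ∈ Finset.range (N + 1), ENNReal.ofReal ((n : ℝ) ^ (-s) * ξ) :=
      Finset.sum_le_sum fun n _ => hterm n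
    have hsum3 : ∑ n ∈ Finset.range (N + 1), ENNReal.ofReal ((n : ℝ) ^ (-s) * ξ)
        = ENNReal.ofReal (∑ n ∈ Finset.range (N + 1), (n : ℝ) ^ (-s) * ξ) := by
      rw [ENNReal.ofReal_sum_of_nonneg]
      intro i _
      have : (0 : ℝ) ≤ (i : ℝ) ^ (-s) := Real.rpow_nonneg (by positivity) _
      positivity
    have hreal : (∑ n ∈ Finset.range (N + 1), (n : ℝ) ^ (-s) * ξ)
        ≤ (1 - s)⁻¹ * 2 ^ (1 - s) * ξ ^ s := by
      rw [← Finset.sum_mul]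
      have h1s : (0 : ℝ) < 1 - s := by linarith
      have hhs := headSum hs0 hs1 N
      have hsum_le : ∑ n ∈ Finset.range (N + 1), (n : ℝ) ^ (-s)
          ≤ (1 - s)⁻¹ * (N : ℝ) ^ (1 - s) := by
        rw [le_inv_mul_iff₀ h1s]
        exact hhs
      have hNmono : (N : ℝ) ^ (1 - s) ≤ (2 * ξ⁻¹) ^ (1 - s) :=
        Real.rpow_le_rpow (by positivity) hN2 (by linarith)
      have hexp : (2 * ξ⁻¹) ^ (1 - s) * ξ = 2 ^ (1 - s) * ξ ^ s := by
        rw [Real.mul_rpow (by norm_num) (by positivity), Real.inv_rpow hξ0.le,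
          ← Real.rpow_neg hξ0.le]
        have : ξ ^ (-(1 - s)) * ξ = ξ ^ s := by
          nth_rewrite 2 [← Real.rpow_one ξ]
          rw [← Real.rpow_add hξ0]
          norm_num
        rw [mul_assoc, this]
      calc (∑ n ∈ Finset.range (N + 1), (n : ℝ) ^ (-s)) * ξ
          ≤ ((1 - s)⁻¹ * (N : ℝ) ^ (1 - s)) * ξ := by
            apply mul_le_mul_of_nonneg_right hsum_le hξ0.le
        _ ≤ ((1 - s)⁻¹ * (2 * ξ⁻¹) ^ (1 - s)) * ξ := by
            have : (0 : ℝ) ≤ (1 - s)⁻¹ := by positivity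
            apply mul_le_mul_of_nonneg_right _ hξ0.le
            exact mul_le_mul_of_nonneg_left hNmono this
        _ = (1 - s)⁻¹ * ((2 * ξ⁻¹) ^ (1 - s) * ξ) := by ring
        _ = (1 - s)⁻¹ * (2 ^ (1 - s) * ξ ^ s) := by rw [hexp]
        _ = (1 - s)⁻¹ * 2 ^ (1 - s) * ξ ^ s := by ring
    exact hsum2.trans (hsum3.le.trans (ENNReal.ofReal_le_ofReal hreal))
  -- tail bound
  have htail : (∑' k : ℕ, f (k + (N + 1))) ≤ ENNReal.ofReal (s⁻¹ * ξ ^ s) := by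
    have hterm : ∀ k : ℕ, f (k + (N + 1))
        ≤ ENNReal.ofReal (((N : ℝ) + 1 + (k : ℝ)) ^ (-1 - s)) := by
      intro k
      have h1 : f (k + (N + 1)) ≤ ENNReal.ofReal (((k + (N + 1) : ℕ) : ℝ) ^ (-1 - s)) := by
        calc f (k + (N + 1)) ≤ ENNReal.ofReal (((k + (N + 1) : ℕ) : ℝ) ^ (-1 - s)) * 1 :=
              mul_le_mul_right (min_le_left _ _) _
          _ = _ := mul_one _
      have h2 : ((k + (N + 1) : ℕ) : ℝ) = (N : ℝ) + 1 + (k : ℝ) := by push_cast; ring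
      rw [h2] at h1
      exact h1
    have hsummable : Summable (fun k : ℕ => ((N : ℝ) + 1 + (k : ℝ)) ^ (-1 - s)) := by
      have h1 : Summable (fun n : ℕ => (n : ℝ) ^ (-1 - s)) :=
        Real.summable_nat_rpow.2 (by linarith)
      have h2 := (summable_nat_add_iff (N + 1)).2 h1
      refine h2.congr fun k => ?_
      congr 1
      push_cast
      ring
    calc (∑' k : ℕ, f (k + (N + 1)))
        ≤ ∑' k : ℕ, ENNReal.ofReal (((N : ℝ) + 1 + (k : ℝ)) ^ (-1 - s)) :=
          ENNReal.tsum_le_tsum hterm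
      _ = ENNReal.ofReal (∑' k : ℕ, ((N : ℝ) + 1 + (k : ℝ)) ^ (-1 - s)) :=
          (ENNReal.ofReal_tsum_of_nonneg
            (fun k => Real.rpow_nonneg (by positivity) _) hsummable).symm
      _ ≤ ENNReal.ofReal (s⁻¹ * ξ ^ s) := by
          apply ENNReal.ofReal_le_ofReal
          have hts := tailSum hs0 hs1 N hN1
          have hNs : (N : ℝ) ^ (-s) ≤ ξ ^ s := by
            have hξs : ξ⁻¹ ^ s ≤ (N : ℝ) ^ s :=
              Real.rpow_le_rpow (by positivity) hNξ hs0.le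
            have hNspos : (0 : ℝ) < (N : ℝ) ^ s := by
              have : (0 : ℝ) < (N : ℝ) := by exact_mod_cast hN1
              exact Real.rpow_pos_of_pos this s
            rw [Real.rpow_neg (by positivity)]
            rw [Real.inv_rpow hξ0.le, ← Real.rpow_neg hξ0.le] at hξs
            have hξspos : (0 : ℝ) < ξ ^ (-s) := Real.rpow_pos_of_pos hξ0 _
            have := inv_anti₀ hξspos hξs
            rwa [← Real.rpow_neg hξ0.le, neg_neg] at this
          have hsinv : (0 : ℝ) < s⁻¹ := by positivity
          calc (∑' k : ℕ, ((N : ℝ) + 1 + (k : ℝ)) ^ (-1 - s))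
              ≤ s⁻¹ * (N : ℝ) ^ (-s) := by
                rw [le_inv_mul_iff₀ hs0]
                exact hts
            _ ≤ s⁻¹ * ξ ^ s := mul_le_mul_of_nonneg_left hNs hsinv.le
  -- combine
  classical
  set f1 : ℕ → ℝ≥0∞ := fun n => if n < N + 1 then f n else 0 with hf1def
  set f2 : ℕ → ℝ≥0∞ := fun n => if n < N + 1 then 0 else f n with hf2def
  have hf12 : ∀ n, f n = f1 n + f2 n := by
    intro n
    by_cases h : n < N + 1 <;> simp only [hf1def, hf2def, h, ↓reduceIte, add_zero, zero_add]
  have e1 : ∑' n, f1 n = ∑ n ∈ Finset.range (N + 1), f n := by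
    rw [tsum_eq_sum (s := Finset.range (N + 1)) (by
      intro n hn
      have h : ¬ n < N + 1 := fun h => hn (Finset.mem_range.2 h)
      simp only [hf1def, h, ↓reduceIte])]
    exact Finset.sum_congr rfl fun n hn => by simp only [hf1def, Finset.mem_range.1 hn, ↓reduceIte]
  have hinj : Function.Injective (fun k : ℕ => k + (N + 1)) := add_left_injective (N + 1)
  have hrange : Function.support f2 ⊆ Set.range (fun k : ℕ => k + (N + 1)) := by
    intro x hx
    by_contra hc
    apply hx
    have hlt : x < N + 1 := by
      by_contra h
      exact hc ⟨x - (N + 1), by simp; omega⟩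
    simp only [hf2def, hlt, ↓reduceIte]
  have e2 : ∑' n, f2 n = ∑' k : ℕ, f2 (k + (N + 1)) :=
    (Function.Injective.tsum_eq hinj hrange).symm
  have e3 : ∀ k : ℕ, f2 (k + (N + 1)) = f (k + (N + 1)) := by
    intro k
    have : ¬ (k + (N + 1) < N + 1) := by omega
    simp only [hf2def, this, ↓reduceIte]
  calc (∑' n : ℕ, f n)
      = (∑' n, f1 n) + ∑' n, f2 n := by rw [← ENNReal.tsum_add]; exact tsum_congr hf12
    _ = (∑ n ∈ Finset.range (N + 1), f n) + ∑' k : ℕ, f (k + (N + 1)) := by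
        rw [e1, e2, tsum_congr e3]
    _ ≤ ENNReal.ofReal ((1 - s)⁻¹ * 2 ^ (1 - s) * ξ ^ s) + ENNReal.ofReal (s⁻¹ * ξ ^ s) :=
        add_le_add hhead htail
    _ = ENNReal.ofReal (((1 - s)⁻¹ * 2 ^ (1 - s) + s⁻¹) * ξ ^ s) := by
        rw [← ENNReal.ofReal_add]
        · ring_nf
        · have h1s : (0 : ℝ) < 1 - s := by linarith
          positivity
        · positivity
    _ = ENNReal.ofReal ((1 - s)⁻¹ * 2 ^ (1 - s) + s⁻¹) * x ^ s := by
        rw [hxs, ← ENNReal.ofReal_mul]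
        have h1s : (0 : ℝ) < 1 - s := by linarith
        positivity

/-- A `biSup` over a finset of nonnegative reals equals the coercion of the
`Finset.sup` of the `toNNReal`s. -/
private lemma iSup_finset_eq (f : ℕ → ℝ) (hf : ∀ k, 0 ≤ f k) (s : Finset ℕ) :
    (⨆ k ∈ s, f k) = ((s.sup fun k => (f k).toNNReal : ℝ≥0) : ℝ) := by
  apply le_antisymm
  · refine Real.iSup_le (fun k => ?_) (by positivity)
    refine Real.iSup_le (fun hk => ?_) (by positivity)
    rw [← Real.coe_toNNReal (f k) (hf k)]
    exact_mod_cast Finset.le_sup (f := fun k => (f k).toNNReal) hk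
  · have hbnn : 0 ≤ ⨆ k ∈ s, f k :=
      Real.iSup_nonneg fun k => Real.iSup_nonneg fun _ => hf k
    have hbdd : ∀ k ∈ s, f k ≤ ⨆ k ∈ s, f k := by
      intro k hk
      have h1 : (⨆ _ : k ∈ s, f k) = f k := ciSup_pos hk
      rw [← h1]
      refine le_ciSup (f := fun k => ⨆ _ : k ∈ s, f k) ?_ k
      refine ⟨((s.sup fun k => (f k).toNNReal : ℝ≥0) : ℝ), ?_⟩
      rintro y ⟨j, rfl⟩
      refine Real.iSup_le (fun hj => ?_) (by positivity)
      rw [← Real.coe_toNNReal (f j) (hf j)]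
      exact_mod_cast Finset.le_sup (f := fun k => (f k).toNNReal) hj
    rw [← Real.coe_toNNReal (⨆ k ∈ s, f k) hbnn]
    rw [NNReal.coe_le_coe]
    refine Finset.sup_le fun k hk => ?_
    exact Real.toNNReal_le_toNNReal (hbdd k hk)

private lemma measurable_finsup {Ω : Type*} [MeasurableSpace Ω] (X : ℕ → Ω → ℝ)
    (hX : ∀ n, Measurable (X n)) (s : Finset ℕ) :
    Measurable fun ω => (s.sup fun k => (X k ω).toNNReal : ℝ≥0) := by
  classical
  induction s using Finset.induction_on with
  | empty => simpa using measurable_const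
  | insert _ _ h ih =>
    simp only [Finset.sup_insert]
    exact Measurable.sup (measurable_real_toNNReal.comp (hX _)) ih

theorem stmt_8 {Ω : Type*} [MeasurableSpace Ω] (μ : Measure Ω) [IsProbabilityMeasure μ]
    (X : ℕ → Ω → ℝ) (hXmeas : ∀ n, Measurable (X n))
    (hindep : iIndepFun X μ)
    (hident : ∀ n, IdentDistrib (X n) (X 0) μ μ)
    (hXnonneg : ∀ n ω, 0 ≤ X n ω) (p : ℝ) (hp : 1 < p)
    (hint : ∫⁻ t in Set.Ioi (0 : ℝ), (μ {ω | t < X 0 ω}) ^ (1 / p) < ⊤) :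
    Summable (fun n : ℕ => (n : ℝ) ^ (-(1 : ℝ) - 1 / p) *
      ∫ ω, (⨆ k ∈ Finset.Icc 1 n, X k ω) ∂μ) := by
  have hp0 : (0 : ℝ) < p := lt_trans one_pos hp
  set s : ℝ := 1 / p with hsdef
  have hs0 : 0 < s := by positivity
  have hs1 : s < 1 := by
    rw [hsdef, div_lt_one hp0]; exact hp
  set M : ℕ → Ω → ℝ := fun n ω => ⨆ k ∈ Finset.Icc 1 n, X k ω with hMdef
  have hMeq : ∀ n ω, M n ω =
      (((Finset.Icc 1 n).sup fun k => (X k ω).toNNReal : ℝ≥0) : ℝ) := fun n ω =>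
    iSup_finset_eq (fun k => X k ω) (fun k => hXnonneg k ω) (Finset.Icc 1 n)
  have hMmeas : ∀ n, Measurable (M n) := by
    intro n
    rw [show M n = fun ω => (((Finset.Icc 1 n).sup fun k => (X k ω).toNNReal : ℝ≥0) : ℝ) from
      funext (hMeq n)]
    exact measurable_coe_nnreal_real.comp (measurable_finsup X hXmeas _)
  have hMnn : ∀ n ω, 0 ≤ M n ω := by
    intro n ω
    exact Real.iSup_nonneg fun k => Real.iSup_nonneg fun _ => hXnonneg k ω
  set G : ℝ → ℝ≥0∞ := fun t => μ {ω | t < X 0 ω} with hGdef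
  set A : ℕ → ℝ≥0∞ := fun n => ∫⁻ ω, ENNReal.ofReal (M n ω) ∂μ with hAdef
  have hlayer : ∀ n, A n = ∫⁻ t in Set.Ioi (0 : ℝ), μ {ω | t < M n ω} := fun n =>
    lintegral_eq_lintegral_meas_lt μ (Filter.Eventually.of_forall (hMnn n))
      (hMmeas n).aemeasurable
  have hFmeas : ∀ n, Measurable (fun t : ℝ => μ {ω | t < M n ω}) := by
    intro n
    have hanti : Antitone (fun t : ℝ => μ {ω | t < M n ω}) := fun t₁ t₂ h =>
      measure_mono (fun ω hω => lt_of_le_of_lt h hω)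
    exact hanti.measurable
  have hub : ∀ (n : ℕ), ∀ t ∈ Set.Ioi (0 : ℝ), μ {ω | t < M n ω} ≤ min 1 ((n : ℝ≥0∞) * G t) := by
    intro n t ht
    refine le_min prob_le_one ?_
    have hsub : {ω | t < M n ω} ⊆ ⋃ k ∈ Finset.Icc 1 n, {ω | t < X k ω} := by
      intro ω hω
      rw [Set.mem_setOf_eq, hMeq] at hω
      have ht' : t.toNNReal < (Finset.Icc 1 n).sup fun k => (X k ω).toNNReal := by
        rw [Real.toNNReal_lt_iff_lt_coe (le_of_lt ht)]
        exact hω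
      obtain ⟨k, hk, hlt⟩ := Finset.lt_sup_iff.1 ht'
      have : t < X k ω := (Real.toNNReal_lt_toNNReal_iff'.1 hlt).1
      exact Set.mem_biUnion hk this
    calc μ {ω | t < M n ω} ≤ μ (⋃ k ∈ Finset.Icc 1 n, {ω | t < X k ω}) := measure_mono hsub
      _ ≤ ∑ k ∈ Finset.Icc 1 n, μ {ω | t < X k ω} := measure_biUnion_finset_le _ _
      _ = ∑ k ∈ Finset.Icc 1 n, G t := by
          refine Finset.sum_congr rfl fun k _ => ?_
          exact (hident k).measure_mem_eq measurableSet_Ioi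
      _ = (n : ℝ≥0∞) * G t := by
          rw [Finset.sum_const, Nat.card_Icc]
          simp [nsmul_eq_mul]
  obtain ⟨C, hC, hkey⟩ := keySum hs0 hs1
  have hmain : (∑' n : ℕ, ENNReal.ofReal ((n : ℝ) ^ (-1 - s)) * A n) ≠ ⊤ := by
    have h1 : ∀ n : ℕ, ENNReal.ofReal ((n : ℝ) ^ (-1 - s)) * A n
        = ∫⁻ t in Set.Ioi (0 : ℝ), ENNReal.ofReal ((n : ℝ) ^ (-1 - s)) * μ {ω | t < M n ω} := by
      intro n
      rw [hlayer n, ← lintegral_const_mul' _ _ ENNReal.ofReal_ne_top]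
    have h2 : ∀ n : ℕ, AEMeasurable
        (fun t : ℝ => ENNReal.ofReal ((n : ℝ) ^ (-1 - s)) * μ {ω | t < M n ω})
        (volume.restrict (Set.Ioi (0 : ℝ))) := fun n =>
      ((hFmeas n).const_mul _).aemeasurable
    have hchain : (∑' n : ℕ, ENNReal.ofReal ((n : ℝ) ^ (-1 - s)) * A n)
        ≤ C * ∫⁻ t in Set.Ioi (0 : ℝ), (G t) ^ s := by
      calc (∑' n : ℕ, ENNReal.ofReal ((n : ℝ) ^ (-1 - s)) * A n)
          = ∑' n : ℕ, ∫⁻ t in Set.Ioi (0 : ℝ),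
              ENNReal.ofReal ((n : ℝ) ^ (-1 - s)) * μ {ω | t < M n ω} := tsum_congr h1
        _ = ∫⁻ t in Set.Ioi (0 : ℝ), ∑' n : ℕ,
              ENNReal.ofReal ((n : ℝ) ^ (-1 - s)) * μ {ω | t < M n ω} :=
            (lintegral_tsum h2).symm
        _ ≤ ∫⁻ t in Set.Ioi (0 : ℝ), C * (G t) ^ s := by
            refine lintegral_mono_ae ?_
            filter_upwards [ae_restrict_mem measurableSet_Ioi] with t ht
            calc (∑' n : ℕ, ENNReal.ofReal ((n : ℝ) ^ (-1 - s)) * μ {ω | t < M n ω})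
                ≤ ∑' n : ℕ, ENNReal.ofReal ((n : ℝ) ^ (-1 - s)) * min 1 ((n : ℝ≥0∞) * G t) :=
                  ENNReal.tsum_le_tsum fun n => mul_le_mul_right (hub n t ht) _
              _ ≤ C * (G t) ^ s := hkey (G t) prob_le_one
        _ = C * ∫⁻ t in Set.Ioi (0 : ℝ), (G t) ^ s := lintegral_const_mul' _ _ hC
    refine ne_top_of_le_ne_top ?_ hchain
    exact (ENNReal.mul_lt_top hC.lt_top hint).ne
  have hsummable := ENNReal.summable_toReal hmain
  refine hsummable.congr fun n => ?_
  rw [ENNReal.toReal_mul, ENNReal.toReal_ofReal (Real.rpow_nonneg (Nat.cast_nonneg n) _)]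
  have hint_eq : ∫ ω, M n ω ∂μ = (A n).toReal := by
    rw [hAdef]
    exact integral_eq_lintegral_of_nonneg_ae (Filter.Eventually.of_forall (hMnn n))
      (hMmeas n).aestronglyMeasurable
  have hexp : (-1 : ℝ) - s = -(1 : ℝ) - 1 / p := by rw [hsdef]
  rw [hexp, ← hint_eq]
end

section
/- Let 1 ≤ q < p < 2 and let X be a real-valued random variable satisfying ∫_0^∞ P(|X|^q > t)^{q/p} dt < ∞. For n ≥ 1, let u_n = inf{t : P(|X| > t) < 1/n}. Then ∑_{n=1}^∞ n^{-q/p} ∫_{u_n^q}^∞ P(|X|^q > t) dt < ∞. -/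
open MeasureTheory ProbabilityTheory
open scoped ENNReal NNReal

private lemma bern_aux {σ x : ℝ} (hσ0 : 0 < σ) (hσ1 : σ ≤ 1) (hx : 0 ≤ x) :
    σ * (x + 1) ^ (σ - 1) ≤ (x + 1) ^ σ - x ^ σ := by
  have hy : (0:ℝ) < x + 1 := by linarith
  have hs : (-1:ℝ) ≤ -(1 / (x + 1)) := by
    rw [neg_le_neg_iff]
    exact div_le_one_of_le₀ (by linarith) hy.le
  have hb := rpow_one_add_le_one_add_mul_self hs hσ0.le hσ1
  have h1 : (1 : ℝ) + -(1 / (x + 1)) = x / (x + 1) := by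
    field_simp
    ring
  rw [h1] at hb
  -- hb : (x / (x+1)) ^ σ ≤ 1 + σ * -(1/(x+1))
  have h2 : (x / (x + 1)) ^ σ = x ^ σ / (x + 1) ^ σ := Real.div_rpow hx hy.le σ
  have h3 : (x + 1) ^ (σ - 1) = (x + 1) ^ σ / (x + 1) := Real.rpow_sub_one hy.ne' σ
  have hpow : (0:ℝ) < (x + 1) ^ σ := Real.rpow_pos_of_pos hy σ
  rw [h2] at hb
  -- multiply both sides by (x+1)^σ
  have hb' : x ^ σ ≤ (1 + σ * -(1 / (x + 1))) * (x + 1) ^ σ :=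
    (div_le_iff₀ hpow).1 hb
  rw [h3]
  have hexp : (1 + σ * -(1 / (x + 1))) * (x + 1) ^ σ
      = (x + 1) ^ σ - σ * ((x + 1) ^ σ / (x + 1)) := by
    field_simp
    ring
  rw [hexp] at hb'
  linarith

private lemma sum_rpow_aux {r : ℝ} (hr0 : 0 < r) (hr1 : r < 1) (N : ℕ) :
    ∑ n ∈ Finset.range N, ((n : ℝ) + 1) ^ (-r) ≤ (N : ℝ) ^ (1 - r) / (1 - r) := by
  induction N with
  | zero => simp [Real.zero_rpow (by linarith : (1:ℝ) - r ≠ 0)]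
  | succ N ih =>
    rw [Finset.sum_range_succ]
    have key := bern_aux (σ := 1 - r) (x := (N:ℝ)) (by linarith) (by linarith) (Nat.cast_nonneg N)
    have hσ : (0:ℝ) < 1 - r := by linarith
    have h1 : ((N:ℝ) + 1) ^ (-r) ≤ (((N:ℝ) + 1) ^ (1 - r) - (N:ℝ) ^ (1 - r)) / (1 - r) := by
      rw [le_div_iff₀ hσ]
      have : (1 - r - 1) = -r := by ring
      calc ((N:ℝ) + 1) ^ (-r) * (1 - r) = (1 - r) * ((N:ℝ) + 1) ^ (1 - r - 1) := by
            rw [this]; ring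
        _ ≤ ((N:ℝ) + 1) ^ (1 - r) - (N:ℝ) ^ (1 - r) := key
    have hcast : ((N + 1 : ℕ) : ℝ) = (N : ℝ) + 1 := by push_cast; ring
    rw [hcast]
    calc ∑ n ∈ Finset.range N, ((n:ℝ) + 1) ^ (-r) + ((N:ℝ) + 1) ^ (-r)
        ≤ (N:ℝ) ^ (1 - r) / (1 - r)
          + (((N:ℝ) + 1) ^ (1 - r) - (N:ℝ) ^ (1 - r)) / (1 - r) := add_le_add ih h1
      _ = ((N:ℝ) + 1) ^ (1 - r) / (1 - r) := by ring

theorem stmt_9 {Ω : Type*} [MeasurableSpace Ω] (μ : Measure Ω) [IsProbabilityMeasure μ]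
    (X : Ω → ℝ) (hXmeas : Measurable X) (p q : ℝ) (hq : 1 ≤ q) (hqp : q < p) (hp : p < 2)
    (hint : ∫⁻ t in Set.Ioi (0 : ℝ), (μ {ω | t < |X ω| ^ q}) ^ (q / p) < ⊤)
    (u : ℕ → ℝ)
    (hu : ∀ n : ℕ, 1 ≤ n →
      u n = sInf {t : ℝ | μ {ω | t < |X ω|} < (n : ENNReal)⁻¹}) :
    (∑' n : ℕ, ((n + 1 : ENNReal)) ^ (-(q / p)) *
      ∫⁻ t in Set.Ioi (u (n + 1) ^ q), μ {ω | t < |X ω| ^ q}) < ⊤ := by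
  have hq0 : (0:ℝ) < q := lt_of_lt_of_le one_pos hq
  have hp0 : (0:ℝ) < p := lt_trans hq0 hqp
  set r : ℝ := q / p with hrdef
  have hr0 : 0 < r := div_pos hq0 hp0
  have hr1 : r < 1 := (div_lt_one hp0).2 hqp
  set G : ℝ → ℝ≥0∞ := fun t => μ {ω | t < |X ω| ^ q} with hGdef
  have hGanti : Antitone G := fun s t hst =>
    measure_mono (fun ω hω => lt_of_le_of_lt hst hω)
  have hGmeas : Measurable G := hGanti.measurable
  have hG1 : ∀ t, G t ≤ 1 := fun t => prob_le_one
  -- nonemptiness of the quantile sets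
  set S : ℕ → Set ℝ := fun n => {t : ℝ | μ {ω | t < |X ω|} < (n : ENNReal)⁻¹} with hSdef
  have htail : Filter.Tendsto (fun k : ℕ => μ {ω | (k:ℝ) < |X ω|}) Filter.atTop (nhds 0) := by
    have hmeas : ∀ k : ℕ, NullMeasurableSet {ω | (k:ℝ) < |X ω|} μ := by
      intro k
      exact (hXmeas.abs measurableSet_Ioi).nullMeasurableSet
    have hanti : Antitone (fun k : ℕ => {ω | (k:ℝ) < |X ω|}) := by
      intro i j hij ω hω
      exact lt_of_le_of_lt (Nat.cast_le.mpr hij : (i:ℝ) ≤ (j:ℝ)) hω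
    have h := tendsto_measure_iInter_atTop (μ := μ) hmeas hanti ⟨0, measure_ne_top μ _⟩
    have hempty : (⋂ k : ℕ, {ω | (k:ℝ) < |X ω|}) = ∅ := by
      ext ω
      simp only [Set.mem_iInter, Set.mem_setOf_eq, Set.mem_empty_iff_false, iff_false, not_forall,
        not_lt]
      obtain ⟨k, hk⟩ := exists_nat_gt |X ω|
      exact ⟨k, hk.le⟩
    rw [hempty, measure_empty] at h
    exact h
  have hSne : ∀ n : ℕ, (S (n + 1)).Nonempty := by
    intro n
    have hpos : (0 : ℝ≥0∞) < ((n + 1 : ℕ) : ENNReal)⁻¹ := by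
      simp [ENNReal.inv_pos]
    obtain ⟨k, hk⟩ := (htail.eventually (gt_mem_nhds hpos)).exists
    exact ⟨(k:ℝ), hk⟩
  have hSnonneg : ∀ n : ℕ, ∀ b ∈ S (n + 1), (0:ℝ) ≤ b := by
    intro n b hb
    by_contra hb0
    push_neg at hb0
    have : {ω | b < |X ω|} = Set.univ := by
      ext ω; simp only [Set.mem_setOf_eq, Set.mem_univ, iff_true]
      exact lt_of_lt_of_le hb0 (abs_nonneg _)
    rw [hSdef] at hb
    simp only [Set.mem_setOf_eq, this, measure_univ] at hb
    have h1 : ((n + 1 : ℕ) : ENNReal)⁻¹ ≤ 1 :=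
      ENNReal.inv_le_one.2 (by exact_mod_cast Nat.succ_le_succ (Nat.zero_le n))
    exact absurd (lt_of_lt_of_le hb h1) (lt_irrefl 1)
  have huS : ∀ n : ℕ, u (n + 1) = sInf (S (n + 1)) := fun n =>
    hu (n + 1) (Nat.le_add_left 1 n)
  have hunonneg : ∀ n : ℕ, 0 ≤ u (n + 1) := by
    intro n
    rw [huS n]
    exact le_csInf (hSne n) (hSnonneg n)
  set a : ℕ → ℝ := fun n => u (n + 1) ^ q with hadef
  have hanonneg : ∀ n, 0 ≤ a n := fun n => Real.rpow_nonneg (hunonneg n) q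
  -- Claim A : for t > a n, G t ≤ (n+1)⁻¹
  have claimA : ∀ n : ℕ, ∀ t : ℝ, a n < t → G t ≤ ((n + 1 : ℕ) : ENNReal)⁻¹ := by
    intro n t hat
    have ht0 : (0:ℝ) ≤ t := le_of_lt (lt_of_le_of_lt (hanonneg n) hat)
    have hs : u (n + 1) < t ^ q⁻¹ := by
      have h := Real.rpow_lt_rpow (Real.rpow_nonneg (hunonneg n) q) hat
        (inv_pos.2 hq0)
      rwa [Real.rpow_rpow_inv (hunonneg n) hq0.ne'] at h
    obtain ⟨v, hvS, hv⟩ := exists_lt_of_csInf_lt (hSne n) ((huS n) ▸ hs)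
    have hsub : {ω | t < |X ω| ^ q} ⊆ {ω | v < |X ω|} := by
      intro ω hω
      simp only [Set.mem_setOf_eq] at hω ⊢
      have h := Real.rpow_lt_rpow ht0 hω (inv_pos.2 hq0)
      rw [Real.rpow_rpow_inv (abs_nonneg _) hq0.ne'] at h
      exact lt_trans hv h
    exact le_of_lt (lt_of_le_of_lt (measure_mono hsub) hvS)
  -- the summand functions
  set c : ℕ → ℝ≥0∞ := fun n => ((n : ℝ≥0∞) + 1) ^ (-r) with hcdef
  set f : ℕ → ℝ → ℝ≥0∞ := fun n => (Set.Ioi (a n)).indicator (fun t => c n * G t)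
    with hfdef
  set K : ℝ≥0∞ := ENNReal.ofReal ((2:ℝ) ^ (1 - r) / (1 - r)) with hKdef
  have hσ : (0:ℝ) < 1 - r := by linarith
  -- pointwise bound
  have hpt : ∀ t : ℝ, ∑' n, f n t ≤ K * (Set.Ioi (0:ℝ)).indicator (fun t => G t ^ r) t := by
    intro t
    rcases le_or_gt t 0 with ht | ht
    · have hz : ∀ n, f n t = 0 := by
        intro n
        apply Set.indicator_of_notMem
        simp only [Set.mem_Ioi, not_lt]
        exact le_trans ht (hanonneg n)
      rw [tsum_congr hz, tsum_zero]
      exact zero_le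
    rcases eq_or_ne (G t) 0 with hg | hg
    · have hz : ∀ n, f n t = 0 := by
        intro n
        show (Set.Ioi (a n)).indicator (fun s => c n * G s) t = 0
        by_cases h : t ∈ Set.Ioi (a n)
        · rw [Set.indicator_of_mem h]; simp [hg]
        · exact Set.indicator_of_notMem h _
      rw [tsum_congr hz, tsum_zero]
      exact zero_le
    · set g : ℝ≥0∞ := G t with hgdef
      have hgtop : g ≠ ⊤ := (lt_of_le_of_lt (hG1 t) ENNReal.one_lt_top).ne
      have hinvtop : g⁻¹ ≠ ⊤ := ENNReal.inv_ne_top.2 hg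
      set y : ℝ := g⁻¹.toReal with hydef
      have hy1 : (1:ℝ) ≤ y := by
        have h1 : (1:ℝ≥0∞) ≤ g⁻¹ := ENNReal.one_le_inv.2 (hG1 t)
        have h2 := ENNReal.toReal_mono hinvtop h1
        rwa [ENNReal.toReal_one] at h2
      set N : ℕ := ⌈y⌉₊ with hNdef
      have hN : ∀ n : ℕ, a n < t → n + 1 ≤ N := by
        intro n han
        have h1 : ((n + 1 : ℕ) : ℝ≥0∞) ≤ g⁻¹ := by
          rw [← inv_inv ((n + 1 : ℕ) : ℝ≥0∞)]
          exact ENNReal.inv_le_inv.2 (claimA n t han)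
        have h2 : ((n + 1 : ℕ) : ℝ) ≤ y := by
          have h3 := ENNReal.toReal_mono hinvtop h1
          rwa [ENNReal.toReal_natCast] at h3
        exact_mod_cast h2.trans (Nat.le_ceil y)
      have hNy : (N : ℝ) ≤ 2 * y := by
        have := Nat.ceil_lt_add_one (le_trans zero_le_one hy1)
        linarith
      -- the tsum is a finite sum
      have hsum : ∑' n, f n t = ∑ n ∈ Finset.range N, f n t := by
        apply tsum_eq_sum
        intro n hn
        show (Set.Ioi (a n)).indicator (fun s => c n * G s) t = 0
        apply Set.indicator_of_notMem
        simp only [Set.mem_Ioi, not_lt]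
        by_contra h
        push_neg at h
        exact hn (Finset.mem_range.2 (Nat.lt_of_succ_le (hN n h)))
      rw [hsum]
      have hstep1 : ∑ n ∈ Finset.range N, f n t ≤ (∑ n ∈ Finset.range N, c n) * g := by
        rw [Finset.sum_mul]
        apply Finset.sum_le_sum
        intro n _
        show (Set.Ioi (a n)).indicator (fun s => c n * G s) t ≤ c n * G t
        exact Set.indicator_apply_le' (fun _ => le_rfl) (fun _ => zero_le)
      have hstep2 : (∑ n ∈ Finset.range N, c n)
          ≤ ENNReal.ofReal ((N:ℝ) ^ (1 - r) / (1 - r)) := by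
        have hc : ∀ n : ℕ, c n = ENNReal.ofReal (((n:ℝ) + 1) ^ (-r)) := by
          intro n
          have h1 : ((n : ℝ≥0∞) + 1) = ENNReal.ofReal ((n:ℝ) + 1) := by
            rw [ENNReal.ofReal_add (Nat.cast_nonneg n) zero_le_one]
            simp
          rw [hcdef]
          simp only
          rw [h1, ← ENNReal.ofReal_rpow_of_pos (by positivity)]
        calc ∑ n ∈ Finset.range N, c n
            = ∑ n ∈ Finset.range N, ENNReal.ofReal (((n:ℝ) + 1) ^ (-r)) := by
              exact Finset.sum_congr rfl (fun n _ => hc n)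
          _ = ENNReal.ofReal (∑ n ∈ Finset.range N, ((n:ℝ) + 1) ^ (-r)) :=
              (ENNReal.ofReal_sum_of_nonneg (fun n _ => by positivity)).symm
          _ ≤ ENNReal.ofReal ((N:ℝ) ^ (1 - r) / (1 - r)) :=
              ENNReal.ofReal_le_ofReal (sum_rpow_aux hr0 hr1 N)
      have hstep3 : ENNReal.ofReal ((N:ℝ) ^ (1 - r) / (1 - r)) * g ≤ K * g ^ r := by
        have hNr : ((N:ℝ)) ^ (1 - r) / (1 - r) ≤ (2:ℝ) ^ (1 - r) / (1 - r) * y ^ (1 - r) := by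
          have h1 : ((N:ℝ)) ^ (1 - r) ≤ (2 * y) ^ (1 - r) :=
            Real.rpow_le_rpow (Nat.cast_nonneg N) hNy hσ.le
          have h2 : ((2:ℝ) * y) ^ (1 - r) = (2:ℝ) ^ (1 - r) * y ^ (1 - r) :=
            Real.mul_rpow (by norm_num) (by linarith)
          rw [h2] at h1
          calc ((N:ℝ)) ^ (1 - r) / (1 - r)
              ≤ ((2:ℝ) ^ (1 - r) * y ^ (1 - r)) / (1 - r) := by gcongr
            _ = (2:ℝ) ^ (1 - r) / (1 - r) * y ^ (1 - r) := by ring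
        have h3 : ENNReal.ofReal ((N:ℝ) ^ (1 - r) / (1 - r))
            ≤ K * ENNReal.ofReal (y ^ (1 - r)) := by
          rw [hKdef, ← ENNReal.ofReal_mul (by positivity)]
          exact ENNReal.ofReal_le_ofReal hNr
        have h4 : ENNReal.ofReal (y ^ (1 - r)) = (g⁻¹) ^ (1 - r) := by
          rw [hydef, ← ENNReal.ofReal_rpow_of_pos (by
            exact lt_of_lt_of_le zero_lt_one hy1), ENNReal.ofReal_toReal hinvtop]
        have h5 : (g⁻¹) ^ (1 - r) * g = g ^ r := by
          rw [ENNReal.inv_rpow, ← ENNReal.rpow_neg]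
          have : g ^ r = g ^ (-(1 - r) + 1) := by norm_num
          rw [this, ENNReal.rpow_add _ _ hg hgtop, ENNReal.rpow_one]
        calc ENNReal.ofReal ((N:ℝ) ^ (1 - r) / (1 - r)) * g
            ≤ K * ENNReal.ofReal (y ^ (1 - r)) * g := mul_le_mul_left h3 g
          _ = K * ((g⁻¹) ^ (1 - r) * g) := by rw [h4, mul_assoc]
          _ = K * g ^ r := by rw [h5]
      have hind : (Set.Ioi (0:ℝ)).indicator (fun t => G t ^ r) t = g ^ r :=
        Set.indicator_of_mem ht _
      rw [hind]
      calc ∑ n ∈ Finset.range N, f n t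
          ≤ (∑ n ∈ Finset.range N, c n) * g := hstep1
        _ ≤ ENNReal.ofReal ((N:ℝ) ^ (1 - r) / (1 - r)) * g := mul_le_mul_left hstep2 g
        _ ≤ K * g ^ r := hstep3
  -- measurability of the summands
  have hfmeas : ∀ n : ℕ, AEMeasurable (f n) (volume : Measure ℝ) := by
    intro n
    rw [hfdef]
    exact ((hGmeas.const_mul (c n)).indicator measurableSet_Ioi).aemeasurable
  have key : (∑' n : ℕ, c n * ∫⁻ t in Set.Ioi (a n), G t) < ⊤ := by
    have h1 : (∑' n : ℕ, c n * ∫⁻ t in Set.Ioi (a n), G t) = ∫⁻ t, ∑' n, f n t := by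
      calc (∑' n : ℕ, c n * ∫⁻ t in Set.Ioi (a n), G t)
          = ∑' n, ∫⁻ t, f n t := by
            refine tsum_congr fun n => ?_
            simp only [hfdef]
            rw [lintegral_indicator measurableSet_Ioi, lintegral_const_mul (c n) hGmeas]
        _ = ∫⁻ t, ∑' n, f n t := (lintegral_tsum hfmeas).symm
    rw [h1]
    calc ∫⁻ t, ∑' n, f n t
        ≤ ∫⁻ t, K * (Set.Ioi (0:ℝ)).indicator (fun t => G t ^ r) t := lintegral_mono hpt
      _ = K * ∫⁻ t, (Set.Ioi (0:ℝ)).indicator (fun t => G t ^ r) t :=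
          lintegral_const_mul K ((hGmeas.pow_const r).indicator measurableSet_Ioi)
      _ = K * ∫⁻ t in Set.Ioi (0:ℝ), G t ^ r := by
          rw [lintegral_indicator measurableSet_Ioi]
      _ < ⊤ := ENNReal.mul_lt_top ENNReal.ofReal_lt_top hint
  exact key
end

section
/- Let q > 0 and let {a_n; n ≥ 1} be nonnegative reals with ∑_{n=1}^∞ a_n < ∞; set b_n = ∑_{k=n}^∞ a_k. Let {V_n; n ≥ 1} be independent symmetric real-valued random variables and set α = 2^{1-q} if 0 < q ≤ 1 and α = 1 if q > 1. Then for all t > 0, P( sup_{n≥1} b_n |V_n|^q > t ) ≤ 2 P( ∑_{n=1}^∞ a_n |∑_{i=1}^n V_i|^q > t/α ). -/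
open MeasureTheory ProbabilityTheory

section stmt11aux
open Set Function

lemma stmt11_two_rpow {q : ℝ} : (2:ℝ) ^ (1 - q) * (2:ℝ) ^ q = 2 := by
  rw [← Real.rpow_add (by norm_num : (0:ℝ) < 2)]
  norm_num

lemma stmt11_core {q α : ℝ} (hq : 0 < q)
    (hα : α = if q ≤ 1 then (2 : ℝ) ^ (1 - q) else 1) (u v : ℝ) :
    (2 / α) * (|u - v| / 2) ^ q ≤ |u| ^ q + |v| ^ q := by
  have habs : |u - v| / 2 ≤ (|u| + |v|) / 2 := by
    linarith [abs_sub u v]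
  have h0 : (0:ℝ) ≤ |u - v| / 2 := by positivity
  have hmono : (|u - v| / 2) ^ q ≤ ((|u| + |v|) / 2) ^ q :=
    Real.rpow_le_rpow h0 habs hq.le
  set x : NNReal := |u|.toNNReal with hxdef
  set y : NNReal := |v|.toNNReal with hydef
  have hx : ((x : ℝ)) = |u| := Real.coe_toNNReal _ (abs_nonneg u)
  have hy : ((y : ℝ)) = |v| := Real.coe_toNNReal _ (abs_nonneg v)
  by_cases h1 : q ≤ 1
  · rw [if_pos h1] at hα
    have hαpos : 0 < α := hα ▸ Real.rpow_pos_of_pos (by norm_num) _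
    have hαval : 2 / α = (2:ℝ) ^ q := by
      rw [hα, div_eq_iff (ne_of_gt (Real.rpow_pos_of_pos (by norm_num) _)), mul_comm]
      exact stmt11_two_rpow.symm
    calc (2 / α) * (|u - v| / 2) ^ q ≤ (2:ℝ)^q * ((|u| + |v|) / 2) ^ q := by
          rw [hαval]
          exact mul_le_mul_of_nonneg_left hmono (Real.rpow_nonneg (by norm_num) q)
      _ = (|u| + |v|) ^ q := by
          rw [← Real.mul_rpow (by norm_num) (by positivity)]
          ring_nf
      _ ≤ |u| ^ q + |v| ^ q := by
          have h := NNReal.rpow_add_le_add_rpow x y hq.le h1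
          calc (|u| + |v|) ^ q = (((x + y : NNReal) ^ q : NNReal) : ℝ) := by
                rw [NNReal.coe_rpow, NNReal.coe_add, hx, hy]
            _ ≤ (((x ^ q + y ^ q : NNReal)) : ℝ) := by exact_mod_cast h
            _ = |u| ^ q + |v| ^ q := by
                rw [NNReal.coe_add, NNReal.coe_rpow, NNReal.coe_rpow, hx, hy]
  · rw [if_neg h1] at hα
    push_neg at h1
    have key : (|u| + |v|) ^ q ≤ (2:ℝ) ^ (q - 1) * (|u| ^ q + |v| ^ q) := by
      have h := NNReal.rpow_add_le_mul_rpow_add_rpow x y h1.le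
      calc (|u| + |v|) ^ q = (((x + y : NNReal) ^ q : NNReal) : ℝ) := by
            rw [NNReal.coe_rpow, NNReal.coe_add, hx, hy]
        _ ≤ ((((2:NNReal) ^ (q-1) * (x ^ q + y ^ q) : NNReal)) : ℝ) := by exact_mod_cast h
        _ = (2:ℝ) ^ (q - 1) * (|u| ^ q + |v| ^ q) := by
            push_cast [NNReal.coe_rpow]
            rw [hx, hy]
    rw [hα, div_one]
    have h2pos : (0:ℝ) < (2:ℝ) ^ q := Real.rpow_pos_of_pos (by norm_num) q
    have hmul : (2:ℝ) * (2:ℝ) ^ (q - 1) = (2:ℝ) ^ q := by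
      have h := Real.rpow_add (by norm_num : (0:ℝ) < 2) 1 (q - 1)
      rw [Real.rpow_one] at h
      rw [← h]
      ring_nf
    have h2q : ((|u| + |v|) / 2) ^ q = (|u| + |v|) ^ q / (2:ℝ) ^ q :=
      Real.div_rpow (by positivity) (by norm_num : (0:ℝ) ≤ 2) q
    calc 2 * (|u - v| / 2) ^ q ≤ 2 * (((|u| + |v|) / 2) ^ q) := by linarith
      _ = 2 * ((|u| + |v|) ^ q) / (2:ℝ) ^ q := by rw [h2q]; ring
      _ ≤ 2 * ((2:ℝ) ^ (q - 1) * (|u| ^ q + |v| ^ q)) / (2:ℝ) ^ q := by gcongr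
      _ = ((2:ℝ) ^ q * (|u| ^ q + |v| ^ q)) / (2:ℝ) ^ q := by rw [← hmul]; ring
      _ = |u| ^ q + |v| ^ q := by field_simp


lemma stmt11_map_restrict {Ω : Type*} [MeasurableSpace Ω] (μ : Measure Ω) [IsProbabilityMeasure μ]
    (W : ℕ → Ω → ℝ) (hW : ∀ n, Measurable (W n))
    (hindep : iIndepFun W μ) (I : Finset ℕ) :
    μ.map (fun ω (i : I) => W i ω) = Measure.pi (fun i : I => μ.map (W i)) := by
  classical
  haveI : ∀ i : I, SigmaFinite (μ.map (W (i : ℕ))) := fun i => by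
    haveI := Measure.isProbabilityMeasure_map (μ := μ) (hW (i:ℕ)).aemeasurable
    infer_instance
  symm
  apply Measure.pi_eq
  intro s hs
  have hmeas : Measurable (fun ω (i : I) => W i ω) :=
    measurable_pi_lambda _ fun i => hW i
  rw [Measure.map_apply hmeas (MeasurableSet.univ_pi hs)]
  set s' : ℕ → Set ℝ := fun n => if h : n ∈ I then s ⟨n, h⟩ else univ with hs'def
  have hs'meas : ∀ n ∈ I, MeasurableSet (s' n) := by
    intro n hn
    simp only [hs'def, dif_pos hn]
    exact hs _
  have hpre : (fun ω (i : I) => W i ω) ⁻¹' (univ.pi s) = ⋂ n ∈ I, W n ⁻¹' (s' n) := by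
    ext ω
    simp only [mem_preimage, mem_univ_pi, mem_iInter]
    constructor
    · intro h n hn
      simp only [hs'def, mem_preimage, dif_pos hn]
      exact h ⟨n, hn⟩
    · intro h i
      have := h i i.2
      simpa only [hs'def, mem_preimage, dif_pos i.2] using this
  rw [hpre, hindep.measure_inter_preimage_eq_mul I hs'meas]
  rw [← Finset.prod_coe_sort I (fun n => μ (W n ⁻¹' s' n))]
  apply Finset.prod_congr rfl
  intro i _
  rw [Measure.map_apply (hW i) (hs i)]
  congr 1
  simp only [hs'def, dif_pos i.2]

lemma stmt11_flip_law {Ω : Type*} [MeasurableSpace Ω] (μ : Measure Ω) [IsProbabilityMeasure μ]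
    (V : ℕ → Ω → ℝ) (hV : ∀ n, Measurable (V n))
    (hindep : iIndepFun V μ)
    (hsymm : ∀ n, IdentDistrib (V n) (fun ω => -V n ω) μ μ)
    (ε : ℕ → ℝ) (hε : ∀ n, ε n = 1 ∨ ε n = -1) :
    μ.map (fun ω (n : ℕ) => ε n * V n ω) = μ.map (fun ω (n : ℕ) => V n ω) := by
  have hVe : ∀ n, Measurable (fun ω => ε n * V n ω) := fun n => (hV n).const_mul _
  have hindep' : iIndepFun (fun n ω => ε n * V n ω) μ :=
    hindep.comp (fun n x => ε n * x) (fun n => measurable_const_mul _)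
  have hmarg : ∀ n, μ.map (fun ω => ε n * V n ω) = μ.map (V n) := by
    intro n
    rcases hε n with h | h
    · simp only [h, one_mul]
    · rw [h]
      simp only [neg_one_mul]
      exact (hsymm n).map_eq.symm
  have hmeas1 : Measurable (fun ω (n : ℕ) => ε n * V n ω) := measurable_pi_lambda _ hVe
  have hmeas2 : Measurable (fun ω (n : ℕ) => V n ω) := measurable_pi_lambda _ hV
  haveI := Measure.isProbabilityMeasure_map (μ := μ) hmeas1.aemeasurable
  haveI := Measure.isProbabilityMeasure_map (μ := μ) hmeas2.aemeasurable
  refine ext_of_generate_finite _ generateFrom_measurableCylinders.symm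
    isPiSystem_measurableCylinders (fun S hS => ?_) ?_
  · obtain ⟨I, T, hT, rfl⟩ := (mem_measurableCylinders _).mp hS
    rw [Measure.map_apply hmeas1 hT.cylinder, Measure.map_apply hmeas2 hT.cylinder]
    have h1 : (fun ω (n : ℕ) => ε n * V n ω) ⁻¹' cylinder I T
        = (fun ω (i : I) => ε i * V i ω) ⁻¹' T := rfl
    have h2 : (fun ω (n : ℕ) => V n ω) ⁻¹' cylinder I T
        = (fun ω (i : I) => V i ω) ⁻¹' T := rfl
    rw [h1, h2, ← Measure.map_apply (measurable_pi_lambda _ fun i : I => hVe i) hT,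
      ← Measure.map_apply (measurable_pi_lambda _ fun i : I => hV i) hT,
      stmt11_map_restrict μ _ hVe hindep' I, stmt11_map_restrict μ V hV hindep I]
    have : (fun i : I => Measure.map (fun ω => ε (i:ℕ) * V (i:ℕ) ω) μ)
        = fun i : I => Measure.map (V (i:ℕ)) μ := funext fun i => hmarg i
    rw [this]
  · simp [measure_univ]

end stmt11aux

open Set Function in
theorem stmt_11 {Ω : Type*} [MeasurableSpace Ω] (μ : Measure Ω) [IsProbabilityMeasure μ]
    (V : ℕ → Ω → ℝ) (hVmeas : ∀ n, Measurable (V n))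
    (hindep : iIndepFun V μ)
    (hsymm : ∀ n, IdentDistrib (V n) (fun ω => -V n ω) μ μ)
    (a : ℕ → ℝ) (ha : ∀ n, 0 ≤ a n) (hasum : Summable a)
    (b : ℕ → ℝ) (hb : ∀ n, b n = ∑' k : ℕ, a (n + k))
    (q α : ℝ) (hq : 0 < q)
    (hα : α = if q ≤ 1 then (2 : ℝ) ^ (1 - q) else 1) (t : ℝ) (ht : 0 < t) :
    μ {ω | ∃ n : ℕ, t < b n * |V n ω| ^ q}
      ≤ 2 * μ {ω | ENNReal.ofReal (t / α) <
          ∑' n : ℕ, ENNReal.ofReal (a n * |∑ i ∈ Finset.range (n + 1), V i ω| ^ q)} := by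
  classical
  have hαpos : 0 < α := by
    rw [hα]; split
    · exact Real.rpow_pos_of_pos (by norm_num) _
    · norm_num
  -- sequence space setup
  set Φ : Ω → (ℕ → ℝ) := fun ω n => V n ω with hΦdef
  have hΦ : Measurable Φ := measurable_pi_lambda _ hVmeas
  set P : ℕ → (ℕ → ℝ) → ℝ := fun k x => ∑ i ∈ Finset.range (k + 1), x i with hPdef
  have hPmeas : ∀ k, Measurable (P k) := fun k =>
    Finset.measurable_sum _ fun i _ => measurable_pi_apply i
  set g : (ℕ → ℝ) → ENNReal := fun x => ∑' n, ENNReal.ofReal (a n * |P n x| ^ q) with hgdef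
  have hrpow : Continuous fun w : ℝ => w ^ q := Real.continuous_rpow_const hq.le
  have hgmeas : Measurable g :=
    Measurable.ennreal_tsum fun n => ENNReal.measurable_ofReal.comp
      (measurable_const.mul (hrpow.measurable.comp (hPmeas n).abs))
  set B : Set (ℕ → ℝ) := {x | ENNReal.ofReal (t / α) < g x} with hBdef
  have hBmeas : MeasurableSet B := measurableSet_lt measurable_const hgmeas
  set C : ℕ → Set (ℕ → ℝ) := fun n => {x | t < b n * |x n| ^ q} with hCdef
  have hCmeas : ∀ n, MeasurableSet (C n) := fun n =>
    measurableSet_lt measurable_const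
      (measurable_const.mul (hrpow.measurable.comp (measurable_pi_apply n).abs))
  set A : ℕ → Set (ℕ → ℝ) := fun n => C n ∩ ⋂ k, ⋂ (_ : k < n), (C k)ᶜ with hAdef
  have hAmeas : ∀ n, MeasurableSet (A n) := fun n =>
    (hCmeas n).inter (MeasurableSet.iInter fun k => MeasurableSet.iInter fun _ => (hCmeas k).compl)
  have hAsubC : ∀ n, A n ⊆ C n := fun n => inter_subset_left
  have hmemA : ∀ n x, x ∈ A n ↔ x ∈ C n ∧ ∀ k < n, x ∉ C k := by
    intro n x
    simp [hAdef, mem_iInter]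
  have hcover : {x : ℕ → ℝ | ∃ n, x ∈ C n} = ⋃ n, A n := by
    ext x
    simp only [mem_setOf_eq, mem_iUnion]
    constructor
    · rintro ⟨n, hn⟩
      have hex : ∃ n, x ∈ C n := ⟨n, hn⟩
      refine ⟨Nat.find hex, (hmemA _ x).2 ⟨Nat.find_spec hex, fun k hk => Nat.find_min hex hk⟩⟩
    · rintro ⟨n, hn⟩
      exact ⟨n, hAsubC n hn⟩
  have hdisj : Pairwise (Disjoint on A) := by
    intro m n hmn
    dsimp only [Function.onFun]
    rw [Set.disjoint_iff_inter_eq_empty]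
    ext x
    simp only [mem_inter_iff, mem_empty_iff_false, iff_false, not_and]
    intro hxm hxn
    rcases lt_or_gt_of_ne hmn with h | h
    · exact ((hmemA n x).1 hxn).2 m h (hAsubC m hxm)
    · exact ((hmemA m x).1 hxm).2 n h (hAsubC n hxn)
  set ν : Measure (ℕ → ℝ) := μ.map Φ with hνdef
  -- flip invariance
  have hflipν : ∀ (ε : ℕ → ℝ), (∀ k, ε k = 1 ∨ ε k = -1) → ∀ E : Set (ℕ → ℝ), MeasurableSet E →
      ν ((fun x k => ε k * x k) ⁻¹' E) = ν E := by
    intro ε hε E hE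
    have hF : Measurable (fun x : ℕ → ℝ => fun k => ε k * x k) :=
      measurable_pi_lambda _ fun k => (measurable_pi_apply k).const_mul _
    rw [hνdef, Measure.map_apply hΦ (hF hE), Measure.map_apply hΦ hE]
    have h1 : Φ ⁻¹' ((fun x : ℕ → ℝ => fun k => ε k * x k) ⁻¹' E)
        = (fun ω (k : ℕ) => ε k * V k ω) ⁻¹' E := rfl
    have h2 : Φ ⁻¹' E = (fun ω (k : ℕ) => V k ω) ⁻¹' E := rfl
    have hFΦ : Measurable (fun ω (k : ℕ) => ε k * V k ω) :=
      measurable_pi_lambda _ fun k => (hVmeas k).const_mul _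
    rw [h1, h2, ← Measure.map_apply hFΦ hE, ← Measure.map_apply (measurable_pi_lambda _ hVmeas) hE,
      stmt11_flip_law μ V hVmeas hindep hsymm ε hε]
  -- sign flips fix A n
  have hAflip : ∀ (ε : ℕ → ℝ), (∀ k, ε k = 1 ∨ ε k = -1) → ∀ n,
      (fun x : ℕ → ℝ => fun k => ε k * x k) ⁻¹' (A n) = A n := by
    intro ε hε n
    have habs : ∀ (x : ℕ → ℝ) k, |ε k * x k| = |x k| := by
      intro x k
      rcases hε k with h | h <;> simp [h, abs_mul]
    ext x
    simp only [mem_preimage, hmemA, hCdef, mem_setOf_eq, habs]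
  -- the key deterministic inclusion
  have hkey : ∀ n, C n ⊆
      ((fun x : ℕ → ℝ => fun k => (if n < k then (-1:ℝ) else 1) * x k) ⁻¹' B) ∪
      ((fun x : ℕ → ℝ => fun k => (if n ≤ k then (-1:ℝ) else 1) * x k) ⁻¹' B) := by
    intro n x hx
    by_contra hcon
    simp only [mem_union, mem_preimage, hBdef, mem_setOf_eq, not_or, not_lt] at hcon
    obtain ⟨h1, h2⟩ := hcon
    set F1 : (ℕ → ℝ) := fun k => (if n < k then (-1:ℝ) else 1) * x k with hF1def
    set F2 : (ℕ → ℝ) := fun k => (if n ≤ k then (-1:ℝ) else 1) * x k with hF2def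
    have hxC : t < b n * |x n| ^ q := hx
    -- difference of partial sums
    have hdiff : ∀ k, n ≤ k → P k F1 - P k F2 = 2 * x n := by
      intro k hk
      have : P k F1 - P k F2 = ∑ i ∈ Finset.range (k + 1), (F1 i - F2 i) := by
        rw [Finset.sum_sub_distrib]
      rw [this]
      have hterm : ∀ i, F1 i - F2 i = if i = n then 2 * x n else 0 := by
        intro i
        rcases lt_trichotomy i n with h | h | h
        · simp [hF1def, hF2def, not_lt_of_gt h, not_le_of_gt h, Nat.ne_of_lt h]
        · subst h
          simp [hF1def, hF2def, lt_irrefl]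
          ring
        · simp [hF1def, hF2def, h, le_of_lt h, Nat.ne_of_gt h]
      simp_rw [hterm]
      rw [Finset.sum_ite_eq' (Finset.range (k + 1)) n (fun _ => 2 * x n)]
      simp [Nat.lt_succ_of_le hk]
    -- per-term bound
    have hterm2 : ∀ k : ℕ, ENNReal.ofReal (a (n + k) * ((2 / α) * |x n| ^ q))
        ≤ ENNReal.ofReal (a (n + k) * |P (n + k) F1| ^ q)
          + ENNReal.ofReal (a (n + k) * |P (n + k) F2| ^ q) := by
      intro k
      rw [← ENNReal.ofReal_add (mul_nonneg (ha _) (Real.rpow_nonneg (abs_nonneg _) _))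
        (mul_nonneg (ha _) (Real.rpow_nonneg (abs_nonneg _) _))]
      apply ENNReal.ofReal_le_ofReal
      rw [← mul_add]
      apply mul_le_mul_of_nonneg_left _ (ha _)
      have hcore := stmt11_core hq hα (P (n + k) F1) (P (n + k) F2)
      have habs : |P (n + k) F1 - P (n + k) F2| / 2 = |x n| := by
        rw [hdiff (n + k) (Nat.le_add_right n k), abs_mul]
        norm_num
      rwa [habs] at hcore
    -- lower bound chain
    have hbsum : Summable (fun k => a (n + k)) := by
      have h := (summable_nat_add_iff n).mpr hasum
      simpa [add_comm] using h
    have heq1 : ENNReal.ofReal ((2 / α) * (b n * |x n| ^ q))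
        = ∑' k, ENNReal.ofReal (a (n + k) * ((2 / α) * |x n| ^ q)) := by
      rw [← ENNReal.ofReal_tsum_of_nonneg
        (fun k => mul_nonneg (ha _) (by positivity)) (hbsum.mul_right _)]
      congr 1
      rw [tsum_mul_right, ← hb n]
      ring
    have hchain : ENNReal.ofReal ((2 / α) * (b n * |x n| ^ q)) ≤ g F1 + g F2 := by
      rw [heq1]
      calc ∑' k, ENNReal.ofReal (a (n + k) * ((2 / α) * |x n| ^ q))
          ≤ ∑' k, (ENNReal.ofReal (a (n + k) * |P (n + k) F1| ^ q)
            + ENNReal.ofReal (a (n + k) * |P (n + k) F2| ^ q)) := ENNReal.tsum_le_tsum hterm2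
        _ = (∑' k, ENNReal.ofReal (a (n + k) * |P (n + k) F1| ^ q))
            + ∑' k, ENNReal.ofReal (a (n + k) * |P (n + k) F2| ^ q) := ENNReal.tsum_add
        _ ≤ g F1 + g F2 := by
            apply add_le_add
            · exact ENNReal.tsum_comp_le_tsum_of_injective
                (add_right_injective n)
                (fun m => ENNReal.ofReal (a m * |P m F1| ^ q))
            · exact ENNReal.tsum_comp_le_tsum_of_injective
                (add_right_injective n)
                (fun m => ENNReal.ofReal (a m * |P m F2| ^ q))
    have htα : 0 ≤ t / α := (div_pos ht hαpos).le
    have hupper : g F1 + g F2 ≤ ENNReal.ofReal (2 * (t / α)) := by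
      rw [two_mul, ENNReal.ofReal_add htα htα]
      exact add_le_add h1 h2
    have h2α : (0:ℝ) < 2 / α := div_pos (by norm_num) hαpos
    have hlt : 2 * (t / α) < (2 / α) * (b n * |x n| ^ q) := by
      have he : 2 * (t / α) = (2 / α) * t := by ring
      rw [he]
      exact mul_lt_mul_of_pos_left hxC h2α
    have hposR : (0:ℝ) < (2 / α) * (b n * |x n| ^ q) := by
      have : (0:ℝ) < 2 * (t / α) := by positivity
      linarith
    have hstrict : ENNReal.ofReal (2 * (t / α)) < ENNReal.ofReal ((2 / α) * (b n * |x n| ^ q)) :=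
      (ENNReal.ofReal_lt_ofReal_iff hposR).mpr hlt
    exact absurd (hchain.trans hupper) (not_le.mpr hstrict)
  -- rewrite both sides via ν
  have hLHSset : {ω | ∃ n : ℕ, t < b n * |V n ω| ^ q} = Φ ⁻¹' (⋃ n, A n) := by
    rw [← hcover]; rfl
  have hRHSset : {ω | ENNReal.ofReal (t / α) <
      ∑' n : ℕ, ENNReal.ofReal (a n * |∑ i ∈ Finset.range (n + 1), V i ω| ^ q)}
      = Φ ⁻¹' B := rfl
  rw [hLHSset, hRHSset,
    Measure.map_apply hΦ (MeasurableSet.iUnion hAmeas) |>.symm,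
    Measure.map_apply hΦ hBmeas |>.symm, ← hνdef]
  -- final computation
  have hper : ∀ n, ν (A n) ≤ 2 * ν (A n ∩ B) := by
    intro n
    set ε1 : ℕ → ℝ := fun k => if n < k then -1 else 1 with hε1def
    set ε2 : ℕ → ℝ := fun k => if n ≤ k then -1 else 1 with hε2def
    have hε1 : ∀ k, ε1 k = 1 ∨ ε1 k = -1 := fun k => by
      by_cases h : n < k <;> simp [hε1def, h]
    have hε2 : ∀ k, ε2 k = 1 ∨ ε2 k = -1 := fun k => by
      by_cases h : n ≤ k <;> simp [hε2def, h]
    have hsub : A n ⊆ ((fun x : ℕ → ℝ => fun k => ε1 k * x k) ⁻¹' (A n ∩ B))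
        ∪ ((fun x : ℕ → ℝ => fun k => ε2 k * x k) ⁻¹' (A n ∩ B)) := by
      intro x hxA
      rcases hkey n (hAsubC n hxA) with h | h
      · left
        rw [preimage_inter, hAflip ε1 hε1 n]
        exact ⟨hxA, h⟩
      · right
        rw [preimage_inter, hAflip ε2 hε2 n]
        exact ⟨hxA, h⟩
    calc ν (A n) ≤ ν (((fun x : ℕ → ℝ => fun k => ε1 k * x k) ⁻¹' (A n ∩ B))
          ∪ ((fun x : ℕ → ℝ => fun k => ε2 k * x k) ⁻¹' (A n ∩ B))) := measure_mono hsub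
      _ ≤ ν ((fun x : ℕ → ℝ => fun k => ε1 k * x k) ⁻¹' (A n ∩ B))
          + ν ((fun x : ℕ → ℝ => fun k => ε2 k * x k) ⁻¹' (A n ∩ B)) := measure_union_le _ _
      _ = ν (A n ∩ B) + ν (A n ∩ B) := by
          rw [hflipν ε1 hε1 _ ((hAmeas n).inter hBmeas),
            hflipν ε2 hε2 _ ((hAmeas n).inter hBmeas)]
      _ = 2 * ν (A n ∩ B) := (two_mul _).symm
  calc ν (⋃ n, A n) = ∑' n, ν (A n) := measure_iUnion hdisj hAmeas
    _ ≤ ∑' n, 2 * ν (A n ∩ B) := ENNReal.tsum_le_tsum hper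
    _ = 2 * ∑' n, ν (A n ∩ B) := ENNReal.tsum_mul_left
    _ = 2 * ν (⋃ n, A n ∩ B) := by
        rw [measure_iUnion (hdisj.mono fun m n h =>
          h.mono inter_subset_left inter_subset_left)
          (fun n => (hAmeas n).inter hBmeas)]
    _ ≤ 2 * ν B := by
        apply mul_le_mul_right (measure_mono (iUnion_subset fun n => inter_subset_right))
end

section
/- Let g : ℝ → [0, ∞] be a measurable even function such that g(x + y) ≤ β(g(x) + g(y)) for all x, y, where β ≥ 1 is a constant. Let V be a real-valued random variable and V̂ = V − V′ where V′ is an independent copy of V. Then for all t ≥ 0, P(g(V) ≤ t) · E[g(V)] ≤ β E[g(V̂)] + β t, and E[g(V̂)] ≤ 2β E[g(V)]. -/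
open MeasureTheory ProbabilityTheory

theorem stmt_13 {Ω : Type*} [MeasurableSpace Ω] (μ : Measure Ω) [IsProbabilityMeasure μ]
    (g : ℝ → ENNReal) (hgmeas : Measurable g) (hgeven : ∀ x : ℝ, g (-x) = g x)
    (β : ENNReal) (hβ : 1 ≤ β) (hβtop : β ≠ ⊤)
    (hgsub : ∀ x y : ℝ, g (x + y) ≤ β * (g x + g y))
    (V V' : Ω → ℝ) (hV : Measurable V) (hV' : Measurable V')
    (hindep : IndepFun V V' μ) (hid : IdentDistrib V V' μ μ) (t : ENNReal) :
    μ {ω | g (V ω) ≤ t} * (∫⁻ ω, g (V ω) ∂μ)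
        ≤ β * (∫⁻ ω, g (V ω - V' ω) ∂μ) + β * t
      ∧ (∫⁻ ω, g (V ω - V' ω) ∂μ) ≤ 2 * β * ∫⁻ ω, g (V ω) ∂μ := by
  have hA : MeasurableSet {x : ℝ | g x ≤ t} := hgmeas measurableSet_Iic
  constructor
  · -- first inequality
    -- replace V by V' in the probability
    have hmeq : μ {ω | g (V ω) ≤ t} = μ {ω | g (V' ω) ≤ t} := by
      have := hid.measure_mem_eq hA
      simpa [Set.preimage, Set.mem_setOf_eq] using this
    rw [hmeq]
    -- indicator function
    set ind : Ω → ENNReal := fun ω => Set.indicator {x : ℝ | g x ≤ t} (fun _ => 1) (V' ω) with hind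
    have hindmeas : Measurable ind :=
      (measurable_one.indicator hA).comp hV'
    have hprob : μ {ω | g (V' ω) ≤ t} = ∫⁻ ω, ind ω ∂μ := by
      rw [show (fun ω => ind ω) = fun ω => Set.indicator (V' ⁻¹' {x : ℝ | g x ≤ t})
          (fun _ => (1 : ENNReal)) ω by
        funext ω
        by_cases h : g (V' ω) ≤ t <;> simp [hind, Set.indicator, h]]
      rw [lintegral_indicator (hV' hA)]
      simp [Set.preimage, Set.mem_setOf_eq]
    rw [hprob]
    have hindep2 : IndepFun ind (fun ω => g (V ω)) μ :=
      (hindep.symm.comp (measurable_one.indicator hA) hgmeas)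
    have hmul : ∫⁻ ω, ind ω * g (V ω) ∂μ = (∫⁻ ω, ind ω ∂μ) * ∫⁻ ω, g (V ω) ∂μ := by
      have := lintegral_mul_eq_lintegral_mul_lintegral_of_indepFun hindmeas (hgmeas.comp hV)
        hindep2
      simpa [Pi.mul_apply] using this
    rw [← hmul]
    -- pointwise bound
    have hpw : ∀ ω, ind ω * g (V ω) ≤ β * g (V ω - V' ω) + β * t := by
      intro ω
      by_cases h : g (V' ω) ≤ t
      · have h1 : ind ω = 1 := by simp [hind, Set.indicator, h]
        rw [h1, one_mul]
        have h2 : g (V ω) = g ((V ω - V' ω) + V' ω) := by ring_nf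
        calc g (V ω) = g ((V ω - V' ω) + V' ω) := h2
          _ ≤ β * (g (V ω - V' ω) + g (V' ω)) := hgsub _ _
          _ = β * g (V ω - V' ω) + β * g (V' ω) := by rw [mul_add]
          _ ≤ β * g (V ω - V' ω) + β * t := by
              exact add_le_add_right (mul_le_mul_right h β) _
      · have h1 : ind ω = 0 := by simp [hind, Set.indicator, h]
        simp [h1]
    calc ∫⁻ ω, ind ω * g (V ω) ∂μ ≤ ∫⁻ ω, (β * g (V ω - V' ω) + β * t) ∂μ :=
          lintegral_mono hpw
      _ = β * (∫⁻ ω, g (V ω - V' ω) ∂μ) + β * t := by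
          rw [lintegral_add_right _ measurable_const, lintegral_const,
            lintegral_const_mul' _ _ hβtop]
          simp
  · -- second inequality
    have hpw : ∀ ω, g (V ω - V' ω) ≤ β * (g (V ω) + g (V' ω)) := by
      intro ω
      have : g (V ω - V' ω) = g (V ω + (-V' ω)) := by ring_nf
      rw [this]
      calc g (V ω + (-V' ω)) ≤ β * (g (V ω) + g (-(V' ω))) := hgsub _ _
        _ = β * (g (V ω) + g (V' ω)) := by rw [hgeven]
    have heq : ∫⁻ ω, g (V' ω) ∂μ = ∫⁻ ω, g (V ω) ∂μ :=
      ((hid.comp hgmeas).symm.lintegral_eq)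
    calc ∫⁻ ω, g (V ω - V' ω) ∂μ ≤ ∫⁻ ω, β * (g (V ω) + g (V' ω)) ∂μ := lintegral_mono hpw
      _ = β * ((∫⁻ ω, g (V ω) ∂μ) + ∫⁻ ω, g (V' ω) ∂μ) := by
          have hm : Measurable fun ω => g (V ω) := hgmeas.comp hV
          rw [lintegral_const_mul' _ _ hβtop, lintegral_add_left hm]
      _ = 2 * β * ∫⁻ ω, g (V ω) ∂μ := by rw [heq]; ring
end

section
/- Let g : ℝ → [0, ∞] be measurable, even, and satisfy g(x+y) ≤ β(g(x)+g(y)) for a constant β ≥ 1. Let V be a real-valued random variable with g(V) < ∞ almost surely, and let V̂ = V − V′ be its symmetrization. Then E[g(V)] < ∞ if and only if E[g(V̂)] < ∞. -/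
open MeasureTheory ProbabilityTheory

theorem stmt_14 {Ω : Type*} [MeasurableSpace Ω] (μ : Measure Ω) [IsProbabilityMeasure μ]
    (g : ℝ → ENNReal) (hgmeas : Measurable g) (hgeven : ∀ x : ℝ, g (-x) = g x)
    (β : ENNReal) (hβ : 1 ≤ β) (hβtop : β ≠ ⊤)
    (hgsub : ∀ x y : ℝ, g (x + y) ≤ β * (g x + g y))
    (V V' : Ω → ℝ) (hV : Measurable V) (hV' : Measurable V')
    (hindep : IndepFun V V' μ) (hid : IdentDistrib V V' μ μ)
    (hfin : ∀ᵐ ω ∂μ, g (V ω) < ⊤) :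
    (∫⁻ ω, g (V ω) ∂μ) < ⊤ ↔ (∫⁻ ω, g (V ω - V' ω) ∂μ) < ⊤ := by
  have hidg : IdentDistrib (g ∘ V) (g ∘ V') μ μ := hid.comp hgmeas
  have hIeq : (∫⁻ ω, g (V ω) ∂μ) = ∫⁻ ω, g (V' ω) ∂μ := hidg.lintegral_eq
  constructor
  · intro h
    have hle : ∀ ω, g (V ω - V' ω) ≤ β * (g (V ω) + g (V' ω)) := by
      intro ω
      have := hgsub (V ω) (-(V' ω))
      rw [hgeven] at this
      simpa [sub_eq_add_neg] using this
    calc ∫⁻ ω, g (V ω - V' ω) ∂μ ≤ ∫⁻ ω, β * (g (V ω) + g (V' ω)) ∂μ :=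
          lintegral_mono hle
      _ = β * ((∫⁻ ω, g (V ω) ∂μ) + ∫⁻ ω, g (V' ω) ∂μ) := by
          rw [lintegral_const_mul β (show Measurable fun ω => g (V ω) + g (V' ω) from
              Measurable.add (hgmeas.comp hV) (hgmeas.comp hV')),
            lintegral_add_left (show Measurable fun ω => g (V ω) from hgmeas.comp hV)]
      _ < ⊤ := by
          refine ENNReal.mul_lt_top hβtop.lt_top ?_
          exact ENNReal.add_lt_top.2 ⟨h, hIeq ▸ h⟩
  · intro h
    -- choose n with μ {g (V ·) ≤ n} > 0
    obtain ⟨n, hn⟩ : ∃ n : ℕ, μ {ω | g (V ω) ≤ (n : ENNReal)} ≠ 0 := by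
      by_contra hc
      push_neg at hc
      have h0 : μ (⋃ n : ℕ, {ω | g (V ω) ≤ (n : ENNReal)}) = 0 :=
        measure_iUnion_null hc
      have hsub : {ω | g (V ω) < ⊤} ⊆ ⋃ n : ℕ, {ω | g (V ω) ≤ (n : ENNReal)} := by
        intro ω hω
        obtain ⟨n, hn⟩ := ENNReal.exists_nat_gt hω.ne
        exact Set.mem_iUnion.2 ⟨n, hn.le⟩
      have h1 : μ {ω | g (V ω) < ⊤} = 0 := measure_mono_null hsub h0
      rw [ae_iff] at hfin
      have huniv : (Set.univ : Set Ω) ⊆ {ω | g (V ω) < ⊤} ∪ {ω | ¬ g (V ω) < ⊤} := by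
        intro ω _; by_cases hh : g (V ω) < ⊤ <;> [left; right] <;> exact hh
      have : (1 : ENNReal) ≤ 0 := by
        calc (1 : ENNReal) = μ Set.univ := measure_univ.symm
          _ ≤ μ ({ω | g (V ω) < ⊤} ∪ {ω | ¬ g (V ω) < ⊤}) := measure_mono huniv
          _ ≤ μ {ω | g (V ω) < ⊤} + μ {ω | ¬ g (V ω) < ⊤} := measure_union_le _ _
          _ = 0 := by rw [h1, hfin]; simp
      simp at this
    -- indicator function
    set f : ℝ → ENNReal := fun x => if g x ≤ (n : ENNReal) then 1 else 0 with hf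
    have hfmeas : Measurable f := by
      apply Measurable.ite _ measurable_const measurable_const
      exact hgmeas (measurableSet_Iic)
    have hindep2 : IndepFun (g ∘ V) (f ∘ V') μ := hindep.comp hgmeas hfmeas
    have hkey : (∫⁻ ω, g (V ω) ∂μ) * (∫⁻ ω, f (V' ω) ∂μ)
        = ∫⁻ ω, g (V ω) * f (V' ω) ∂μ :=
      (lintegral_mul_eq_lintegral_mul_lintegral_of_indepFun (hgmeas.comp hV)
        (hfmeas.comp hV') hindep2).symm
    have hI2 : (∫⁻ ω, f (V' ω) ∂μ) = μ {ω | g (V' ω) ≤ (n : ENNReal)} := by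
      have hs : MeasurableSet {ω | g (V' ω) ≤ (n : ENNReal)} :=
        measurableSet_le (hgmeas.comp hV') measurable_const
      rw [← lintegral_indicator_one hs]
      refine lintegral_congr fun ω => ?_
      by_cases hω : g (V' ω) ≤ (n : ENNReal) <;>
        simp [hf, hω, Set.indicator, Set.mem_setOf_eq]
    have hI2pos : (∫⁻ ω, f (V' ω) ∂μ) ≠ 0 := by
      rw [hI2]
      have : μ {ω | g (V' ω) ≤ (n : ENNReal)} = μ {ω | g (V ω) ≤ (n : ENNReal)} := by
        have := hidg.symm.measure_mem_eq (s := Set.Iic (n : ENNReal)) measurableSet_Iic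
        simpa [Set.preimage, Set.mem_Iic] using this
      rw [this]; exact hn
    -- pointwise bound
    have hbound : ∀ ω, g (V ω) * f (V' ω) ≤ β * (g (V ω - V' ω) + (n : ENNReal)) := by
      intro ω
      by_cases hω : g (V' ω) ≤ (n : ENNReal)
      · have h1 : g (V ω) ≤ β * (g (V ω - V' ω) + g (V' ω)) := by
          have := hgsub (V ω - V' ω) (V' ω)
          simpa using this
        calc g (V ω) * f (V' ω) ≤ g (V ω) := by simp [hf, hω]
          _ ≤ β * (g (V ω - V' ω) + g (V' ω)) := h1
          _ ≤ β * (g (V ω - V' ω) + (n : ENNReal)) := by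
              exact mul_le_mul_right (add_le_add_right hω _) β
      · simp [hf, hω]
    have hfin2 : (∫⁻ ω, g (V ω) * f (V' ω) ∂μ) < ⊤ := by
      calc ∫⁻ ω, g (V ω) * f (V' ω) ∂μ
          ≤ ∫⁻ ω, β * (g (V ω - V' ω) + (n : ENNReal)) ∂μ := lintegral_mono hbound
        _ = β * ((∫⁻ ω, g (V ω - V' ω) ∂μ) + (n : ENNReal)) := by
            rw [lintegral_const_mul β (show Measurable fun ω => g (V ω - V' ω) + (n : ENNReal)
                from Measurable.add (hgmeas.comp (hV.sub hV')) measurable_const),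
              lintegral_add_right _ measurable_const, lintegral_const]
            simp
        _ < ⊤ := ENNReal.mul_lt_top hβtop.lt_top
            (ENNReal.add_lt_top.2 ⟨h, ENNReal.natCast_lt_top n⟩)
    by_contra hc
    push_neg at hc
    have htop : (∫⁻ ω, g (V ω) ∂μ) = ⊤ := top_le_iff.mp hc
    rw [htop, ENNReal.top_mul hI2pos] at hkey
    exact absurd hkey.symm hfin2.ne
end

section
/- Let 1 < r < p < 2 and let X be a real-valued symmetric random variable with P(|X| > t) ~ 1/(p t^p (ln t)^r) as t → ∞ (e.g., with tail P(|X| > t) = ∫_t^∞ dx/(x^{p+1} (ln x)^r) for t ≥ e). Then for 1 ≤ q < p, the integral ∫_0^∞ P(|X|^q > t)^{q/p} dt is finite if p/r < q < p and infinite if 1 ≤ q ≤ p/r. -/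
open MeasureTheory ProbabilityTheory Set Filter Topology
open scoped ENNReal NNReal

lemma aux_int {a b : ℝ} (ha : 1 < a) (hb : Real.exp 1 ≤ b) :
    IntegrableOn (fun t : ℝ => Real.log t ^ (-a) * t⁻¹) (Set.Ioi b) := by
  have hb1 : (1:ℝ) < b := lt_of_lt_of_le (by simpa using Real.exp_lt_exp.2 one_pos) hb
  have h1a : (1:ℝ) - a ≠ 0 := by linarith
  have hderiv : ∀ x ∈ Set.Ici b,
      HasDerivAt (fun t : ℝ => Real.log t ^ (1 - a) / (1 - a)) (Real.log x ^ (-a) * x⁻¹) x := by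
    intro x hx
    have hx0 : (0:ℝ) < x := lt_trans (by linarith) (lt_of_lt_of_le hb1 hx)
    have hlx : (1:ℝ) ≤ Real.log x := by
      rw [show (1:ℝ) = Real.log (Real.exp 1) by rw [Real.log_exp]]
      exact Real.log_le_log (Real.exp_pos 1) (hb.trans hx)
    have hlx0 : Real.log x ≠ 0 := by positivity
    have h1 : HasDerivAt (fun t : ℝ => Real.log t ^ (1 - a))
        ((1 - a) * Real.log x ^ (1 - a - 1) * x⁻¹) x := by
      have := (Real.hasDerivAt_rpow_const (p := 1 - a) (Or.inl hlx0)).comp x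
        (Real.hasDerivAt_log (ne_of_gt hx0))
      simpa [Function.comp_def, mul_comm, mul_assoc] using this
    have := h1.div_const (1 - a)
    refine this.congr_deriv ?_
    rw [show (1:ℝ) - a - 1 = -a by ring]
    field_simp
  have hpos : ∀ x ∈ Set.Ioi b, 0 ≤ Real.log x ^ (-a) * x⁻¹ := by
    intro x hx
    have hx0 : (0:ℝ) < x := lt_trans (by linarith) (lt_of_lt_of_le hb1 hx.le)
    have : (0:ℝ) ≤ Real.log x := Real.log_nonneg (by linarith [le_of_lt (Set.mem_Ioi.mp hx), hb1])
    exact mul_nonneg (Real.rpow_nonneg this _) (inv_nonneg.2 hx0.le)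
  have htend : Tendsto (fun t : ℝ => Real.log t ^ (1 - a) / (1 - a)) atTop (𝓝 (0 / (1 - a))) := by
    apply Tendsto.div_const
    have : Tendsto (fun y : ℝ => y ^ (-(a - 1))) atTop (𝓝 0) :=
      tendsto_rpow_neg_atTop (by linarith)
    have := this.comp Real.tendsto_log_atTop
    simpa [Function.comp_def, show -(a - 1) = 1 - a by ring] using this
  exact integrableOn_Ioi_deriv_of_nonneg' hderiv hpos htend

lemma aux_div {a b c : ℝ} (ha : a ≤ 1) (hb : Real.exp 1 ≤ b) (hc : 0 < c) :
    ∫⁻ t in Set.Ioi b, ENNReal.ofReal (c * (Real.log t ^ (-a) * t⁻¹)) = ⊤ := by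
  have hb1 : (1:ℝ) < b := lt_of_lt_of_le (by simpa using Real.exp_lt_exp.2 one_pos) hb
  have hb0 : (0:ℝ) < b := by linarith
  have hlogb : (1:ℝ) ≤ Real.log b := by
    rw [show (1:ℝ) = Real.log (Real.exp 1) by rw [Real.log_exp]]
    exact Real.log_le_log (Real.exp_pos 1) hb
  have hmeas : Measurable fun t : ℝ => ENNReal.ofReal (c * (Real.log t ^ (-a) * t⁻¹)) := by
    have := Real.measurable_log; fun_prop
  have key : ∀ M : ℝ, b ≤ M →
      ENNReal.ofReal (c * Real.log (Real.log M) - c * Real.log (Real.log b))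
        ≤ ∫⁻ t in Set.Ioi b, ENNReal.ofReal (c * (Real.log t ^ (-a) * t⁻¹)) := by
    intro M hbM
    have hcont : ContinuousOn (fun t : ℝ => c * ((Real.log t)⁻¹ * t⁻¹)) (Set.Icc b M) := by
      apply ContinuousOn.mul continuousOn_const
      apply ContinuousOn.mul
      · apply ContinuousOn.inv₀
        · exact Real.continuousOn_log.mono (fun x hx => by
            simp only [Set.mem_compl_iff, Set.mem_singleton_iff]
            exact ne_of_gt (lt_of_lt_of_le hb0 hx.1))
        · intro x hx
          have : (1:ℝ) ≤ Real.log x := hlogb.trans (Real.log_le_log hb0 hx.1)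
          positivity
      · exact continuousOn_inv₀.mono (fun x hx => by
          simp only [Set.mem_compl_iff, Set.mem_singleton_iff]
          exact ne_of_gt (lt_of_lt_of_le hb0 hx.1))
    have hderiv : ∀ x ∈ Set.uIcc b M,
        HasDerivAt (fun t : ℝ => c * Real.log (Real.log t)) (c * ((Real.log x)⁻¹ * x⁻¹)) x := by
      intro x hx
      rw [Set.uIcc_of_le hbM] at hx
      have hx0 : (0:ℝ) < x := lt_of_lt_of_le hb0 hx.1
      have hlx : (1:ℝ) ≤ Real.log x := hlogb.trans (Real.log_le_log hb0 hx.1)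
      have hlx0 : Real.log x ≠ 0 := by positivity
      exact ((Real.hasDerivAt_log hlx0).comp x (Real.hasDerivAt_log (ne_of_gt hx0))).const_mul c
    have hint : IntervalIntegrable (fun t : ℝ => c * ((Real.log t)⁻¹ * t⁻¹)) volume b M := by
      apply ContinuousOn.intervalIntegrable
      rwa [Set.uIcc_of_le hbM]
    have heq : ∫ t in Set.Ioc b M, c * ((Real.log t)⁻¹ * t⁻¹)
        = c * Real.log (Real.log M) - c * Real.log (Real.log b) := by
      rw [← intervalIntegral.integral_of_le hbM]
      exact intervalIntegral.integral_eq_sub_of_hasDerivAt hderiv hint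
    have hIoc : ∫⁻ t in Set.Ioc b M, ENNReal.ofReal (c * ((Real.log t)⁻¹ * t⁻¹))
        = ENNReal.ofReal (c * Real.log (Real.log M) - c * Real.log (Real.log b)) := by
      rw [← heq]
      rw [← ofReal_integral_eq_lintegral_ofReal]
      · exact (hcont.integrableOn_Icc).mono_set Set.Ioc_subset_Icc_self
      · filter_upwards [ae_restrict_mem measurableSet_Ioc] with t ht
        have ht0 : (0:ℝ) < t := lt_of_lt_of_le hb0 ht.1.le
        have hlt : (1:ℝ) ≤ Real.log t := hlogb.trans (Real.log_le_log hb0 ht.1.le)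
        positivity
    calc ENNReal.ofReal (c * Real.log (Real.log M) - c * Real.log (Real.log b))
        = ∫⁻ t in Set.Ioc b M, ENNReal.ofReal (c * ((Real.log t)⁻¹ * t⁻¹)) := hIoc.symm
      _ ≤ ∫⁻ t in Set.Ioc b M, ENNReal.ofReal (c * (Real.log t ^ (-a) * t⁻¹)) := by
          apply setLIntegral_mono hmeas
          intro t ht
          apply ENNReal.ofReal_le_ofReal
          have ht0 : (0:ℝ) < t := lt_of_lt_of_le hb0 ht.1.le
          have hlt : (1:ℝ) ≤ Real.log t := hlogb.trans (Real.log_le_log hb0 ht.1.le)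
          have h1 : (Real.log t)⁻¹ ≤ Real.log t ^ (-a) := by
            rw [← Real.rpow_neg_one]
            exact Real.rpow_le_rpow_of_exponent_le hlt (by linarith)
          have h2 : (0:ℝ) ≤ t⁻¹ := by positivity
          nlinarith [mul_le_mul_of_nonneg_right h1 h2]
      _ ≤ ∫⁻ t in Set.Ioi b, ENNReal.ofReal (c * (Real.log t ^ (-a) * t⁻¹)) :=
          lintegral_mono_set Set.Ioc_subset_Ioi_self
  refine ENNReal.eq_top_of_forall_nnreal_le fun x => ?_
  obtain ⟨n, hn⟩ := exists_nat_ge (x : ℝ)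
  have htends : Tendsto (fun M : ℝ => c * Real.log (Real.log M) - c * Real.log (Real.log b))
      atTop atTop := by
    apply Filter.tendsto_atTop_add_const_right
    exact (Real.tendsto_log_atTop.comp Real.tendsto_log_atTop).const_mul_atTop hc
  obtain ⟨M, hM1, hM2⟩ :=
    ((htends.eventually_ge_atTop (n : ℝ)).and (eventually_ge_atTop b)).exists
  calc (x : ℝ≥0∞) ≤ ENNReal.ofReal (n : ℝ) := by
        rw [ENNReal.ofReal_natCast]; exact_mod_cast hn
    _ ≤ ENNReal.ofReal (c * Real.log (Real.log M) - c * Real.log (Real.log b)) :=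
        ENNReal.ofReal_le_ofReal hM1
    _ ≤ _ := key M hM2

lemma tail_integrable {p r s : ℝ} (hp : 1 < p) (hr : 0 ≤ r) (hs : Real.exp 1 ≤ s) :
    IntegrableOn (fun x : ℝ => 1 / (x ^ (p + 1) * Real.log x ^ r)) (Set.Ioi s) := by
  have hs1 : (1:ℝ) < s := lt_of_lt_of_le (by simpa using Real.exp_lt_exp.2 one_pos) hs
  have hs0 : (0:ℝ) < s := by linarith
  have hmeas : Measurable fun x : ℝ => 1 / (x ^ (p + 1) * Real.log x ^ r) := by
    have := Real.measurable_log; fun_prop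
  apply Integrable.mono' (g := fun x : ℝ => x ^ (-(p + 1)))
    (integrableOn_Ioi_rpow_of_lt (by linarith) hs0) hmeas.aestronglyMeasurable
  filter_upwards [ae_restrict_mem measurableSet_Ioi] with x hx
  have hx0 : (0:ℝ) < x := lt_trans hs0 hx
  have hlx : (1:ℝ) ≤ Real.log x := by
    rw [show (1:ℝ) = Real.log (Real.exp 1) by rw [Real.log_exp]]
    exact Real.log_le_log (Real.exp_pos 1) (hs.trans hx.le)
  have h1 : (1:ℝ) ≤ Real.log x ^ r := Real.one_le_rpow hlx hr
  have hxp : (0:ℝ) < x ^ (p + 1) := Real.rpow_pos_of_pos hx0 _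
  have habs : |1 / (x ^ (p + 1) * Real.log x ^ r)| = 1 / (x ^ (p + 1) * Real.log x ^ r) := by
    apply abs_of_nonneg; positivity
  rw [Real.norm_eq_abs, habs, Real.rpow_neg hx0.le, ← one_div]
  apply one_div_le_one_div_of_le hxp
  nlinarith

lemma tail_nonneg {p r s : ℝ} (hs : Real.exp 1 ≤ s) :
    0 ≤ ∫ x in Set.Ioi s, 1 / (x ^ (p + 1) * Real.log x ^ r) := by
  have hs1 : (1:ℝ) < s := lt_of_lt_of_le (by simpa using Real.exp_lt_exp.2 one_pos) hs
  apply setIntegral_nonneg measurableSet_Ioi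
  intro x hx
  have hx0 : (0:ℝ) < x := lt_trans (by linarith) hx
  have hlx : (0:ℝ) < Real.log x := Real.log_pos (lt_trans hs1 hx)
  positivity

lemma tail_upper {p r s : ℝ} (hp : 1 < p) (hr : 0 ≤ r) (hs : Real.exp 1 ≤ s) :
    ∫ x in Set.Ioi s, 1 / (x ^ (p + 1) * Real.log x ^ r)
      ≤ (1 / p) * (s ^ (-p) * Real.log s ^ (-r)) := by
  have hs1 : (1:ℝ) < s := lt_of_lt_of_le (by simpa using Real.exp_lt_exp.2 one_pos) hs
  have hs0 : (0:ℝ) < s := by linarith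
  have hls : (1:ℝ) ≤ Real.log s := by
    rw [show (1:ℝ) = Real.log (Real.exp 1) by rw [Real.log_exp]]
    exact Real.log_le_log (Real.exp_pos 1) hs
  have hg : IntegrableOn (fun x : ℝ => Real.log s ^ (-r) * x ^ (-(p + 1))) (Set.Ioi s) :=
    (integrableOn_Ioi_rpow_of_lt (by linarith) hs0).const_mul _
  have hle : ∫ x in Set.Ioi s, 1 / (x ^ (p + 1) * Real.log x ^ r)
      ≤ ∫ x in Set.Ioi s, Real.log s ^ (-r) * x ^ (-(p + 1)) := by
    apply setIntegral_mono_on (tail_integrable hp hr hs) hg measurableSet_Ioi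
    intro x hx
    have hx0 : (0:ℝ) < x := lt_trans hs0 hx
    have hlx : (0:ℝ) < Real.log s := by linarith
    have hlog_le : Real.log s ≤ Real.log x := Real.log_le_log hs0 hx.le
    have h1 : Real.log s ^ r ≤ Real.log x ^ r := Real.rpow_le_rpow hlx.le hlog_le hr
    have hsr : (0:ℝ) < Real.log s ^ r := Real.rpow_pos_of_pos hlx r
    have hxp : (0:ℝ) < x ^ (p + 1) := Real.rpow_pos_of_pos hx0 _
    rw [Real.rpow_neg hlx.le, Real.rpow_neg hx0.le, ← mul_inv, one_div]
    apply inv_anti₀ (by positivity)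
    calc Real.log s ^ r * x ^ (p + 1) ≤ Real.log x ^ r * x ^ (p + 1) :=
          mul_le_mul_of_nonneg_right h1 hxp.le
      _ = x ^ (p + 1) * Real.log x ^ r := mul_comm _ _
  refine hle.trans (le_of_eq ?_)
  rw [MeasureTheory.integral_const_mul, integral_Ioi_rpow_of_lt (by linarith) hs0,
    show -(p+1)+1 = -p by ring, neg_div, div_neg, neg_neg]
  ring

lemma tail_lower {p r s : ℝ} (hp : 1 < p) (hr : 0 ≤ r) (hs : Real.exp 1 ≤ s) :
    (2:ℝ) ^ (-(p + 1) - r) * (s ^ (-p) * Real.log s ^ (-r))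
      ≤ ∫ x in Set.Ioi s, 1 / (x ^ (p + 1) * Real.log x ^ r) := by
  have hs1 : (1:ℝ) < s := lt_of_lt_of_le (by simpa using Real.exp_lt_exp.2 one_pos) hs
  have hs0 : (0:ℝ) < s := by linarith
  have hls : (1:ℝ) ≤ Real.log s := by
    rw [show (1:ℝ) = Real.log (Real.exp 1) by rw [Real.log_exp]]
    exact Real.log_le_log (Real.exp_pos 1) hs
  have hls0 : (0:ℝ) < Real.log s := by linarith
  have h2 : (0:ℝ) < 2 := two_pos
  set c0 : ℝ := ((2*s) ^ (p+1) * (2 * Real.log s) ^ r)⁻¹ with hc0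
  have hc0pos : 0 < c0 := by
    rw [hc0]
    have := Real.rpow_pos_of_pos (by linarith : (0:ℝ) < 2*s) (p+1)
    have := Real.rpow_pos_of_pos (by linarith : (0:ℝ) < 2*Real.log s) r
    positivity
  have step1 : ∫ x in Set.Ioc s (2*s), c0
      ≤ ∫ x in Set.Ioc s (2*s), 1 / (x ^ (p + 1) * Real.log x ^ r) := by
    apply setIntegral_mono_on (integrableOn_const measure_Ioc_lt_top.ne)
      ((tail_integrable hp hr hs).mono_set Set.Ioc_subset_Ioi_self) measurableSet_Ioc
    intro x hx
    have hx0 : (0:ℝ) < x := lt_trans hs0 hx.1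
    have hx1 : (1:ℝ) < x := lt_trans hs1 hx.1
    have hlogx : Real.log x ≤ 2 * Real.log s := by
      have h1 : Real.log x ≤ Real.log (2*s) := Real.log_le_log hx0 hx.2
      have h2' : Real.log (2*s) = Real.log 2 + Real.log s := Real.log_mul (by norm_num) hs0.ne'
      have h3 : Real.log 2 < 1 := by
        have := Real.log_two_lt_d9; linarith
      linarith
    have hA : x ^ (p+1) ≤ (2*s) ^ (p+1) := Real.rpow_le_rpow hx0.le hx.2 (by linarith)
    have hB : Real.log x ^ r ≤ (2 * Real.log s) ^ r :=
      Real.rpow_le_rpow (Real.log_nonneg hx1.le) hlogx hr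
    have hxp : (0:ℝ) < x ^ (p+1) := Real.rpow_pos_of_pos hx0 _
    have hlr : (0:ℝ) < Real.log x ^ r := Real.rpow_pos_of_pos (Real.log_pos hx1) _
    rw [hc0, one_div]
    apply inv_anti₀ (by positivity)
    exact mul_le_mul hA hB hlr.le (by positivity)
  have step2 : ∫ x in Set.Ioc s (2*s), 1 / (x ^ (p + 1) * Real.log x ^ r)
      ≤ ∫ x in Set.Ioi s, 1 / (x ^ (p + 1) * Real.log x ^ r) := by
    apply setIntegral_mono_set (tail_integrable hp hr hs)
    · filter_upwards [ae_restrict_mem measurableSet_Ioi] with x hx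
      have hx0 : (0:ℝ) < x := lt_trans hs0 hx
      have hlx : (0:ℝ) < Real.log x := Real.log_pos (lt_trans hs1 hx)
      positivity
    · exact HasSubset.Subset.eventuallyLE Set.Ioc_subset_Ioi_self
  have step3 : ∫ x in Set.Ioc s (2*s), c0 = c0 * s := by
    rw [setIntegral_const, measureReal_def, Real.volume_Ioc, ENNReal.toReal_ofReal (by linarith), smul_eq_mul]
    ring_nf
  have step4 : c0 * s = (2:ℝ) ^ (-(p + 1) - r) * (s ^ (-p) * Real.log s ^ (-r)) := by
    rw [hc0, show -(p+1)-r = (-(p+1)) + (-r) by ring, Real.rpow_add h2,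
      show (-p:ℝ) = -(p+1)+1 by ring, Real.rpow_add hs0, Real.rpow_one,
      Real.rpow_neg h2.le, Real.rpow_neg h2.le, Real.rpow_neg hs0.le, Real.rpow_neg hls0.le,
      Real.mul_rpow h2.le hs0.le, Real.mul_rpow h2.le hls0.le, mul_inv]
    ring
  calc (2:ℝ) ^ (-(p + 1) - r) * (s ^ (-p) * Real.log s ^ (-r)) = c0 * s := step4.symm
    _ = ∫ x in Set.Ioc s (2*s), c0 := step3.symm
    _ ≤ ∫ x in Set.Ioc s (2*s), 1 / (x ^ (p + 1) * Real.log x ^ r) := step1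
    _ ≤ _ := step2

lemma aux_alg {p q r K t : ℝ} (hp : 0 < p) (hq : 0 < q) (hr : 0 ≤ r) (hK : 0 ≤ K)
    (ht : Real.exp q ≤ t) :
    (K * ((t ^ q⁻¹) ^ (-p) * Real.log (t ^ q⁻¹) ^ (-r))) ^ (q / p)
      = (K ^ (q / p) * q ^ (r * (q / p))) * (Real.log t ^ (-(r * (q / p))) * t⁻¹) := by
  have ht0 : (0:ℝ) < t := lt_of_lt_of_le (Real.exp_pos q) ht
  have hlt : q ≤ Real.log t := (Real.le_log_iff_exp_le ht0).2 ht
  have hlog0 : (0:ℝ) < Real.log t := lt_of_lt_of_le hq hlt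
  have hs0 : (0:ℝ) < t ^ q⁻¹ := Real.rpow_pos_of_pos ht0 _
  have hA : (0:ℝ) ≤ (t ^ q⁻¹) ^ (-p) := (Real.rpow_pos_of_pos hs0 _).le
  rw [Real.log_rpow ht0]
  have hB : (0:ℝ) ≤ (q⁻¹ * Real.log t) ^ (-r) :=
    (Real.rpow_pos_of_pos (by positivity) _).le
  rw [Real.mul_rpow hK (mul_nonneg hA hB), Real.mul_rpow hA hB]
  have e1 : ((t ^ q⁻¹) ^ (-p)) ^ (q / p) = t⁻¹ := by
    rw [← Real.rpow_mul hs0.le, show (-p)*(q/p) = -q by field_simp,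
      ← Real.rpow_mul ht0.le, show q⁻¹ * (-q) = -1 by field_simp, Real.rpow_neg_one]
  have e2 : ((q⁻¹ * Real.log t) ^ (-r)) ^ (q / p)
      = q ^ (r * (q / p)) * Real.log t ^ (-(r * (q / p))) := by
    rw [← Real.rpow_mul (by positivity : (0:ℝ) ≤ q⁻¹ * Real.log t),
      show (-r)*(q/p) = -(r*(q/p)) by ring,
      Real.mul_rpow (inv_nonneg.2 hq.le) hlog0.le,
      Real.inv_rpow hq.le, Real.rpow_neg hq.le, inv_inv]
  rw [e1, e2]
  ring

theorem stmt_17 {Ω : Type*} [MeasurableSpace Ω] (μ : Measure Ω) [IsProbabilityMeasure μ]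
    (X : Ω → ℝ) (hXmeas : Measurable X)
    (hsymm : IdentDistrib X (fun ω => -X ω) μ μ)
    (p r : ℝ) (hr : 1 < r) (hrp : r < p) (hp : p < 2)
    (htail : ∀ t : ℝ, Real.exp 1 ≤ t →
      (μ {ω | t < |X ω|}).toReal
        = ∫ x in Set.Ioi t, 1 / (x ^ (p + 1) * Real.log x ^ r)) :
    ∀ q : ℝ, 1 ≤ q → q < p →
      ((p / r < q →
          ∫⁻ t in Set.Ioi (0 : ℝ), (μ {ω | t < |X ω| ^ q}) ^ (q / p) < ⊤)
        ∧ (q ≤ p / r →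
          ∫⁻ t in Set.Ioi (0 : ℝ), (μ {ω | t < |X ω| ^ q}) ^ (q / p) = ⊤)) := by
  intro q hq1 hqp
  have hq0 : (0:ℝ) < q := by linarith
  have hp1 : (1:ℝ) < p := by linarith
  have hp0 : (0:ℝ) < p := by linarith
  have hr0 : (0:ℝ) ≤ r := by linarith
  have hqp' : (0:ℝ) ≤ q / p := by positivity
  set E : ℝ := Real.exp q with hE
  have hE1 : Real.exp 1 ≤ E := Real.exp_le_exp.2 hq1
  have hE0 : (0:ℝ) < E := Real.exp_pos q
  have hse : ∀ t : ℝ, E ≤ t → Real.exp 1 ≤ t ^ q⁻¹ := by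
    intro t ht
    have h1 : Real.exp 1 = E ^ q⁻¹ := by
      rw [hE, ← Real.exp_mul]; congr 1; field_simp
    rw [h1]
    exact Real.rpow_le_rpow hE0.le ht (by positivity)
  have hmu : ∀ t : ℝ, E ≤ t → μ {ω | t < |X ω| ^ q}
      = ENNReal.ofReal (∫ x in Set.Ioi (t ^ q⁻¹), 1 / (x ^ (p + 1) * Real.log x ^ r)) := by
    intro t ht
    have ht0 : (0:ℝ) < t := lt_of_lt_of_le hE0 ht
    have hset : {ω | t < |X ω| ^ q} = {ω | t ^ q⁻¹ < |X ω|} := by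
      ext ω
      exact (Real.rpow_inv_lt_iff_of_pos ht0.le (abs_nonneg _) hq0).symm
    rw [hset, ← htail _ (hse t ht), ENNReal.ofReal_toReal (measure_ne_top μ _)]
  constructor
  · -- finite case
    intro hpa
    have ha1 : 1 < r * (q / p) := by
      rw [show r * (q/p) = r*q/p by ring, lt_div_iff₀ hp0, one_mul]
      rw [div_lt_iff₀ (by linarith : (0:ℝ) < r)] at hpa
      nlinarith
    set C : ℝ := (1/p) ^ (q/p) * q ^ (r * (q/p)) with hC
    have hmeasC : Measurable fun t : ℝ =>
        ENNReal.ofReal (C * (Real.log t ^ (-(r * (q / p))) * t⁻¹)) := by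
      have := Real.measurable_log; fun_prop
    rw [← Set.Ioc_union_Ioi_eq_Ioi hE0.le,
      lintegral_union measurableSet_Ioi (Set.Ioc_disjoint_Ioi le_rfl)]
    refine ENNReal.add_lt_top.2 ⟨?_, ?_⟩
    · calc ∫⁻ t in Set.Ioc 0 E, (μ {ω | t < |X ω| ^ q}) ^ (q / p)
          ≤ ∫⁻ _ in Set.Ioc 0 E, 1 :=
            lintegral_mono fun t => ENNReal.rpow_le_one prob_le_one hqp'
        _ = volume (Set.Ioc 0 E) := setLIntegral_one _
        _ < ⊤ := measure_Ioc_lt_top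
    · have hbound : ∀ t ∈ Set.Ioi E, (μ {ω | t < |X ω| ^ q}) ^ (q / p)
          ≤ ENNReal.ofReal (C * (Real.log t ^ (-(r * (q / p))) * t⁻¹)) := by
        intro t ht
        rw [hmu t ht.le,
          ENNReal.ofReal_rpow_of_nonneg (tail_nonneg (hse t ht.le)) hqp']
        apply ENNReal.ofReal_le_ofReal
        calc (∫ x in Set.Ioi (t ^ q⁻¹), 1 / (x ^ (p + 1) * Real.log x ^ r)) ^ (q / p)
            ≤ ((1/p) * ((t ^ q⁻¹) ^ (-p) * Real.log (t ^ q⁻¹) ^ (-r))) ^ (q / p) :=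
              Real.rpow_le_rpow (tail_nonneg (hse t ht.le))
                (tail_upper hp1 hr0 (hse t ht.le)) hqp'
          _ = C * (Real.log t ^ (-(r * (q / p))) * t⁻¹) :=
              aux_alg hp0 hq0 hr0 (by positivity) ht.le
      calc ∫⁻ t in Set.Ioi E, (μ {ω | t < |X ω| ^ q}) ^ (q / p)
          ≤ ∫⁻ t in Set.Ioi E,
              ENNReal.ofReal (C * (Real.log t ^ (-(r * (q / p))) * t⁻¹)) :=
            setLIntegral_mono hmeasC hbound
        _ < ⊤ := Integrable.lintegral_lt_top ((aux_int ha1 hE1).const_mul C)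
  · -- infinite case
    intro hpa
    have ha1 : r * (q / p) ≤ 1 := by
      rw [show r * (q/p) = r*q/p by ring, div_le_one hp0]
      rw [le_div_iff₀ (by linarith : (0:ℝ) < r)] at hpa
      nlinarith
    set K : ℝ := (2:ℝ) ^ (-(p + 1) - r) with hK
    have hKpos : 0 < K := Real.rpow_pos_of_pos two_pos _
    set c : ℝ := K ^ (q/p) * q ^ (r * (q/p)) with hc
    have hcpos : 0 < c := by
      have := Real.rpow_pos_of_pos hKpos (q/p)
      have := Real.rpow_pos_of_pos hq0 (r * (q/p))
      positivity
    have hfmeas : Measurable fun t : ℝ => (μ {ω | t < |X ω| ^ q}) ^ (q / p) := by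
      have hant : Antitone fun t : ℝ => μ {ω | t < |X ω| ^ q} := by
        intro t t' h
        exact measure_mono fun ω hω => lt_of_le_of_lt h hω
      exact Antitone.measurable fun t t' h => ENNReal.rpow_le_rpow (hant h) hqp'
    have hpoint : ∀ t ∈ Set.Ioi E,
        ENNReal.ofReal (c * (Real.log t ^ (-(r * (q / p))) * t⁻¹))
          ≤ (μ {ω | t < |X ω| ^ q}) ^ (q / p) := by
      intro t ht
      rw [hmu t ht.le,
        ENNReal.ofReal_rpow_of_nonneg (tail_nonneg (hse t ht.le)) hqp']
      apply ENNReal.ofReal_le_ofReal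
      have hs0 : (0:ℝ) < t ^ q⁻¹ :=
        Real.rpow_pos_of_pos (lt_of_lt_of_le hE0 ht.le) _
      have hbase : (0:ℝ) ≤ K * ((t ^ q⁻¹) ^ (-p) * Real.log (t ^ q⁻¹) ^ (-r)) := by
        have h1 : (0:ℝ) ≤ (t ^ q⁻¹) ^ (-p) := (Real.rpow_pos_of_pos hs0 _).le
        have h2 : (0:ℝ) ≤ Real.log (t ^ q⁻¹) ^ (-r) := Real.rpow_nonneg
          (Real.log_nonneg (by
            have := hse t ht.le
            have h3 : (1:ℝ) ≤ Real.exp 1 := by linarith [Real.add_one_le_exp 1]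
            linarith)) _
        positivity
      calc c * (Real.log t ^ (-(r * (q / p))) * t⁻¹)
          = (K * ((t ^ q⁻¹) ^ (-p) * Real.log (t ^ q⁻¹) ^ (-r))) ^ (q / p) :=
            (aux_alg hp0 hq0 hr0 hKpos.le ht.le).symm
        _ ≤ (∫ x in Set.Ioi (t ^ q⁻¹), 1 / (x ^ (p + 1) * Real.log x ^ r)) ^ (q / p) :=
            Real.rpow_le_rpow hbase (tail_lower hp1 hr0 (hse t ht.le)) hqp'
    refine eq_top_iff.2 ?_
    calc (⊤:ℝ≥0∞) = ∫⁻ t in Set.Ioi E,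
          ENNReal.ofReal (c * (Real.log t ^ (-(r * (q / p))) * t⁻¹)) :=
          (aux_div ha1 hE1 hcpos).symm
      _ ≤ ∫⁻ t in Set.Ioi E, (μ {ω | t < |X ω| ^ q}) ^ (q / p) :=
          setLIntegral_mono hfmeas hpoint
      _ ≤ ∫⁻ t in Set.Ioi (0:ℝ), (μ {ω | t < |X ω| ^ q}) ^ (q / p) :=
          lintegral_mono_set (Set.Ioi_subset_Ioi hE0.le)
end
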